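/- arXiv:0910.2886 — 6 statements merged into one kernel-verified Lean document; each statement's English description precedes it below -/
import Mathlib

section
/- Assume f : [0,1]×ℝ²→ℝ is continuous and bounded and its first and second partial derivatives f_x, f_y, f_xx, f_xy, f_yy with respect to the second and third variables exist and are continuous and bounded. Then the map T : C₀ → C₀ is continuously Fréchet differentiable on C₀, and its Fréchet derivative at ω ∈ C₀ is the bounded linear operator DT(ω) : C₀ → C₀ given by DT(ω)[θ](t) = θ(t) + ∫₀ᵗ ( f_x(s, Y_s(ω), Y'_s(ω))·Y_s(θ) + f_y(s, Y_s(ω), Y'_s(ω))·Y'_s(θ) ) ds for θ ∈ C₀ and t ∈ [0,1]. -/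
open MeasureTheory

/-- Projection of `ℝ` onto `[0,1]`. -/
noncomputable def pr01 (s : ℝ) : Set.Icc (0:ℝ) 1 := Set.projIcc 0 1 zero_le_one s

/-- `Y_t(ω) = -t ∫₀¹ ω(s) ds + ∫₀ᵗ ω(s) ds` for a continuous map `ω` on `[0,1]`. -/
noncomputable def Yc (ω : C(Set.Icc (0:ℝ) 1, ℝ)) (t : ℝ) : ℝ :=
  -t * (∫ s in (0:ℝ)..1, ω (pr01 s)) + ∫ s in (0:ℝ)..t, ω (pr01 s)

/-- `Y'_t(ω) = -∫₀¹ ω(s) ds + ω(t)`. -/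
noncomputable def Yc' (ω : C(Set.Icc (0:ℝ) 1, ℝ)) (t : ℝ) : ℝ :=
  -(∫ s in (0:ℝ)..1, ω (pr01 s)) + ω (pr01 t)

/-- The Banach space `C₀` of continuous functions on `[0,1]` vanishing at `0`,
as a subspace of `C([0,1],ℝ)` with the supremum norm. -/
def C0 : Submodule ℝ C(Set.Icc (0:ℝ) 1, ℝ) where
  carrier := {ω | ω ⟨0, by norm_num⟩ = 0}
  add_mem' := by
    intro a b ha hb
    simp only [Set.mem_setOf_eq, ContinuousMap.add_apply] at *
    rw [ha, hb]; ring
  zero_mem' := by simp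
  smul_mem' := by
    intro c a ha
    simp only [Set.mem_setOf_eq, ContinuousMap.smul_apply, smul_eq_mul] at *
    rw [ha]; ring

/-- `g : [0,1]×ℝ²→ℝ` is continuous and bounded. -/
def ContBdd3 (g : ℝ → ℝ → ℝ → ℝ) : Prop :=
  ContinuousOn (fun p : ℝ × ℝ × ℝ => g p.1 p.2.1 p.2.2)
    (Set.Icc 0 1 ×ˢ (Set.univ : Set (ℝ × ℝ))) ∧
  ∃ C : ℝ, ∀ t ∈ Set.Icc (0:ℝ) 1, ∀ x y : ℝ, |g t x y| ≤ C

/-! ### Auxiliary lemmas -/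

section Aux

lemma cont_comp (ω : C(Set.Icc (0:ℝ) 1, ℝ)) : Continuous (fun s => ω (pr01 s)) :=
  ω.continuous.comp (continuous_projIcc (h := zero_le_one))

lemma ii_comp (ω : C(Set.Icc (0:ℝ) 1, ℝ)) (a b : ℝ) :
    IntervalIntegrable (fun s => ω (pr01 s)) volume a b :=
  (cont_comp ω).intervalIntegrable a b

lemma Yc_cont (ω : C(Set.Icc (0:ℝ) 1, ℝ)) : Continuous (Yc ω) := by
  unfold Yc
  exact ((continuous_neg.comp continuous_id).mul continuous_const).add
    (intervalIntegral.continuous_primitive (ii_comp ω) 0)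

lemma Yc'_cont (ω : C(Set.Icc (0:ℝ) 1, ℝ)) : Continuous (Yc' ω) := by
  unfold Yc'
  exact continuous_const.add (cont_comp ω)

lemma abs_int_le (ω : C(Set.Icc (0:ℝ) 1, ℝ)) {t : ℝ} (ht : t ∈ Set.Icc (0:ℝ) 1) :
    |∫ s in (0:ℝ)..t, ω (pr01 s)| ≤ ‖ω‖ := by
  have := intervalIntegral.norm_integral_le_of_norm_le_const
    (C := ‖ω‖) (a := 0) (b := t) (f := fun s => ω (pr01 s))
    (fun x _ => ω.norm_coe_le_norm (pr01 x))
  calc |∫ s in (0:ℝ)..t, ω (pr01 s)| ≤ ‖ω‖ * |t - 0| := this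
    _ ≤ ‖ω‖ * 1 := by
        apply mul_le_mul_of_nonneg_left _ (norm_nonneg ω)
        rw [sub_zero, abs_of_nonneg ht.1]; exact ht.2
    _ = ‖ω‖ := mul_one _

lemma Yc_bound (ω : C(Set.Icc (0:ℝ) 1, ℝ)) {t : ℝ} (ht : t ∈ Set.Icc (0:ℝ) 1) :
    |Yc ω t| ≤ 2 * ‖ω‖ := by
  unfold Yc
  have h1 : |(-t) * ∫ s in (0:ℝ)..1, ω (pr01 s)| ≤ ‖ω‖ := by
    rw [abs_mul, abs_neg]
    calc |t| * |∫ s in (0:ℝ)..1, ω (pr01 s)| ≤ 1 * ‖ω‖ := by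
          apply mul_le_mul
          · rw [abs_of_nonneg ht.1]; exact ht.2
          · exact abs_int_le ω (by norm_num)
          · positivity
          · norm_num
      _ = ‖ω‖ := one_mul _
  calc |(-t) * (∫ s in (0:ℝ)..1, ω (pr01 s)) + ∫ s in (0:ℝ)..t, ω (pr01 s)|
      ≤ |(-t) * ∫ s in (0:ℝ)..1, ω (pr01 s)| + |∫ s in (0:ℝ)..t, ω (pr01 s)| := abs_add_le _ _
    _ ≤ ‖ω‖ + ‖ω‖ := add_le_add h1 (abs_int_le ω ht)
    _ = 2 * ‖ω‖ := by ring

lemma Yc'_bound (ω : C(Set.Icc (0:ℝ) 1, ℝ)) (t : ℝ) :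
    |Yc' ω t| ≤ 2 * ‖ω‖ := by
  unfold Yc'
  calc |-(∫ s in (0:ℝ)..1, ω (pr01 s)) + ω (pr01 t)|
      ≤ |-(∫ s in (0:ℝ)..1, ω (pr01 s))| + |ω (pr01 t)| := abs_add_le _ _
    _ ≤ ‖ω‖ + ‖ω‖ := by
        refine add_le_add ?_ (ω.norm_coe_le_norm (pr01 t))
        rw [abs_neg]; exact abs_int_le ω (by norm_num)
    _ = 2 * ‖ω‖ := by ring

lemma Yc_add (ω θ : C(Set.Icc (0:ℝ) 1, ℝ)) (t : ℝ) :
    Yc (ω + θ) t = Yc ω t + Yc θ t := by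
  unfold Yc
  simp only [ContinuousMap.add_apply]
  rw [intervalIntegral.integral_add (ii_comp ω 0 1) (ii_comp θ 0 1),
    intervalIntegral.integral_add (ii_comp ω 0 t) (ii_comp θ 0 t)]
  ring

lemma Yc'_add (ω θ : C(Set.Icc (0:ℝ) 1, ℝ)) (t : ℝ) :
    Yc' (ω + θ) t = Yc' ω t + Yc' θ t := by
  unfold Yc'
  simp only [ContinuousMap.add_apply]
  rw [intervalIntegral.integral_add (ii_comp ω 0 1) (ii_comp θ 0 1)]
  ring

lemma Yc_smul (c : ℝ) (ω : C(Set.Icc (0:ℝ) 1, ℝ)) (t : ℝ) :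
    Yc (c • ω) t = c * Yc ω t := by
  unfold Yc
  simp only [ContinuousMap.smul_apply, smul_eq_mul]
  rw [intervalIntegral.integral_const_mul, intervalIntegral.integral_const_mul]
  ring

lemma Yc'_smul (c : ℝ) (ω : C(Set.Icc (0:ℝ) 1, ℝ)) (t : ℝ) :
    Yc' (c • ω) t = c * Yc' ω t := by
  unfold Yc'
  simp only [ContinuousMap.smul_apply, smul_eq_mul]
  rw [intervalIntegral.integral_const_mul]
  ring

lemma Yc_sub (ω θ : C(Set.Icc (0:ℝ) 1, ℝ)) (t : ℝ) :
    Yc (ω - θ) t = Yc ω t - Yc θ t := by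
  have h := Yc_add (ω - θ) θ t
  rw [sub_add_cancel] at h; linarith

lemma Yc'_sub (ω θ : C(Set.Icc (0:ℝ) 1, ℝ)) (t : ℝ) :
    Yc' (ω - θ) t = Yc' ω t - Yc' θ t := by
  have h := Yc'_add (ω - θ) θ t
  rw [sub_add_cancel] at h; linarith

/-- The clamp map. -/
noncomputable def c01 (s : ℝ) : ℝ := (pr01 s : ℝ)

lemma c01_mem (s : ℝ) : c01 s ∈ Set.Icc (0:ℝ) 1 := (pr01 s).2

lemma c01_eq {s : ℝ} (hs : s ∈ Set.Icc (0:ℝ) 1) : c01 s = s := by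
  simp [c01, pr01, Set.projIcc_of_mem zero_le_one hs]

lemma c01_cont : Continuous c01 :=
  continuous_subtype_val.comp (continuous_projIcc (h := zero_le_one))

/-- Clamped composition. -/
noncomputable def P (g : ℝ → ℝ → ℝ → ℝ) (ω : C(Set.Icc (0:ℝ) 1, ℝ)) (s : ℝ) : ℝ :=
  g (c01 s) (Yc ω (c01 s)) (Yc' ω (c01 s))

lemma P_eq (g : ℝ → ℝ → ℝ → ℝ) (ω : C(Set.Icc (0:ℝ) 1, ℝ)) {s : ℝ}
    (hs : s ∈ Set.Icc (0:ℝ) 1) : P g ω s = g s (Yc ω s) (Yc' ω s) := by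
  rw [P, c01_eq hs]

lemma P_cont {g : ℝ → ℝ → ℝ → ℝ}
    (hg : ContinuousOn (fun p : ℝ × ℝ × ℝ => g p.1 p.2.1 p.2.2)
      (Set.Icc 0 1 ×ˢ (Set.univ : Set (ℝ × ℝ)))) (ω : C(Set.Icc (0:ℝ) 1, ℝ)) :
    Continuous (P g ω) := by
  have hc : Continuous (fun s : ℝ => ((c01 s, (Yc ω (c01 s), Yc' ω (c01 s))) : ℝ × ℝ × ℝ)) :=
    c01_cont.prodMk (((Yc_cont ω).comp c01_cont).prodMk ((Yc'_cont ω).comp c01_cont))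
  exact hg.comp_continuous hc (fun s => Set.mem_prod.2 ⟨c01_mem s, Set.mem_univ _⟩)

lemma P_bound {g : ℝ → ℝ → ℝ → ℝ} {C : ℝ}
    (hC : ∀ t ∈ Set.Icc (0:ℝ) 1, ∀ x y : ℝ, |g t x y| ≤ C)
    (ω : C(Set.Icc (0:ℝ) 1, ℝ)) (s : ℝ) : |P g ω s| ≤ C :=
  hC _ (c01_mem s) _ _

/-- Second-order Taylor bound in one variable. -/
lemma second_order_est {g g' g'' : ℝ → ℝ} {C x a : ℝ}
    (hd : ∀ u, HasDerivAt g (g' u) u) (hd2 : ∀ u, HasDerivAt g' (g'' u) u)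
    (hB : ∀ u, |g'' u| ≤ C) :
    |g (x + a) - g x - g' x * a| ≤ C * a ^ 2 := by
  have hC : 0 ≤ C := le_trans (abs_nonneg _) (hB x)
  set h : ℝ → ℝ := fun u => g u - g' x * u with hh
  have hmem : ∀ u ∈ Set.uIcc x (x + a), |u - x| ≤ |a| := by
    intro u hu
    have := Real.dist_le_of_mem_uIcc hu (Set.left_mem_uIcc (a := x) (b := x + a))
    simpa [Real.dist_eq, abs_sub_comm] using this
  have key : ‖h (x + a) - h x‖ ≤ (C * |a|) * ‖(x + a) - x‖ := by
    apply Convex.norm_image_sub_le_of_norm_hasDerivWithin_le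
      (f' := fun u => g' u - g' x) (s := Set.uIcc x (x + a))
    · intro u _
      exact ((hd u).sub ((hasDerivAt_id u).const_mul (g' x))).hasDerivWithinAt.congr_deriv
        (by ring)
    · intro u hu
      have lip : ‖g' u - g' x‖ ≤ C * ‖u - x‖ :=
        Convex.norm_image_sub_le_of_norm_hasDerivWithin_le
          (f' := g'') (s := Set.univ)
          (fun v _ => (hd2 v).hasDerivWithinAt) (fun v _ => by simpa using hB v)
          convex_univ trivial trivial
      calc ‖g' u - g' x‖ ≤ C * ‖u - x‖ := lip
        _ ≤ C * |a| := by
            apply mul_le_mul_of_nonneg_left _ hC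
            simpa [Real.norm_eq_abs] using hmem u hu
    · exact convex_uIcc _ _
    · exact Set.left_mem_uIcc
    · exact Set.right_mem_uIcc
  have heq : h (x + a) - h x = g (x + a) - g x - g' x * a := by simp only [hh]; ring
  rw [heq] at key
  simpa [Real.norm_eq_abs, abs_mul, sq, mul_assoc] using key

/-- Lipschitz estimate from a bounded derivative. -/
lemma lip_est {g g' : ℝ → ℝ} {C x y : ℝ}
    (hd : ∀ u, HasDerivAt g (g' u) u) (hB : ∀ u, |g' u| ≤ C) :
    |g y - g x| ≤ C * |y - x| := by
  have := Convex.norm_image_sub_le_of_norm_hasDerivWithin_le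
    (f := g) (f' := g') (s := Set.univ) (x := x) (y := y)
    (fun v _ => (hd v).hasDerivWithinAt) (fun v _ => by simpa using hB v)
    convex_univ trivial trivial
  simpa [Real.norm_eq_abs] using this

/-- Two-variable second order Taylor estimate. -/
lemma taylor_est (f fx fy fxx fxy fyy : ℝ → ℝ → ℝ → ℝ) {Cxx Cxy Cyy : ℝ}
    {s : ℝ} (hs : s ∈ Set.Icc (0:ℝ) 1)
    (hdx : ∀ t x y : ℝ, HasDerivAt (fun z => f t z y) (fx t x y) x)
    (hdy : ∀ t x y : ℝ, HasDerivAt (fun z => f t x z) (fy t x y) y)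
    (hdxx : ∀ t x y : ℝ, HasDerivAt (fun z => fx t z y) (fxx t x y) x)
    (hdxy : ∀ t x y : ℝ, HasDerivAt (fun z => fx t x z) (fxy t x y) y)
    (hdyy : ∀ t x y : ℝ, HasDerivAt (fun z => fy t x z) (fyy t x y) y)
    (hBxx : ∀ t ∈ Set.Icc (0:ℝ) 1, ∀ x y : ℝ, |fxx t x y| ≤ Cxx)
    (hBxy : ∀ t ∈ Set.Icc (0:ℝ) 1, ∀ x y : ℝ, |fxy t x y| ≤ Cxy)
    (hByy : ∀ t ∈ Set.Icc (0:ℝ) 1, ∀ x y : ℝ, |fyy t x y| ≤ Cyy)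
    (x y a b : ℝ) :
    |f s (x + a) (y + b) - f s x y - fx s x y * a - fy s x y * b|
      ≤ Cxx * a ^ 2 + Cxy * (|b| * |a|) + Cyy * b ^ 2 := by
  have E1 : |f s (x + a) (y + b) - f s x (y + b) - fx s x (y + b) * a| ≤ Cxx * a ^ 2 :=
    second_order_est (fun u => hdx s u (y + b)) (fun u => hdxx s u (y + b))
      (fun u => hBxx s hs u (y + b))
  have E2 : |fx s x (y + b) - fx s x y| ≤ Cxy * |b| := by
    have := lip_est (fun v => hdxy s x v) (fun v => hBxy s hs x v) (x := y) (y := y + b)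
    simpa [add_sub_cancel_left] using this
  have E3 : |f s x (y + b) - f s x y - fy s x y * b| ≤ Cyy * b ^ 2 :=
    second_order_est (fun v => hdy s x v) (fun v => hdyy s x v) (fun v => hByy s hs x v)
  have key : f s (x + a) (y + b) - f s x y - fx s x y * a - fy s x y * b
      = (f s (x + a) (y + b) - f s x (y + b) - fx s x (y + b) * a)
        + (fx s x (y + b) - fx s x y) * a
        + (f s x (y + b) - f s x y - fy s x y * b) := by ring
  rw [key]
  calc |(f s (x + a) (y + b) - f s x (y + b) - fx s x (y + b) * a)
          + (fx s x (y + b) - fx s x y) * a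
          + (f s x (y + b) - f s x y - fy s x y * b)|
      ≤ |(f s (x + a) (y + b) - f s x (y + b) - fx s x (y + b) * a)
          + (fx s x (y + b) - fx s x y) * a|
        + |f s x (y + b) - f s x y - fy s x y * b| := abs_add_le _ _
    _ ≤ |f s (x + a) (y + b) - f s x (y + b) - fx s x (y + b) * a|
        + |(fx s x (y + b) - fx s x y) * a|
        + |f s x (y + b) - f s x y - fy s x y * b| := add_le_add_left (abs_add_le _ _) _
    _ ≤ Cxx * a ^ 2 + Cxy * (|b| * |a|) + Cyy * b ^ 2 := by
        refine add_le_add (add_le_add E1 ?_) E3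
        rw [abs_mul]
        calc |fx s x (y + b) - fx s x y| * |a| ≤ (Cxy * |b|) * |a| :=
              mul_le_mul_of_nonneg_right E2 (abs_nonneg a)
          _ = Cxy * (|b| * |a|) := by ring

lemma mem_Icc_of_uIoc {t : Set.Icc (0:ℝ) 1} {s : ℝ} (hs : s ∈ Set.uIoc (0:ℝ) (t:ℝ)) :
    s ∈ Set.Icc (0:ℝ) 1 := by
  rw [Set.uIoc_of_le t.2.1] at hs
  exact ⟨hs.1.le, hs.2.trans t.2.2⟩

lemma uIcc_subset_Icc (t : Set.Icc (0:ℝ) 1) : Set.uIcc (0:ℝ) (t:ℝ) ⊆ Set.Icc (0:ℝ) 1 := by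
  rw [Set.uIcc_of_le t.2.1]
  exact Set.Icc_subset_Icc le_rfl t.2.2

/-- The integrand of the candidate derivative, clamped. -/
noncomputable def Qc (fx fy : ℝ → ℝ → ℝ → ℝ) (ω θ : C(Set.Icc (0:ℝ) 1, ℝ)) (s : ℝ) : ℝ :=
  P fx ω s * Yc θ s + P fy ω s * Yc' θ s

lemma Qc_cont {fx fy : ℝ → ℝ → ℝ → ℝ}
    (hfx1 : ContinuousOn (fun p : ℝ × ℝ × ℝ => fx p.1 p.2.1 p.2.2)
      (Set.Icc 0 1 ×ˢ (Set.univ : Set (ℝ × ℝ))))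
    (hfy1 : ContinuousOn (fun p : ℝ × ℝ × ℝ => fy p.1 p.2.1 p.2.2)
      (Set.Icc 0 1 ×ˢ (Set.univ : Set (ℝ × ℝ))))
    (ω θ : C(Set.Icc (0:ℝ) 1, ℝ)) : Continuous (Qc fx fy ω θ) :=
  ((P_cont hfx1 ω).mul (Yc_cont θ)).add ((P_cont hfy1 ω).mul (Yc'_cont θ))

lemma Qc_add (fx fy : ℝ → ℝ → ℝ → ℝ) (ω θ₁ θ₂ : C(Set.Icc (0:ℝ) 1, ℝ)) (s : ℝ) :
    Qc fx fy ω (θ₁ + θ₂) s = Qc fx fy ω θ₁ s + Qc fx fy ω θ₂ s := by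
  unfold Qc
  rw [Yc_add, Yc'_add]; ring

lemma Qc_smul (fx fy : ℝ → ℝ → ℝ → ℝ) (c : ℝ) (ω θ : C(Set.Icc (0:ℝ) 1, ℝ)) (s : ℝ) :
    Qc fx fy ω (c • θ) s = c * Qc fx fy ω θ s := by
  unfold Qc
  rw [Yc_smul, Yc'_smul]; ring

lemma Qc_bound {fx fy : ℝ → ℝ → ℝ → ℝ} {Cx Cy : ℝ}
    (hCx : ∀ t ∈ Set.Icc (0:ℝ) 1, ∀ x y : ℝ, |fx t x y| ≤ Cx)
    (hCy : ∀ t ∈ Set.Icc (0:ℝ) 1, ∀ x y : ℝ, |fy t x y| ≤ Cy)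
    (ω θ : C(Set.Icc (0:ℝ) 1, ℝ)) {s : ℝ} (hs : s ∈ Set.Icc (0:ℝ) 1) :
    |Qc fx fy ω θ s| ≤ (2 * Cx + 2 * Cy) * ‖θ‖ := by
  have hCx0 : 0 ≤ Cx := le_trans (abs_nonneg _) (hCx 0 (by norm_num) 0 0)
  have hCy0 : 0 ≤ Cy := le_trans (abs_nonneg _) (hCy 0 (by norm_num) 0 0)
  calc |Qc fx fy ω θ s| ≤ |P fx ω s * Yc θ s| + |P fy ω s * Yc' θ s| := abs_add_le _ _
    _ = |P fx ω s| * |Yc θ s| + |P fy ω s| * |Yc' θ s| := by rw [abs_mul, abs_mul]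
    _ ≤ Cx * (2 * ‖θ‖) + Cy * (2 * ‖θ‖) :=
        add_le_add (mul_le_mul (P_bound hCx ω s) (Yc_bound θ hs) (abs_nonneg _) hCx0)
          (mul_le_mul (P_bound hCy ω s) (Yc'_bound θ s) (abs_nonneg _) hCy0)
    _ = (2 * Cx + 2 * Cy) * ‖θ‖ := by ring

/-- The candidate derivative at `ω` applied to `θ`, as a continuous map. -/
noncomputable def Dmap (fx fy : ℝ → ℝ → ℝ → ℝ)
    (hfx1 : ContinuousOn (fun p : ℝ × ℝ × ℝ => fx p.1 p.2.1 p.2.2)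
      (Set.Icc 0 1 ×ˢ (Set.univ : Set (ℝ × ℝ))))
    (hfy1 : ContinuousOn (fun p : ℝ × ℝ × ℝ => fy p.1 p.2.1 p.2.2)
      (Set.Icc 0 1 ×ˢ (Set.univ : Set (ℝ × ℝ))))
    (ω θ : C(Set.Icc (0:ℝ) 1, ℝ)) : C(Set.Icc (0:ℝ) 1, ℝ) :=
  ⟨fun t => θ t + ∫ s in (0:ℝ)..(t:ℝ), Qc fx fy ω θ s, by
    refine θ.continuous.add ?_
    exact (intervalIntegral.continuous_primitive
      (fun a b => (Qc_cont hfx1 hfy1 ω θ).intervalIntegrable a b) 0).comp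
      continuous_subtype_val⟩

lemma Dmap_memC0 (fx fy : ℝ → ℝ → ℝ → ℝ)
    (hfx1 : ContinuousOn (fun p : ℝ × ℝ × ℝ => fx p.1 p.2.1 p.2.2)
      (Set.Icc 0 1 ×ˢ (Set.univ : Set (ℝ × ℝ))))
    (hfy1 : ContinuousOn (fun p : ℝ × ℝ × ℝ => fy p.1 p.2.1 p.2.2)
      (Set.Icc 0 1 ×ˢ (Set.univ : Set (ℝ × ℝ))))
    (ω : C(Set.Icc (0:ℝ) 1, ℝ)) (θ : C0) :
    Dmap fx fy hfx1 hfy1 ω (θ : C(Set.Icc (0:ℝ) 1, ℝ)) ∈ C0 := by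
  have hθ0 : (θ : C(Set.Icc (0:ℝ) 1, ℝ)) ⟨0, by norm_num⟩ = 0 := θ.2
  show (Dmap fx fy hfx1 hfy1 ω (θ : C(Set.Icc (0:ℝ) 1, ℝ))) ⟨0, by norm_num⟩ = 0
  show (θ : C(Set.Icc (0:ℝ) 1, ℝ)) ⟨0, by norm_num⟩
    + (∫ s in (0:ℝ)..((0:ℝ)), Qc fx fy ω (θ : C(Set.Icc (0:ℝ) 1, ℝ)) s) = 0
  rw [hθ0, intervalIntegral.integral_same]; ring

lemma Dmap_norm {fx fy : ℝ → ℝ → ℝ → ℝ}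
    (hfx1 : ContinuousOn (fun p : ℝ × ℝ × ℝ => fx p.1 p.2.1 p.2.2)
      (Set.Icc 0 1 ×ˢ (Set.univ : Set (ℝ × ℝ))))
    (hfy1 : ContinuousOn (fun p : ℝ × ℝ × ℝ => fy p.1 p.2.1 p.2.2)
      (Set.Icc 0 1 ×ˢ (Set.univ : Set (ℝ × ℝ))))
    {Cx Cy : ℝ}
    (hCx : ∀ t ∈ Set.Icc (0:ℝ) 1, ∀ x y : ℝ, |fx t x y| ≤ Cx)
    (hCy : ∀ t ∈ Set.Icc (0:ℝ) 1, ∀ x y : ℝ, |fy t x y| ≤ Cy)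
    (ω θ : C(Set.Icc (0:ℝ) 1, ℝ)) :
    ‖Dmap fx fy hfx1 hfy1 ω θ‖ ≤ (1 + (2 * Cx + 2 * Cy)) * ‖θ‖ := by
  have hCx0 : 0 ≤ Cx := le_trans (abs_nonneg _) (hCx 0 (by norm_num) 0 0)
  have hCy0 : 0 ≤ Cy := le_trans (abs_nonneg _) (hCy 0 (by norm_num) 0 0)
  have hnn : 0 ≤ (1 + (2 * Cx + 2 * Cy)) * ‖θ‖ := by positivity
  rw [ContinuousMap.norm_le _ hnn]
  intro t
  show ‖θ t + ∫ s in (0:ℝ)..(t:ℝ), Qc fx fy ω θ s‖ ≤ (1 + (2 * Cx + 2 * Cy)) * ‖θ‖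
  have hint : ‖∫ s in (0:ℝ)..(t:ℝ), Qc fx fy ω θ s‖ ≤ (2 * Cx + 2 * Cy) * ‖θ‖ := by
    have h := intervalIntegral.norm_integral_le_of_norm_le_const
      (C := (2 * Cx + 2 * Cy) * ‖θ‖) (a := 0) (b := (t:ℝ)) (f := Qc fx fy ω θ)
      (fun s hs => by
        simpa [Real.norm_eq_abs] using Qc_bound hCx hCy ω θ (mem_Icc_of_uIoc hs))
    calc ‖∫ s in (0:ℝ)..(t:ℝ), Qc fx fy ω θ s‖
        ≤ (2 * Cx + 2 * Cy) * ‖θ‖ * |(t:ℝ) - 0| := h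
      _ ≤ (2 * Cx + 2 * Cy) * ‖θ‖ * 1 := by
          refine mul_le_mul_of_nonneg_left ?_ (by positivity)
          rw [sub_zero, abs_of_nonneg t.2.1]; exact t.2.2
      _ = (2 * Cx + 2 * Cy) * ‖θ‖ := mul_one _
  calc ‖θ t + ∫ s in (0:ℝ)..(t:ℝ), Qc fx fy ω θ s‖
      ≤ ‖θ t‖ + ‖∫ s in (0:ℝ)..(t:ℝ), Qc fx fy ω θ s‖ := norm_add_le _ _
    _ ≤ ‖θ‖ + (2 * Cx + 2 * Cy) * ‖θ‖ := add_le_add (θ.norm_coe_le_norm t) hint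
    _ = (1 + (2 * Cx + 2 * Cy)) * ‖θ‖ := by ring

/-- The candidate derivative as a continuous linear map. -/
noncomputable def DD (fx fy : ℝ → ℝ → ℝ → ℝ)
    (hfx1 : ContinuousOn (fun p : ℝ × ℝ × ℝ => fx p.1 p.2.1 p.2.2)
      (Set.Icc 0 1 ×ˢ (Set.univ : Set (ℝ × ℝ))))
    (hfy1 : ContinuousOn (fun p : ℝ × ℝ × ℝ => fy p.1 p.2.1 p.2.2)
      (Set.Icc 0 1 ×ˢ (Set.univ : Set (ℝ × ℝ))))
    {Cx Cy : ℝ}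
    (hCx : ∀ t ∈ Set.Icc (0:ℝ) 1, ∀ x y : ℝ, |fx t x y| ≤ Cx)
    (hCy : ∀ t ∈ Set.Icc (0:ℝ) 1, ∀ x y : ℝ, |fy t x y| ≤ Cy)
    (ω : C0) : C0 →L[ℝ] C0 :=
  LinearMap.mkContinuous
    { toFun := fun θ => ⟨Dmap fx fy hfx1 hfy1 (ω : C(Set.Icc (0:ℝ) 1, ℝ))
          (θ : C(Set.Icc (0:ℝ) 1, ℝ)), Dmap_memC0 fx fy hfx1 hfy1 _ θ⟩
      map_add' := by
        intro θ₁ θ₂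
        apply Subtype.ext
        apply ContinuousMap.ext
        intro t
        show ((θ₁ + θ₂ : C0) : C(Set.Icc (0:ℝ) 1, ℝ)) t
            + (∫ s in (0:ℝ)..(t:ℝ), Qc fx fy (ω : C(Set.Icc (0:ℝ) 1, ℝ))
                ((θ₁ + θ₂ : C0) : C(Set.Icc (0:ℝ) 1, ℝ)) s)
          = ((θ₁ : C(Set.Icc (0:ℝ) 1, ℝ)) t
              + ∫ s in (0:ℝ)..(t:ℝ), Qc fx fy (ω : C(Set.Icc (0:ℝ) 1, ℝ))
                  (θ₁ : C(Set.Icc (0:ℝ) 1, ℝ)) s)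
            + ((θ₂ : C(Set.Icc (0:ℝ) 1, ℝ)) t
              + ∫ s in (0:ℝ)..(t:ℝ), Qc fx fy (ω : C(Set.Icc (0:ℝ) 1, ℝ))
                  (θ₂ : C(Set.Icc (0:ℝ) 1, ℝ)) s)
        have hcoe : ((θ₁ + θ₂ : C0) : C(Set.Icc (0:ℝ) 1, ℝ))
            = (θ₁ : C(Set.Icc (0:ℝ) 1, ℝ)) + (θ₂ : C(Set.Icc (0:ℝ) 1, ℝ)) := rfl
        rw [hcoe]
        have hfun : (fun s => Qc fx fy (ω : C(Set.Icc (0:ℝ) 1, ℝ))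
            ((θ₁ : C(Set.Icc (0:ℝ) 1, ℝ)) + (θ₂ : C(Set.Icc (0:ℝ) 1, ℝ))) s)
            = fun s => Qc fx fy (ω : C(Set.Icc (0:ℝ) 1, ℝ)) (θ₁ : C(Set.Icc (0:ℝ) 1, ℝ)) s
              + Qc fx fy (ω : C(Set.Icc (0:ℝ) 1, ℝ)) (θ₂ : C(Set.Icc (0:ℝ) 1, ℝ)) s :=
          funext (Qc_add fx fy _ _ _)
        rw [hfun, intervalIntegral.integral_add
          ((Qc_cont hfx1 hfy1 _ _).intervalIntegrable _ _)
          ((Qc_cont hfx1 hfy1 _ _).intervalIntegrable _ _)]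
        show ((θ₁ : C(Set.Icc (0:ℝ) 1, ℝ)) t + (θ₂ : C(Set.Icc (0:ℝ) 1, ℝ)) t) + _ = _
        ring
      map_smul' := by
        intro c θ
        apply Subtype.ext
        apply ContinuousMap.ext
        intro t
        show ((c • θ : C0) : C(Set.Icc (0:ℝ) 1, ℝ)) t
            + (∫ s in (0:ℝ)..(t:ℝ), Qc fx fy (ω : C(Set.Icc (0:ℝ) 1, ℝ))
                ((c • θ : C0) : C(Set.Icc (0:ℝ) 1, ℝ)) s)
          = c • ((θ : C(Set.Icc (0:ℝ) 1, ℝ)) t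
              + ∫ s in (0:ℝ)..(t:ℝ), Qc fx fy (ω : C(Set.Icc (0:ℝ) 1, ℝ))
                  (θ : C(Set.Icc (0:ℝ) 1, ℝ)) s)
        have hcoe : ((c • θ : C0) : C(Set.Icc (0:ℝ) 1, ℝ))
            = c • (θ : C(Set.Icc (0:ℝ) 1, ℝ)) := rfl
        rw [hcoe]
        have hfun : (fun s => Qc fx fy (ω : C(Set.Icc (0:ℝ) 1, ℝ))
            (c • (θ : C(Set.Icc (0:ℝ) 1, ℝ))) s)
            = fun s => c * Qc fx fy (ω : C(Set.Icc (0:ℝ) 1, ℝ))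
                (θ : C(Set.Icc (0:ℝ) 1, ℝ)) s :=
          funext (Qc_smul fx fy c _ _)
        rw [hfun, intervalIntegral.integral_const_mul]
        show c • (θ : C(Set.Icc (0:ℝ) 1, ℝ)) t + _ = _
        simp only [smul_eq_mul]
        ring }
    (1 + (2 * Cx + 2 * Cy))
    (fun θ => Dmap_norm hfx1 hfy1 hCx hCy _ _)

lemma DD_apply (fx fy : ℝ → ℝ → ℝ → ℝ)
    (hfx1 : ContinuousOn (fun p : ℝ × ℝ × ℝ => fx p.1 p.2.1 p.2.2)
      (Set.Icc 0 1 ×ˢ (Set.univ : Set (ℝ × ℝ))))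
    (hfy1 : ContinuousOn (fun p : ℝ × ℝ × ℝ => fy p.1 p.2.1 p.2.2)
      (Set.Icc 0 1 ×ˢ (Set.univ : Set (ℝ × ℝ))))
    {Cx Cy : ℝ}
    (hCx : ∀ t ∈ Set.Icc (0:ℝ) 1, ∀ x y : ℝ, |fx t x y| ≤ Cx)
    (hCy : ∀ t ∈ Set.Icc (0:ℝ) 1, ∀ x y : ℝ, |fy t x y| ≤ Cy)
    (ω θ : C0) (t : Set.Icc (0:ℝ) 1) :
    (DD fx fy hfx1 hfy1 hCx hCy ω θ : C(Set.Icc (0:ℝ) 1, ℝ)) t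
      = (θ : C(Set.Icc (0:ℝ) 1, ℝ)) t
        + ∫ s in (0:ℝ)..(t:ℝ), Qc fx fy (ω : C(Set.Icc (0:ℝ) 1, ℝ))
            (θ : C(Set.Icc (0:ℝ) 1, ℝ)) s := rfl

set_option maxHeartbeats 1000000 in
lemma DD_formula (fx fy : ℝ → ℝ → ℝ → ℝ)
    (hfx1 : ContinuousOn (fun p : ℝ × ℝ × ℝ => fx p.1 p.2.1 p.2.2)
      (Set.Icc 0 1 ×ˢ (Set.univ : Set (ℝ × ℝ))))
    (hfy1 : ContinuousOn (fun p : ℝ × ℝ × ℝ => fy p.1 p.2.1 p.2.2)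
      (Set.Icc 0 1 ×ˢ (Set.univ : Set (ℝ × ℝ))))
    {Cx Cy : ℝ}
    (hCx : ∀ t ∈ Set.Icc (0:ℝ) 1, ∀ x y : ℝ, |fx t x y| ≤ Cx)
    (hCy : ∀ t ∈ Set.Icc (0:ℝ) 1, ∀ x y : ℝ, |fy t x y| ≤ Cy) :
    ∀ (ω θ : C0) (t : Set.Icc (0:ℝ) 1),
    (DD fx fy hfx1 hfy1 hCx hCy ω θ : C(Set.Icc (0:ℝ) 1, ℝ)) t
      = (θ : C(Set.Icc (0:ℝ) 1, ℝ)) t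
        + ∫ s in (0:ℝ)..(t:ℝ),
            (fx s (Yc (ω : C(Set.Icc (0:ℝ) 1, ℝ)) s) (Yc' (ω : C(Set.Icc (0:ℝ) 1, ℝ)) s)
              * Yc (θ : C(Set.Icc (0:ℝ) 1, ℝ)) s
            + fy s (Yc (ω : C(Set.Icc (0:ℝ) 1, ℝ)) s) (Yc' (ω : C(Set.Icc (0:ℝ) 1, ℝ)) s)
              * Yc' (θ : C(Set.Icc (0:ℝ) 1, ℝ)) s) := by
  intro ω θ t
  rw [DD_apply fx fy hfx1 hfy1 hCx hCy ω θ t]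
  congr 1
  apply intervalIntegral.integral_congr
  intro s hs
  have hs' : s ∈ Set.Icc (0:ℝ) 1 := uIcc_subset_Icc t hs
  unfold Qc
  rw [P_eq _ _ hs', P_eq _ _ hs']

set_option maxHeartbeats 1000000 in
lemma key_est (f fx fy fxx fxy fyy : ℝ → ℝ → ℝ → ℝ)
    (hf1 : ContinuousOn (fun p : ℝ × ℝ × ℝ => f p.1 p.2.1 p.2.2)
      (Set.Icc 0 1 ×ˢ (Set.univ : Set (ℝ × ℝ))))
    (hfx1 : ContinuousOn (fun p : ℝ × ℝ × ℝ => fx p.1 p.2.1 p.2.2)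
      (Set.Icc 0 1 ×ˢ (Set.univ : Set (ℝ × ℝ))))
    (hfy1 : ContinuousOn (fun p : ℝ × ℝ × ℝ => fy p.1 p.2.1 p.2.2)
      (Set.Icc 0 1 ×ˢ (Set.univ : Set (ℝ × ℝ))))
    {Cx Cy : ℝ}
    (hCx : ∀ t ∈ Set.Icc (0:ℝ) 1, ∀ x y : ℝ, |fx t x y| ≤ Cx)
    (hCy : ∀ t ∈ Set.Icc (0:ℝ) 1, ∀ x y : ℝ, |fy t x y| ≤ Cy)
    {Cxx Cxy Cyy : ℝ}
    (hCxx : ∀ t ∈ Set.Icc (0:ℝ) 1, ∀ x y : ℝ, |fxx t x y| ≤ Cxx)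
    (hCxy : ∀ t ∈ Set.Icc (0:ℝ) 1, ∀ x y : ℝ, |fxy t x y| ≤ Cxy)
    (hCyy : ∀ t ∈ Set.Icc (0:ℝ) 1, ∀ x y : ℝ, |fyy t x y| ≤ Cyy)
    (hdx : ∀ t x y : ℝ, HasDerivAt (fun z => f t z y) (fx t x y) x)
    (hdy : ∀ t x y : ℝ, HasDerivAt (fun z => f t x z) (fy t x y) y)
    (hdxx : ∀ t x y : ℝ, HasDerivAt (fun z => fx t z y) (fxx t x y) x)
    (hdxy : ∀ t x y : ℝ, HasDerivAt (fun z => fx t x z) (fxy t x y) y)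
    (hdyy : ∀ t x y : ℝ, HasDerivAt (fun z => fy t x z) (fyy t x y) y)
    (T : C0 → C0)
    (hT : ∀ ω : C0, ∀ t : Set.Icc (0:ℝ) 1,
      (T ω : C(Set.Icc (0:ℝ) 1, ℝ)) t
        = (ω : C(Set.Icc (0:ℝ) 1, ℝ)) t
          + ∫ s in (0:ℝ)..(t:ℝ),
              f s (Yc (ω : C(Set.Icc (0:ℝ) 1, ℝ)) s)
                (Yc' (ω : C(Set.Icc (0:ℝ) 1, ℝ)) s)) :
    ∀ (ω θ : C0),
    ‖T (ω + θ) - T ω - DD fx fy hfx1 hfy1 hCx hCy ω θ‖ ≤ 4 * (Cxx + Cxy + Cyy) * ‖θ‖ ^ 2 := by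
  intro ω θ
  have hCxx0 : 0 ≤ Cxx := le_trans (abs_nonneg _) (hCxx 0 (by norm_num) 0 0)
  have hCxy0 : 0 ≤ Cxy := le_trans (abs_nonneg _) (hCxy 0 (by norm_num) 0 0)
  have hCyy0 : 0 ≤ Cyy := le_trans (abs_nonneg _) (hCyy 0 (by norm_num) 0 0)
  have hnn : 0 ≤ 4 * (Cxx + Cxy + Cyy) * ‖θ‖ ^ 2 := by positivity
  have hgoal : ‖((T (ω + θ) - T ω - DD fx fy hfx1 hfy1 hCx hCy ω θ : C0) : C(Set.Icc (0:ℝ) 1, ℝ))‖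
      ≤ 4 * (Cxx + Cxy + Cyy) * ‖θ‖ ^ 2 := by
    rw [ContinuousMap.norm_le _ hnn]
    intro t
    have hval : ((T (ω + θ) - T ω - DD fx fy hfx1 hfy1 hCx hCy ω θ : C0) : C(Set.Icc (0:ℝ) 1, ℝ)) t
        = (T (ω + θ) : C(Set.Icc (0:ℝ) 1, ℝ)) t - (T ω : C(Set.Icc (0:ℝ) 1, ℝ)) t
          - (DD fx fy hfx1 hfy1 hCx hCy ω θ : C(Set.Icc (0:ℝ) 1, ℝ)) t := rfl
    rw [hval, hT (ω + θ) t, hT ω t, DD_apply fx fy hfx1 hfy1 hCx hCy ω θ t]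
    have hcoeadd : ((ω + θ : C0) : C(Set.Icc (0:ℝ) 1, ℝ))
        = (ω : C(Set.Icc (0:ℝ) 1, ℝ)) + (θ : C(Set.Icc (0:ℝ) 1, ℝ)) := rfl
    rw [hcoeadd]
    have hc1 : (∫ s in (0:ℝ)..(t:ℝ),
          f s (Yc ((ω : C(Set.Icc (0:ℝ) 1, ℝ)) + (θ : C(Set.Icc (0:ℝ) 1, ℝ))) s)
            (Yc' ((ω : C(Set.Icc (0:ℝ) 1, ℝ)) + (θ : C(Set.Icc (0:ℝ) 1, ℝ))) s))
        = ∫ s in (0:ℝ)..(t:ℝ),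
            P f ((ω : C(Set.Icc (0:ℝ) 1, ℝ)) + (θ : C(Set.Icc (0:ℝ) 1, ℝ))) s := by
      apply intervalIntegral.integral_congr
      intro s hs
      exact (P_eq f _ (uIcc_subset_Icc t hs)).symm
    have hc2 : (∫ s in (0:ℝ)..(t:ℝ),
          f s (Yc (ω : C(Set.Icc (0:ℝ) 1, ℝ)) s) (Yc' (ω : C(Set.Icc (0:ℝ) 1, ℝ)) s))
        = ∫ s in (0:ℝ)..(t:ℝ), P f (ω : C(Set.Icc (0:ℝ) 1, ℝ)) s := by
      apply intervalIntegral.integral_congr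
      intro s hs
      exact (P_eq f _ (uIcc_subset_Icc t hs)).symm
    rw [hc1, hc2]
    rw [show ((ω : C(Set.Icc (0:ℝ) 1, ℝ)) + (θ : C(Set.Icc (0:ℝ) 1, ℝ))) t
        = (ω : C(Set.Icc (0:ℝ) 1, ℝ)) t + (θ : C(Set.Icc (0:ℝ) 1, ℝ)) t from rfl]
    have hii1 : IntervalIntegrable
        (P f ((ω : C(Set.Icc (0:ℝ) 1, ℝ)) + (θ : C(Set.Icc (0:ℝ) 1, ℝ))))
        volume 0 (t:ℝ) := (P_cont hf1 _).intervalIntegrable _ _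
    have hii2 : IntervalIntegrable (P f (ω : C(Set.Icc (0:ℝ) 1, ℝ))) volume 0 (t:ℝ) :=
      (P_cont hf1 _).intervalIntegrable _ _
    have hii3 : IntervalIntegrable
        (Qc fx fy (ω : C(Set.Icc (0:ℝ) 1, ℝ)) (θ : C(Set.Icc (0:ℝ) 1, ℝ)))
        volume 0 (t:ℝ) := (Qc_cont hfx1 hfy1 _ _).intervalIntegrable _ _
    have harith : (ω : C(Set.Icc (0:ℝ) 1, ℝ)) t + (θ : C(Set.Icc (0:ℝ) 1, ℝ)) t
          + (∫ s in (0:ℝ)..(t:ℝ),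
              P f ((ω : C(Set.Icc (0:ℝ) 1, ℝ)) + (θ : C(Set.Icc (0:ℝ) 1, ℝ))) s)
        - ((ω : C(Set.Icc (0:ℝ) 1, ℝ)) t
          + ∫ s in (0:ℝ)..(t:ℝ), P f (ω : C(Set.Icc (0:ℝ) 1, ℝ)) s)
        - ((θ : C(Set.Icc (0:ℝ) 1, ℝ)) t
          + ∫ s in (0:ℝ)..(t:ℝ), Qc fx fy (ω : C(Set.Icc (0:ℝ) 1, ℝ))
              (θ : C(Set.Icc (0:ℝ) 1, ℝ)) s)
        = ∫ s in (0:ℝ)..(t:ℝ),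
            (P f ((ω : C(Set.Icc (0:ℝ) 1, ℝ)) + (θ : C(Set.Icc (0:ℝ) 1, ℝ))) s
              - P f (ω : C(Set.Icc (0:ℝ) 1, ℝ)) s
              - Qc fx fy (ω : C(Set.Icc (0:ℝ) 1, ℝ)) (θ : C(Set.Icc (0:ℝ) 1, ℝ)) s) := by
      rw [intervalIntegral.integral_sub (hii1.sub hii2) hii3,
        intervalIntegral.integral_sub hii1 hii2]
      ring
    rw [harith]
    have hbd : ∀ s ∈ Set.uIoc (0:ℝ) (t:ℝ),
        ‖P f ((ω : C(Set.Icc (0:ℝ) 1, ℝ)) + (θ : C(Set.Icc (0:ℝ) 1, ℝ))) s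
          - P f (ω : C(Set.Icc (0:ℝ) 1, ℝ)) s
          - Qc fx fy (ω : C(Set.Icc (0:ℝ) 1, ℝ)) (θ : C(Set.Icc (0:ℝ) 1, ℝ)) s‖
        ≤ 4 * (Cxx + Cxy + Cyy) * ‖θ‖ ^ 2 := by
      intro s hs
      have hs' : s ∈ Set.Icc (0:ℝ) 1 := mem_Icc_of_uIoc hs
      rw [Real.norm_eq_abs, P_eq f _ hs', P_eq f _ hs']
      unfold Qc
      rw [P_eq fx _ hs', P_eq fy _ hs', Yc_add, Yc'_add]
      set x := Yc (ω : C(Set.Icc (0:ℝ) 1, ℝ)) s with hxdef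
      set y := Yc' (ω : C(Set.Icc (0:ℝ) 1, ℝ)) s with hydef
      set a := Yc (θ : C(Set.Icc (0:ℝ) 1, ℝ)) s with hadef
      set b := Yc' (θ : C(Set.Icc (0:ℝ) 1, ℝ)) s with hbdef
      have htay := taylor_est f fx fy fxx fxy fyy hs' hdx hdy hdxx hdxy hdyy
        hCxx hCxy hCyy x y a b
      have hshape : f s (x + a) (y + b) - f s x y - (fx s x y * a + fy s x y * b)
          = f s (x + a) (y + b) - f s x y - fx s x y * a - fy s x y * b := by ring
      rw [hshape]
      refine htay.trans ?_
      have ha : |a| ≤ 2 * ‖(θ : C(Set.Icc (0:ℝ) 1, ℝ))‖ := Yc_bound _ hs'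
      have hb : |b| ≤ 2 * ‖(θ : C(Set.Icc (0:ℝ) 1, ℝ))‖ := Yc'_bound _ s
      have hNθ : ‖θ‖ = ‖(θ : C(Set.Icc (0:ℝ) 1, ℝ))‖ := rfl
      rw [hNθ]
      set N := ‖(θ : C(Set.Icc (0:ℝ) 1, ℝ))‖ with hNdef
      have hN0 : 0 ≤ N := norm_nonneg _
      have ha2 : a ^ 2 ≤ 4 * N ^ 2 := by nlinarith [abs_nonneg a, sq_abs a]
      have hb2 : b ^ 2 ≤ 4 * N ^ 2 := by nlinarith [abs_nonneg b, sq_abs b]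
      have hab : |b| * |a| ≤ 4 * N ^ 2 := by nlinarith [abs_nonneg a, abs_nonneg b]
      nlinarith [mul_le_mul_of_nonneg_left ha2 hCxx0,
        mul_le_mul_of_nonneg_left hb2 hCyy0, mul_le_mul_of_nonneg_left hab hCxy0]
    have hni := intervalIntegral.norm_integral_le_of_norm_le_const hbd
    calc ‖∫ s in (0:ℝ)..(t:ℝ),
          (P f ((ω : C(Set.Icc (0:ℝ) 1, ℝ)) + (θ : C(Set.Icc (0:ℝ) 1, ℝ))) s
            - P f (ω : C(Set.Icc (0:ℝ) 1, ℝ)) s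
            - Qc fx fy (ω : C(Set.Icc (0:ℝ) 1, ℝ)) (θ : C(Set.Icc (0:ℝ) 1, ℝ)) s)‖
        ≤ 4 * (Cxx + Cxy + Cyy) * ‖θ‖ ^ 2 * |(t:ℝ) - 0| := hni
      _ ≤ 4 * (Cxx + Cxy + Cyy) * ‖θ‖ ^ 2 * 1 := by
          refine mul_le_mul_of_nonneg_left ?_ hnn
          rw [sub_zero, abs_of_nonneg t.2.1]; exact t.2.2
      _ = 4 * (Cxx + Cxy + Cyy) * ‖θ‖ ^ 2 := mul_one _
  exact hgoal

set_option maxHeartbeats 1000000 in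
lemma DD_hasFDeriv (f fx fy fxx fxy fyy : ℝ → ℝ → ℝ → ℝ)
    (hf1 : ContinuousOn (fun p : ℝ × ℝ × ℝ => f p.1 p.2.1 p.2.2)
      (Set.Icc 0 1 ×ˢ (Set.univ : Set (ℝ × ℝ))))
    (hfx1 : ContinuousOn (fun p : ℝ × ℝ × ℝ => fx p.1 p.2.1 p.2.2)
      (Set.Icc 0 1 ×ˢ (Set.univ : Set (ℝ × ℝ))))
    (hfy1 : ContinuousOn (fun p : ℝ × ℝ × ℝ => fy p.1 p.2.1 p.2.2)
      (Set.Icc 0 1 ×ˢ (Set.univ : Set (ℝ × ℝ))))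
    {Cx Cy : ℝ}
    (hCx : ∀ t ∈ Set.Icc (0:ℝ) 1, ∀ x y : ℝ, |fx t x y| ≤ Cx)
    (hCy : ∀ t ∈ Set.Icc (0:ℝ) 1, ∀ x y : ℝ, |fy t x y| ≤ Cy)
    {Cxx Cxy Cyy : ℝ}
    (hCxx : ∀ t ∈ Set.Icc (0:ℝ) 1, ∀ x y : ℝ, |fxx t x y| ≤ Cxx)
    (hCxy : ∀ t ∈ Set.Icc (0:ℝ) 1, ∀ x y : ℝ, |fxy t x y| ≤ Cxy)
    (hCyy : ∀ t ∈ Set.Icc (0:ℝ) 1, ∀ x y : ℝ, |fyy t x y| ≤ Cyy)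
    (hdx : ∀ t x y : ℝ, HasDerivAt (fun z => f t z y) (fx t x y) x)
    (hdy : ∀ t x y : ℝ, HasDerivAt (fun z => f t x z) (fy t x y) y)
    (hdxx : ∀ t x y : ℝ, HasDerivAt (fun z => fx t z y) (fxx t x y) x)
    (hdxy : ∀ t x y : ℝ, HasDerivAt (fun z => fx t x z) (fxy t x y) y)
    (hdyy : ∀ t x y : ℝ, HasDerivAt (fun z => fy t x z) (fyy t x y) y)
    (T : C0 → C0)
    (hT : ∀ ω : C0, ∀ t : Set.Icc (0:ℝ) 1,
      (T ω : C(Set.Icc (0:ℝ) 1, ℝ)) t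
        = (ω : C(Set.Icc (0:ℝ) 1, ℝ)) t
          + ∫ s in (0:ℝ)..(t:ℝ),
              f s (Yc (ω : C(Set.Icc (0:ℝ) 1, ℝ)) s)
                (Yc' (ω : C(Set.Icc (0:ℝ) 1, ℝ)) s)) :
    ∀ ω : C0, HasFDerivAt T (DD fx fy hfx1 hfy1 hCx hCy ω) ω := by
  intro ω
  have hM0 : 0 ≤ 4 * (Cxx + Cxy + Cyy) := by
    have hCxx0 : 0 ≤ Cxx := le_trans (abs_nonneg _) (hCxx 0 (by norm_num) 0 0)
    have hCxy0 : 0 ≤ Cxy := le_trans (abs_nonneg _) (hCxy 0 (by norm_num) 0 0)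
    have hCyy0 : 0 ≤ Cyy := le_trans (abs_nonneg _) (hCyy 0 (by norm_num) 0 0)
    positivity
  refine (hasFDerivAt_iff_isLittleO_nhds_zero (𝕜 := ℝ) (E := C0) (F := C0)).2 ?_
  rw [Asymptotics.isLittleO_iff]
  intro c hc
  rw [Metric.eventually_nhds_iff]
  refine ⟨c / (4 * (Cxx + Cxy + Cyy) + 1), by positivity, fun θ hθ => ?_⟩
  rw [dist_zero_right] at hθ
  have h1 : ‖T (ω + θ) - T ω - DD fx fy hfx1 hfy1 hCx hCy ω θ‖ ≤ 4 * (Cxx + Cxy + Cyy) * ‖θ‖ ^ 2 := key_est f fx fy fxx fxy fyy hf1 hfx1 hfy1 hCx hCy hCxx hCxy hCyy hdx hdy hdxx hdxy hdyy T hT ω θ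
  have h2 : 4 * (Cxx + Cxy + Cyy) * ‖θ‖ ≤ c := by
    have hlt : ‖θ‖ ≤ c / (4 * (Cxx + Cxy + Cyy) + 1) := hθ.le
    have h3 : 4 * (Cxx + Cxy + Cyy) * ‖θ‖
        ≤ 4 * (Cxx + Cxy + Cyy) * (c / (4 * (Cxx + Cxy + Cyy) + 1)) :=
      mul_le_mul_of_nonneg_left hlt hM0
    refine h3.trans ?_
    rw [mul_div_assoc', div_le_iff₀ (by positivity)]
    nlinarith [hc.le]
  calc ‖T (ω + θ) - T ω - DD fx fy hfx1 hfy1 hCx hCy ω θ‖ ≤ 4 * (Cxx + Cxy + Cyy) * ‖θ‖ ^ 2 := h1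
    _ = (4 * (Cxx + Cxy + Cyy) * ‖θ‖) * ‖θ‖ := by ring
    _ ≤ c * ‖θ‖ := mul_le_mul_of_nonneg_right h2 (norm_nonneg _)

set_option maxHeartbeats 1000000 in
lemma DD_cont (fx fy : ℝ → ℝ → ℝ → ℝ)
    (hfx1 : ContinuousOn (fun p : ℝ × ℝ × ℝ => fx p.1 p.2.1 p.2.2)
      (Set.Icc 0 1 ×ˢ (Set.univ : Set (ℝ × ℝ))))
    (hfy1 : ContinuousOn (fun p : ℝ × ℝ × ℝ => fy p.1 p.2.1 p.2.2)
      (Set.Icc 0 1 ×ˢ (Set.univ : Set (ℝ × ℝ))))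
    {Cx Cy : ℝ}
    (hCx : ∀ t ∈ Set.Icc (0:ℝ) 1, ∀ x y : ℝ, |fx t x y| ≤ Cx)
    (hCy : ∀ t ∈ Set.Icc (0:ℝ) 1, ∀ x y : ℝ, |fy t x y| ≤ Cy) :
    Continuous (fun ω : C0 => DD fx fy hfx1 hfy1 hCx hCy ω) := by
  letI : SeminormedAddCommGroup (C0 →L[ℝ] C0) :=
    ContinuousLinearMap.toSeminormedAddCommGroup (E := C0) (F := C0) (σ₁₂ := RingHom.id ℝ)
  rw [continuous_iff_continuousAt]
  intro ω
  refine (Metric.continuousAt_iff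
    (f := fun ω : C0 => DD fx fy hfx1 hfy1 hCx hCy ω) (a := ω)).2 ?_
  intro ε hε
  set R : ℝ := 2 * ‖ω‖ + 2 with hR
  set K : Set (ℝ × ℝ × ℝ) :=
    Set.Icc (0:ℝ) 1 ×ˢ (Set.Icc (-R) R ×ˢ Set.Icc (-R) R) with hK
  have hKc : IsCompact K := isCompact_Icc.prod (isCompact_Icc.prod isCompact_Icc)
  have hKsub : K ⊆ Set.Icc 0 1 ×ˢ (Set.univ : Set (ℝ × ℝ)) :=
    Set.prod_mono subset_rfl (Set.subset_univ _)
  obtain ⟨δx, hδx, hx⟩ := Metric.uniformContinuousOn_iff.1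
    (hKc.uniformContinuousOn_of_continuous (hfx1.mono hKsub)) (ε/5) (by positivity)
  obtain ⟨δy, hδy, hy⟩ := Metric.uniformContinuousOn_iff.1
    (hKc.uniformContinuousOn_of_continuous (hfy1.mono hKsub)) (ε/5) (by positivity)
  refine ⟨min (min δx δy / 2) 1, by positivity, fun ω' hω' => ?_⟩
  have hd1 : ‖(ω' : C(Set.Icc (0:ℝ) 1, ℝ)) - (ω : C(Set.Icc (0:ℝ) 1, ℝ))‖
      < min (min δx δy / 2) 1 := by
    have hde : dist ω' ω
        = ‖(ω' : C(Set.Icc (0:ℝ) 1, ℝ)) - (ω : C(Set.Icc (0:ℝ) 1, ℝ))‖ := by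
      rw [dist_eq_norm]; rfl
    rwa [hde] at hω'
  have hd2 : ‖(ω' : C(Set.Icc (0:ℝ) 1, ℝ)) - (ω : C(Set.Icc (0:ℝ) 1, ℝ))‖
      < min δx δy / 2 := hd1.trans_le (min_le_left _ _)
  have hd3 : ‖(ω' : C(Set.Icc (0:ℝ) 1, ℝ)) - (ω : C(Set.Icc (0:ℝ) 1, ℝ))‖ < 1 :=
    hd1.trans_le (min_le_right _ _)
  have hω'n : ‖(ω' : C(Set.Icc (0:ℝ) 1, ℝ))‖ ≤ ‖ω‖ + 1 := by
    have h := norm_sub_norm_le (ω' : C(Set.Icc (0:ℝ) 1, ℝ)) (ω : C(Set.Icc (0:ℝ) 1, ℝ))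
    have hNω : ‖(ω : C(Set.Icc (0:ℝ) 1, ℝ))‖ = ‖ω‖ := rfl
    rw [hNω] at h
    linarith [h.trans hd3.le]
  have hmemK : ∀ (v : C(Set.Icc (0:ℝ) 1, ℝ)), ‖v‖ ≤ ‖ω‖ + 1 → ∀ s : ℝ,
      ((c01 s, (Yc v (c01 s), Yc' v (c01 s))) : ℝ × ℝ × ℝ) ∈ K := by
    intro v hv s
    refine Set.mem_prod.2 ⟨c01_mem s, Set.mem_prod.2 ⟨?_, ?_⟩⟩
    · refine abs_le.1 ?_
      rw [hR]
      calc |Yc v (c01 s)| ≤ 2 * ‖v‖ := Yc_bound v (c01_mem s)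
        _ ≤ 2 * (‖ω‖ + 1) := by linarith
        _ = 2 * ‖ω‖ + 2 := by ring
    · refine abs_le.1 ?_
      rw [hR]
      calc |Yc' v (c01 s)| ≤ 2 * ‖v‖ := Yc'_bound v (c01 s)
        _ ≤ 2 * (‖ω‖ + 1) := by linarith
        _ = 2 * ‖ω‖ + 2 := by ring
  have hωK : ∀ s : ℝ, ((c01 s, (Yc (ω : C(Set.Icc (0:ℝ) 1, ℝ)) (c01 s),
      Yc' (ω : C(Set.Icc (0:ℝ) 1, ℝ)) (c01 s))) : ℝ × ℝ × ℝ) ∈ K :=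
    hmemK _ (by rw [show ‖(ω : C(Set.Icc (0:ℝ) 1, ℝ))‖ = ‖ω‖ from rfl]; linarith)
  have hω'K : ∀ s : ℝ, ((c01 s, (Yc (ω' : C(Set.Icc (0:ℝ) 1, ℝ)) (c01 s),
      Yc' (ω' : C(Set.Icc (0:ℝ) 1, ℝ)) (c01 s))) : ℝ × ℝ × ℝ) ∈ K :=
    hmemK _ hω'n
  have hclose : ∀ s : ℝ,
      dist ((c01 s, (Yc (ω' : C(Set.Icc (0:ℝ) 1, ℝ)) (c01 s),
          Yc' (ω' : C(Set.Icc (0:ℝ) 1, ℝ)) (c01 s))) : ℝ × ℝ × ℝ)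
        ((c01 s, (Yc (ω : C(Set.Icc (0:ℝ) 1, ℝ)) (c01 s),
          Yc' (ω : C(Set.Icc (0:ℝ) 1, ℝ)) (c01 s))) : ℝ × ℝ × ℝ) < min δx δy := by
    intro s
    have hmin0 : (0:ℝ) < min δx δy := lt_min hδx hδy
    have h1 : dist (Yc (ω' : C(Set.Icc (0:ℝ) 1, ℝ)) (c01 s))
        (Yc (ω : C(Set.Icc (0:ℝ) 1, ℝ)) (c01 s)) < min δx δy := by
      rw [Real.dist_eq, ← Yc_sub]
      calc |Yc ((ω' : C(Set.Icc (0:ℝ) 1, ℝ)) - (ω : C(Set.Icc (0:ℝ) 1, ℝ))) (c01 s)|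
          ≤ 2 * ‖(ω' : C(Set.Icc (0:ℝ) 1, ℝ)) - (ω : C(Set.Icc (0:ℝ) 1, ℝ))‖ :=
            Yc_bound _ (c01_mem s)
        _ < 2 * (min δx δy / 2) := by
            exact mul_lt_mul_of_pos_left hd2 (by norm_num)
        _ = min δx δy := by ring
    have h2 : dist (Yc' (ω' : C(Set.Icc (0:ℝ) 1, ℝ)) (c01 s))
        (Yc' (ω : C(Set.Icc (0:ℝ) 1, ℝ)) (c01 s)) < min δx δy := by
      rw [Real.dist_eq, ← Yc'_sub]
      calc |Yc' ((ω' : C(Set.Icc (0:ℝ) 1, ℝ)) - (ω : C(Set.Icc (0:ℝ) 1, ℝ))) (c01 s)|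
          ≤ 2 * ‖(ω' : C(Set.Icc (0:ℝ) 1, ℝ)) - (ω : C(Set.Icc (0:ℝ) 1, ℝ))‖ :=
            Yc'_bound _ (c01 s)
        _ < 2 * (min δx δy / 2) := by
            exact mul_lt_mul_of_pos_left hd2 (by norm_num)
        _ = min δx δy := by ring
    rw [Prod.dist_eq, Prod.dist_eq]
    simp only [dist_self]
    exact sup_lt_iff.2 ⟨hmin0, sup_lt_iff.2 ⟨h1, h2⟩⟩
  have hPx : ∀ s : ℝ, |P fx (ω' : C(Set.Icc (0:ℝ) 1, ℝ)) s
      - P fx (ω : C(Set.Icc (0:ℝ) 1, ℝ)) s| ≤ ε/5 := by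
    intro s
    have h := hx _ (hω'K s) _ (hωK s) ((hclose s).trans_le (min_le_left _ _))
    rw [Real.dist_eq] at h
    exact h.le
  have hPy : ∀ s : ℝ, |P fy (ω' : C(Set.Icc (0:ℝ) 1, ℝ)) s
      - P fy (ω : C(Set.Icc (0:ℝ) 1, ℝ)) s| ≤ ε/5 := by
    intro s
    have h := hy _ (hω'K s) _ (hωK s) ((hclose s).trans_le (min_le_right _ _))
    rw [Real.dist_eq] at h
    exact h.le
  have hop : dist (DD fx fy hfx1 hfy1 hCx hCy ω') (DD fx fy hfx1 hfy1 hCx hCy ω) ≤ 4 * (ε/5) := by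
    refine (dist_eq_norm (DD fx fy hfx1 hfy1 hCx hCy ω')
      (DD fx fy hfx1 hfy1 hCx hCy ω)).trans_le ?_
    refine ContinuousLinearMap.opNorm_le_bound _ (by positivity) (fun θ => ?_)
    have happ : (DD fx fy hfx1 hfy1 hCx hCy ω' - DD fx fy hfx1 hfy1 hCx hCy ω) θ = DD fx fy hfx1 hfy1 hCx hCy ω' θ - DD fx fy hfx1 hfy1 hCx hCy ω θ := rfl
    change ‖DD fx fy hfx1 hfy1 hCx hCy ω' θ - DD fx fy hfx1 hfy1 hCx hCy ω θ‖ ≤ 4 * (ε/5) * ‖θ‖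
    have hnn : 0 ≤ 4 * (ε/5) * ‖θ‖ := by positivity
    have hgoal : ‖((DD fx fy hfx1 hfy1 hCx hCy ω' θ - DD fx fy hfx1 hfy1 hCx hCy ω θ : C0) : C(Set.Icc (0:ℝ) 1, ℝ))‖
        ≤ 4 * (ε/5) * ‖θ‖ := by
      rw [ContinuousMap.norm_le _ hnn]
      intro t
      have hval : ((DD fx fy hfx1 hfy1 hCx hCy ω' θ - DD fx fy hfx1 hfy1 hCx hCy ω θ : C0) : C(Set.Icc (0:ℝ) 1, ℝ)) t
          = (DD fx fy hfx1 hfy1 hCx hCy ω' θ : C(Set.Icc (0:ℝ) 1, ℝ)) t - (DD fx fy hfx1 hfy1 hCx hCy ω θ : C(Set.Icc (0:ℝ) 1, ℝ)) t := rfl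
      rw [hval, DD_apply fx fy hfx1 hfy1 hCx hCy ω' θ t, DD_apply fx fy hfx1 hfy1 hCx hCy ω θ t]
      have hii1 : IntervalIntegrable
          (Qc fx fy (ω' : C(Set.Icc (0:ℝ) 1, ℝ)) (θ : C(Set.Icc (0:ℝ) 1, ℝ)))
          volume 0 (t:ℝ) := (Qc_cont hfx1 hfy1 _ _).intervalIntegrable _ _
      have hii2 : IntervalIntegrable
          (Qc fx fy (ω : C(Set.Icc (0:ℝ) 1, ℝ)) (θ : C(Set.Icc (0:ℝ) 1, ℝ)))
          volume 0 (t:ℝ) := (Qc_cont hfx1 hfy1 _ _).intervalIntegrable _ _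
      have harith : (θ : C(Set.Icc (0:ℝ) 1, ℝ)) t
            + (∫ s in (0:ℝ)..(t:ℝ), Qc fx fy (ω' : C(Set.Icc (0:ℝ) 1, ℝ))
                (θ : C(Set.Icc (0:ℝ) 1, ℝ)) s)
          - ((θ : C(Set.Icc (0:ℝ) 1, ℝ)) t
            + ∫ s in (0:ℝ)..(t:ℝ), Qc fx fy (ω : C(Set.Icc (0:ℝ) 1, ℝ))
                (θ : C(Set.Icc (0:ℝ) 1, ℝ)) s)
          = ∫ s in (0:ℝ)..(t:ℝ),
              (Qc fx fy (ω' : C(Set.Icc (0:ℝ) 1, ℝ)) (θ : C(Set.Icc (0:ℝ) 1, ℝ)) s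
                - Qc fx fy (ω : C(Set.Icc (0:ℝ) 1, ℝ)) (θ : C(Set.Icc (0:ℝ) 1, ℝ)) s) := by
        rw [intervalIntegral.integral_sub hii1 hii2]
        ring
      rw [harith]
      have hbd : ∀ s ∈ Set.uIoc (0:ℝ) (t:ℝ),
          ‖Qc fx fy (ω' : C(Set.Icc (0:ℝ) 1, ℝ)) (θ : C(Set.Icc (0:ℝ) 1, ℝ)) s
            - Qc fx fy (ω : C(Set.Icc (0:ℝ) 1, ℝ)) (θ : C(Set.Icc (0:ℝ) 1, ℝ)) s‖
          ≤ 4 * (ε/5) * ‖θ‖ := by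
        intro s hs
        have hs' : s ∈ Set.Icc (0:ℝ) 1 := mem_Icc_of_uIoc hs
        rw [Real.norm_eq_abs]
        have hsplit : Qc fx fy (ω' : C(Set.Icc (0:ℝ) 1, ℝ)) (θ : C(Set.Icc (0:ℝ) 1, ℝ)) s
            - Qc fx fy (ω : C(Set.Icc (0:ℝ) 1, ℝ)) (θ : C(Set.Icc (0:ℝ) 1, ℝ)) s
            = (P fx (ω' : C(Set.Icc (0:ℝ) 1, ℝ)) s - P fx (ω : C(Set.Icc (0:ℝ) 1, ℝ)) s)
                * Yc (θ : C(Set.Icc (0:ℝ) 1, ℝ)) s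
              + (P fy (ω' : C(Set.Icc (0:ℝ) 1, ℝ)) s - P fy (ω : C(Set.Icc (0:ℝ) 1, ℝ)) s)
                * Yc' (θ : C(Set.Icc (0:ℝ) 1, ℝ)) s := by
          unfold Qc; ring
        rw [hsplit]
        have hNθ : ‖θ‖ = ‖(θ : C(Set.Icc (0:ℝ) 1, ℝ))‖ := rfl
        rw [hNθ]
        calc |(P fx (ω' : C(Set.Icc (0:ℝ) 1, ℝ)) s - P fx (ω : C(Set.Icc (0:ℝ) 1, ℝ)) s)
                * Yc (θ : C(Set.Icc (0:ℝ) 1, ℝ)) s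
              + (P fy (ω' : C(Set.Icc (0:ℝ) 1, ℝ)) s - P fy (ω : C(Set.Icc (0:ℝ) 1, ℝ)) s)
                * Yc' (θ : C(Set.Icc (0:ℝ) 1, ℝ)) s|
            ≤ |(P fx (ω' : C(Set.Icc (0:ℝ) 1, ℝ)) s - P fx (ω : C(Set.Icc (0:ℝ) 1, ℝ)) s)
                  * Yc (θ : C(Set.Icc (0:ℝ) 1, ℝ)) s|
              + |(P fy (ω' : C(Set.Icc (0:ℝ) 1, ℝ)) s - P fy (ω : C(Set.Icc (0:ℝ) 1, ℝ)) s)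
                  * Yc' (θ : C(Set.Icc (0:ℝ) 1, ℝ)) s| := abs_add_le _ _
          _ ≤ (ε/5) * (2 * ‖(θ : C(Set.Icc (0:ℝ) 1, ℝ))‖)
              + (ε/5) * (2 * ‖(θ : C(Set.Icc (0:ℝ) 1, ℝ))‖) := by
              rw [abs_mul, abs_mul]
              refine add_le_add
                (mul_le_mul (hPx s) (Yc_bound _ hs') (abs_nonneg _) (by positivity))
                (mul_le_mul (hPy s) (Yc'_bound _ s) (abs_nonneg _) (by positivity))
          _ = 4 * (ε/5) * ‖(θ : C(Set.Icc (0:ℝ) 1, ℝ))‖ := by ring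
      have hni := intervalIntegral.norm_integral_le_of_norm_le_const hbd
      calc ‖∫ s in (0:ℝ)..(t:ℝ),
            (Qc fx fy (ω' : C(Set.Icc (0:ℝ) 1, ℝ)) (θ : C(Set.Icc (0:ℝ) 1, ℝ)) s
              - Qc fx fy (ω : C(Set.Icc (0:ℝ) 1, ℝ)) (θ : C(Set.Icc (0:ℝ) 1, ℝ)) s)‖
          ≤ 4 * (ε/5) * ‖θ‖ * |(t:ℝ) - 0| := hni
        _ ≤ 4 * (ε/5) * ‖θ‖ * 1 := by
            refine mul_le_mul_of_nonneg_left ?_ hnn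
            rw [sub_zero, abs_of_nonneg t.2.1]; exact t.2.2
        _ = 4 * (ε/5) * ‖θ‖ := mul_one _
    exact hgoal
  calc dist (DD fx fy hfx1 hfy1 hCx hCy ω') (DD fx fy hfx1 hfy1 hCx hCy ω) ≤ 4 * (ε/5) := hop
    _ < ε := by linarith

end Aux

set_option maxHeartbeats 1600000 in
/-- the map `T` is continuously Fréchet differentiable on `C₀`, with
the stated derivative. -/
theorem stmt10 (f fx fy fxx fxy fyy : ℝ → ℝ → ℝ → ℝ)
    (hf : ContBdd3 f) (hfx : ContBdd3 fx) (hfy : ContBdd3 fy)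
    (hfxx : ContBdd3 fxx) (hfxy : ContBdd3 fxy) (hfyy : ContBdd3 fyy)
    (hdx : ∀ t x y : ℝ, HasDerivAt (fun z => f t z y) (fx t x y) x)
    (hdy : ∀ t x y : ℝ, HasDerivAt (fun z => f t x z) (fy t x y) y)
    (hdxx : ∀ t x y : ℝ, HasDerivAt (fun z => fx t z y) (fxx t x y) x)
    (hdxy : ∀ t x y : ℝ, HasDerivAt (fun z => fx t x z) (fxy t x y) y)
    (hdyy : ∀ t x y : ℝ, HasDerivAt (fun z => fy t x z) (fyy t x y) y)
    (T : C0 → C0)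
    (hT : ∀ ω : C0, ∀ t : Set.Icc (0:ℝ) 1,
      (T ω : C(Set.Icc (0:ℝ) 1, ℝ)) t
        = (ω : C(Set.Icc (0:ℝ) 1, ℝ)) t
          + ∫ s in (0:ℝ)..(t:ℝ),
              f s (Yc (ω : C(Set.Icc (0:ℝ) 1, ℝ)) s)
                (Yc' (ω : C(Set.Icc (0:ℝ) 1, ℝ)) s)) :
    ∃ D : C0 → (C0 →L[ℝ] C0),
      (∀ ω : C0, HasFDerivAt T (D ω) ω) ∧
      Continuous D ∧
      ∀ (ω θ : C0) (t : Set.Icc (0:ℝ) 1),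
        (D ω θ : C(Set.Icc (0:ℝ) 1, ℝ)) t
          = (θ : C(Set.Icc (0:ℝ) 1, ℝ)) t
            + ∫ s in (0:ℝ)..(t:ℝ),
                (fx s (Yc (ω : C(Set.Icc (0:ℝ) 1, ℝ)) s)
                    (Yc' (ω : C(Set.Icc (0:ℝ) 1, ℝ)) s)
                  * Yc (θ : C(Set.Icc (0:ℝ) 1, ℝ)) s
                + fy s (Yc (ω : C(Set.Icc (0:ℝ) 1, ℝ)) s)
                    (Yc' (ω : C(Set.Icc (0:ℝ) 1, ℝ)) s)
                  * Yc' (θ : C(Set.Icc (0:ℝ) 1, ℝ)) s) := by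
  obtain ⟨hf1, Cf, hCf⟩ := hf
  obtain ⟨hfx1, Cx, hCx⟩ := hfx
  obtain ⟨hfy1, Cy, hCy⟩ := hfy
  obtain ⟨hfxx1, Cxx, hCxx⟩ := hfxx
  obtain ⟨hfxy1, Cxy, hCxy⟩ := hfxy
  obtain ⟨hfyy1, Cyy, hCyy⟩ := hfyy
  have hCx0 : 0 ≤ Cx := le_trans (abs_nonneg _) (hCx 0 (by norm_num) 0 0)
  have hCy0 : 0 ≤ Cy := le_trans (abs_nonneg _) (hCy 0 (by norm_num) 0 0)
  have hCxx0 : 0 ≤ Cxx := le_trans (abs_nonneg _) (hCxx 0 (by norm_num) 0 0)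
  have hCxy0 : 0 ≤ Cxy := le_trans (abs_nonneg _) (hCxy 0 (by norm_num) 0 0)
  have hCyy0 : 0 ≤ Cyy := le_trans (abs_nonneg _) (hCyy 0 (by norm_num) 0 0)
  exact ⟨fun ω => DD fx fy hfx1 hfy1 hCx hCy ω,
    DD_hasFDeriv f fx fy fxx fxy fyy hf1 hfx1 hfy1 hCx hCy hCxx hCxy hCyy
      hdx hdy hdxx hdxy hdyy T hT,
    DD_cont fx fy hfx1 hfy1 hCx hCy,
    DD_formula fx fy hfx1 hfy1 hCx hCy⟩
end

section
/- Assume f : [0,1]×ℝ²→ℝ is continuous and bounded and its first and second partial derivatives f_x, f_y, f_xx, f_xy, f_yy with respect to the second and third variables exist and are continuous and bounded. Fix ω ∈ C₀, and set a(t) = f_x(t, Y_t(ω), Y'_t(ω)) and b(t) = f_y(t, Y_t(ω), Y'_t(ω)). Then the bounded linear operator DT(ω) : C₀ → C₀ defined by DT(ω)[θ](t) = θ(t) + ∫₀ᵗ ( a(s)·Y_s(θ) + b(s)·Y'_s(θ) ) ds is a Banach space isomorphism of C₀ if and only if the only twice continuously differentiable function u on [0,1] satisfying u''(t) + b(t)u'(t)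 + a(t)u(t) = 0 for all t ∈ [0,1] and u(0) = u(1) = 0 is the zero function. -/
open MeasureTheory

/-! ### Auxiliary infrastructure -/

open Set in
private abbrev I01 : Set ℝ := Set.Icc (0:ℝ) 1

private lemma continuous_pr01 : Continuous pr01 := continuous_projIcc (h := zero_le_one)

private lemma pr01_of_mem {t : ℝ} (ht : t ∈ I01) : pr01 t = ⟨t, ht⟩ := Set.projIcc_of_mem _ ht

private lemma continuous_comp_pr01 (v : C(I01, ℝ)) : Continuous (fun s : ℝ => v (pr01 s)) :=
  v.continuous.comp continuous_pr01

private lemma hasDerivAt_primitive {f : ℝ → ℝ} (hf : Continuous f) (t : ℝ) :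
    HasDerivAt (fun u => ∫ s in (0:ℝ)..u, f s) (f t) t :=
  intervalIntegral.integral_hasDerivAt_right (hf.intervalIntegrable _ _)
    (hf.stronglyMeasurableAtFilter _ _) hf.continuousAt

private lemma continuous_primitive' {f : ℝ → ℝ} (hf : Continuous f) :
    Continuous (fun u => ∫ s in (0:ℝ)..u, f s) :=
  continuous_iff_continuousAt.2 fun t => (hasDerivAt_primitive hf t).continuousAt

private lemma continuous_Yc (θ : C(I01, ℝ)) : Continuous (Yc θ) := by
  unfold Yc
  exact ((continuous_neg.comp continuous_id).mul continuous_const).add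
    (continuous_primitive' (continuous_comp_pr01 θ))

private lemma continuous_Yc' (θ : C(I01, ℝ)) : Continuous (Yc' θ) := by
  unfold Yc'
  exact continuous_const.add (continuous_comp_pr01 θ)

private lemma hasDerivAt_Yc (θ : C(I01, ℝ)) (t : ℝ) : HasDerivAt (Yc θ) (Yc' θ t) t := by
  unfold Yc Yc'
  exact (((hasDerivAt_id t).neg.mul_const _).add
    (hasDerivAt_primitive (continuous_comp_pr01 θ) t)).congr_deriv (by ring)

private lemma Yc_zero (θ : C(I01, ℝ)) : Yc θ 0 = 0 := by simp [Yc]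

private lemma Yc_one (θ : C(I01, ℝ)) : Yc θ 1 = 0 := by simp [Yc]

private lemma ftc01 {u u' : ℝ → ℝ} (hu : ∀ t ∈ I01, HasDerivWithinAt u (u' t) I01 t)
    (hc : ContinuousOn u' I01) {t : ℝ} (ht : t ∈ I01) :
    ∫ s in (0:ℝ)..t, u' s = u t - u 0 := by
  have hsub : Set.Icc (0:ℝ) t ⊆ I01 := Set.Icc_subset_Icc le_rfl ht.2
  refine intervalIntegral.integral_eq_sub_of_hasDeriv_right_of_le ht.1
    (fun x hx => ((hu x (hsub hx)).continuousWithinAt).mono hsub) ?_ ?_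
  · intro x hx
    have hxI : x ∈ I01 := hsub (Set.Ioo_subset_Icc_self hx)
    have hnb : I01 ∈ nhds x := Icc_mem_nhds hx.1 (lt_of_lt_of_le hx.2 ht.2)
    exact ((hu x hxI).hasDerivAt hnb).hasDerivWithinAt
  · apply ContinuousOn.intervalIntegrable
    rw [Set.uIcc_of_le ht.1]
    exact hc.mono hsub

private lemma deriv_eq_zero_of_eq_zero {f : ℝ → ℝ} {d t : ℝ} (ht : t ∈ I01)
    (h : HasDerivWithinAt f d I01 t) (h0 : ∀ s ∈ I01, f s = 0) : d = 0 := by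
  have h2 : HasDerivWithinAt f 0 I01 t :=
    (hasDerivWithinAt_const t I01 (0:ℝ)).congr h0 (h0 t ht)
  have hud := (uniqueDiffOn_Icc (zero_lt_one (α := ℝ))) t ht
  rw [← h.derivWithin hud, h2.derivWithin hud]

private lemma integral_abs_bound {h : ℝ → ℝ} (hc : Continuous h) {t : ℝ} (ht : t ∈ I01)
    {C : ℝ} {n : ℕ} (hC : 0 ≤ C) (hb : ∀ s ∈ Set.Icc (0:ℝ) t, |h s| ≤ C * s ^ n) :
    |∫ s in (0:ℝ)..t, h s| ≤ C * t ^ (n + 1) / (n + 1) := by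
  have h0t : (0:ℝ) ≤ t := ht.1
  calc |∫ s in (0:ℝ)..t, h s| ≤ ∫ s in (0:ℝ)..t, |h s| :=
        intervalIntegral.abs_integral_le_integral_abs h0t
    _ ≤ ∫ s in (0:ℝ)..t, C * s ^ n := by
        refine intervalIntegral.integral_mono_on h0t (hc.abs.intervalIntegrable _ _)
          ((continuous_const.mul (continuous_pow n)).intervalIntegrable _ _) hb
    _ = C * t ^ (n + 1) / (n + 1) := by
        rw [intervalIntegral.integral_const_mul, integral_pow]
        ring

section Volterra

variable (A B : C(ℝ, ℝ))

/-- The Volterra-type operator whose fixed points solve the linearized equation. -/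
private noncomputable def Tmap (g : C(I01, ℝ)) (c : ℝ) (p : C(I01,ℝ) × C(I01,ℝ)) :
    C(I01,ℝ) × C(I01,ℝ) :=
  (⟨fun t => ∫ s in (0:ℝ)..(t:ℝ), p.2 (pr01 s),
      (continuous_primitive' (continuous_comp_pr01 p.2)).comp continuous_subtype_val⟩,
   ⟨fun t => c + g t - ∫ s in (0:ℝ)..(t:ℝ), (A s * p.1 (pr01 s) + B s * p.2 (pr01 s)),
      by
        refine (continuous_const.add g.continuous).sub ?_
        exact (continuous_primitive' (((A.continuous.mul (continuous_comp_pr01 p.1))).add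
          (B.continuous.mul (continuous_comp_pr01 p.2)))).comp continuous_subtype_val⟩)

private lemma Tmap_fst (g : C(I01,ℝ)) (c : ℝ) (p : C(I01,ℝ) × C(I01,ℝ)) (t : I01) :
    (Tmap A B g c p).1 t = ∫ s in (0:ℝ)..(t:ℝ), p.2 (pr01 s) := rfl

private lemma Tmap_snd (g : C(I01,ℝ)) (c : ℝ) (p : C(I01,ℝ) × C(I01,ℝ)) (t : I01) :
    (Tmap A B g c p).2 t
      = c + g t - ∫ s in (0:ℝ)..(t:ℝ), (A s * p.1 (pr01 s) + B s * p.2 (pr01 s)) := rfl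

private lemma Tmap_iter_bound {MA MB : ℝ} (hMA : ∀ s, |A s| ≤ MA) (hMB : ∀ s, |B s| ≤ MB)
    (g : C(I01,ℝ)) (c : ℝ) (p q : C(I01,ℝ) × C(I01,ℝ)) :
    ∀ n : ℕ, ∀ t : I01,
      |((Tmap A B g c)^[n] p).1 t - ((Tmap A B g c)^[n] q).1 t|
          ≤ (1+MA+MB)^n * (t:ℝ)^n / n.factorial * dist p q ∧
      |((Tmap A B g c)^[n] p).2 t - ((Tmap A B g c)^[n] q).2 t|
          ≤ (1+MA+MB)^n * (t:ℝ)^n / n.factorial * dist p q := by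
  have hMA0 : 0 ≤ MA := le_trans (abs_nonneg _) (hMA 0)
  have hMB0 : 0 ≤ MB := le_trans (abs_nonneg _) (hMB 0)
  have hK1 : (1:ℝ) ≤ 1 + MA + MB := by linarith
  have hK0 : (0:ℝ) ≤ 1 + MA + MB := by linarith
  have hd0 : 0 ≤ dist p q := dist_nonneg
  intro n
  induction n with
  | zero =>
    intro t
    simp only [Function.iterate_zero_apply, pow_zero, Nat.factorial_zero, Nat.cast_one,
      one_mul, mul_one, div_one]
    constructor
    · calc |p.1 t - q.1 t| = dist (p.1 t) (q.1 t) := (Real.dist_eq _ _).symm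
        _ ≤ dist p.1 q.1 := ContinuousMap.dist_apply_le_dist t
        _ ≤ dist p q := by rw [Prod.dist_eq]; exact le_max_left _ _
    · calc |p.2 t - q.2 t| = dist (p.2 t) (q.2 t) := (Real.dist_eq _ _).symm
        _ ≤ dist p.2 q.2 := ContinuousMap.dist_apply_le_dist t
        _ ≤ dist p q := by rw [Prod.dist_eq]; exact le_max_right _ _
  | succ n ih =>
    intro t
    set T := Tmap A B g c with hT
    set P := T^[n] p with hP
    set Q := T^[n] q with hQ
    have hit : ∀ r, T^[n+1] r = T (T^[n] r) := fun r => Function.iterate_succ_apply' T n r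
    set K := 1 + MA + MB with hKdef
    set C := K ^ n / n.factorial * dist p q with hC
    have hC0 : 0 ≤ C := by
      apply mul_nonneg (div_nonneg (pow_nonneg hK0 _) (Nat.cast_nonneg _)) hd0
    have hbound : ∀ s ∈ Set.Icc (0:ℝ) (t:ℝ),
        |P.2 (pr01 s) - Q.2 (pr01 s)| ≤ C * s ^ n ∧
        |P.1 (pr01 s) - Q.1 (pr01 s)| ≤ C * s ^ n := by
      intro s hs
      have hsI : s ∈ I01 := ⟨hs.1, hs.2.trans t.2.2⟩
      have := ih ⟨s, hsI⟩
      rw [pr01_of_mem hsI]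
      constructor
      · refine this.2.trans_eq ?_
        rw [hC]; ring
      · refine this.1.trans_eq ?_
        rw [hC]; ring
    have hfac : ((n+1 : ℕ).factorial : ℝ) = (n+1) * n.factorial := by
      rw [Nat.factorial_succ]; push_cast; ring
    have hgoal_rhs : K ^ (n+1) * (t:ℝ)^(n+1) / (n+1).factorial * dist p q
        = (K * (C * (t:ℝ)^(n+1) / (n+1))) := by
      rw [hC, hfac]
      field_simp
      ring
    constructor
    · -- first component
      rw [hit p, hit q, ← hP, ← hQ, Tmap_fst, Tmap_fst]
      rw [← intervalIntegral.integral_sub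
        ((continuous_comp_pr01 P.2).intervalIntegrable _ _)
        ((continuous_comp_pr01 Q.2).intervalIntegrable _ _)]
      have hb := integral_abs_bound
        ((continuous_comp_pr01 P.2).sub (continuous_comp_pr01 Q.2)) t.2 hC0
        (fun s hs => (hbound s hs).1)
      refine hb.trans ?_
      rw [hgoal_rhs]
      have hx : (0:ℝ) ≤ C * (t:ℝ)^(n+1) / (n+1) :=
        div_nonneg (mul_nonneg hC0 (pow_nonneg t.2.1 _)) (by positivity)
      have h1 : C * (t:ℝ)^(n+1) / (n+1) ≤ K * (C * ((t:ℝ)^(n+1) / (n+1))) := by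
        rw [← mul_div_assoc]
        exact le_mul_of_one_le_left hx hK1
      calc C * (t:ℝ)^(n+1) / (n+1) ≤ K * (C * ((t:ℝ)^(n+1) / (n+1))) := h1
        _ = K * (C * (t:ℝ)^(n+1) / (n+1)) := by ring
    · -- second component
      rw [hit p, hit q, ← hP, ← hQ, Tmap_snd, Tmap_snd]
      have hint1 : Continuous fun s => A s * P.1 (pr01 s) + B s * P.2 (pr01 s) :=
        (A.continuous.mul (continuous_comp_pr01 P.1)).add
          (B.continuous.mul (continuous_comp_pr01 P.2))
      have hint2 : Continuous fun s => A s * Q.1 (pr01 s) + B s * Q.2 (pr01 s) :=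
        (A.continuous.mul (continuous_comp_pr01 Q.1)).add
          (B.continuous.mul (continuous_comp_pr01 Q.2))
      have heq : (c + g t - ∫ s in (0:ℝ)..(t:ℝ), (A s * P.1 (pr01 s) + B s * P.2 (pr01 s)))
          - (c + g t - ∫ s in (0:ℝ)..(t:ℝ), (A s * Q.1 (pr01 s) + B s * Q.2 (pr01 s)))
          = -∫ s in (0:ℝ)..(t:ℝ),
              ((A s * P.1 (pr01 s) + B s * P.2 (pr01 s))
                - (A s * Q.1 (pr01 s) + B s * Q.2 (pr01 s))) := by
        rw [intervalIntegral.integral_sub (hint1.intervalIntegrable _ _)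
          (hint2.intervalIntegrable _ _)]
        ring
      rw [heq, abs_neg]
      have hb := integral_abs_bound (hint1.sub hint2) t.2
        (mul_nonneg (by linarith : (0:ℝ) ≤ MA + MB) hC0)
        (fun s hs => by
          have h1 := (hbound s hs).1
          have h2 := (hbound s hs).2
          have hAs := hMA s
          have hBs := hMB s
          have : |A s * P.1 (pr01 s) + B s * P.2 (pr01 s)
              - (A s * Q.1 (pr01 s) + B s * Q.2 (pr01 s))|
              = |A s * (P.1 (pr01 s) - Q.1 (pr01 s)) + B s * (P.2 (pr01 s) - Q.2 (pr01 s))| := by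
            ring_nf
          simp only [Pi.sub_apply]
          rw [this]
          calc |A s * (P.1 (pr01 s) - Q.1 (pr01 s)) + B s * (P.2 (pr01 s) - Q.2 (pr01 s))|
              ≤ |A s * (P.1 (pr01 s) - Q.1 (pr01 s))| + |B s * (P.2 (pr01 s) - Q.2 (pr01 s))| :=
                abs_add_le _ _
            _ = |A s| * |P.1 (pr01 s) - Q.1 (pr01 s)| + |B s| * |P.2 (pr01 s) - Q.2 (pr01 s)| := by
                rw [abs_mul, abs_mul]
            _ ≤ MA * (C * s ^ n) + MB * (C * s ^ n) := by
                exact add_le_add (mul_le_mul hAs h2 (abs_nonneg _) hMA0)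
                  (mul_le_mul hBs h1 (abs_nonneg _) hMB0)
            _ = (MA + MB) * C * s ^ n := by ring)
      refine hb.trans ?_
      rw [hgoal_rhs]
      have ht0 : (0:ℝ) ≤ (t:ℝ)^(n+1) / (n+1) :=
        div_nonneg (pow_nonneg t.2.1 _) (by positivity)
      calc (MA + MB) * C * (t:ℝ)^(n+1) / (n+1)
          = (MA + MB) * (C * ((t:ℝ)^(n+1)/(n+1))) := by ring
        _ ≤ K * (C * ((t:ℝ)^(n+1)/(n+1))) := by
            apply mul_le_mul_of_nonneg_right (by rw [hKdef]; linarith)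
              (mul_nonneg hC0 ht0)
        _ = K * (C * (t:ℝ)^(n+1) / (n+1)) := by ring

private lemma Tmap_exists_fixedPt {MA MB : ℝ} (hMA : ∀ s, |A s| ≤ MA) (hMB : ∀ s, |B s| ≤ MB)
    (g : C(I01,ℝ)) (c : ℝ) : ∃ p, Tmap A B g c p = p := by
  have hMA0 : 0 ≤ MA := le_trans (abs_nonneg _) (hMA 0)
  have hMB0 : 0 ≤ MB := le_trans (abs_nonneg _) (hMB 0)
  set K : ℝ := 1 + MA + MB with hK
  have hK0 : (0:ℝ) ≤ K := by linarith
  obtain ⟨n, hn⟩ : ∃ n : ℕ, K ^ n / n.factorial < 1 := by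
    have h := (FloorSemiring.tendsto_pow_div_factorial_atTop (K:ℝ)).eventually
      (gt_mem_nhds one_pos)
    exact h.exists
  set T := Tmap A B g c with hT
  have hnn : (0:ℝ) ≤ K ^ n / n.factorial :=
    div_nonneg (pow_nonneg hK0 _) (Nat.cast_nonneg _)
  have hlip : ∀ p q, dist (T^[n] p) (T^[n] q) ≤ (K ^ n / n.factorial) * dist p q := by
    intro p q
    have hd0 : 0 ≤ dist p q := dist_nonneg
    have hC0 : 0 ≤ K ^ n / n.factorial * dist p q := mul_nonneg hnn hd0
    rw [Prod.dist_eq]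
    refine max_le ?_ ?_ <;>
    · rw [ContinuousMap.dist_le hC0]
      intro x
      rw [Real.dist_eq]
      have h := Tmap_iter_bound A B hMA hMB g c p q n x
      have hx : (x:ℝ) ^ n ≤ 1 := pow_le_one₀ x.2.1 x.2.2
      have hstep : K ^ n * (x:ℝ) ^ n / n.factorial * dist p q
          ≤ K ^ n / n.factorial * dist p q := by
        have : K ^ n * (x:ℝ) ^ n ≤ K ^ n * 1 :=
          mul_le_mul_of_nonneg_left hx (pow_nonneg hK0 _)
        have hfacpos : (0:ℝ) < n.factorial := by exact_mod_cast n.factorial_pos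
        rw [mul_one] at this
        have h2 : K ^ n * (x:ℝ)^n / n.factorial ≤ K ^ n / n.factorial :=
          (div_le_div_iff_of_pos_right hfacpos).2 this
        exact mul_le_mul_of_nonneg_right h2 hd0
      first
        | exact h.1.trans hstep
        | exact h.2.trans hstep
  set k : NNReal := ⟨K ^ n / n.factorial, hnn⟩ with hk
  have hcontr : ContractingWith k (T^[n]) :=
    ⟨by exact_mod_cast hn, LipschitzWith.of_dist_le_mul hlip⟩
  set x := hcontr.fixedPoint (T^[n]) with hx
  have hfix : Function.IsFixedPt (T^[n]) x := hcontr.fixedPoint_isFixedPt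
  have hfix2 : Function.IsFixedPt (T^[n]) (T x) := by
    show T^[n] (T x) = T x
    rw [← Function.iterate_succ_apply, Function.iterate_succ_apply', hfix]
  have := hcontr.fixedPoint_unique hfix2
  exact ⟨x, by rw [← hx] at this; exact this⟩

private lemma fixedPt_fst {g : C(I01,ℝ)} {c : ℝ} {p : C(I01,ℝ) × C(I01,ℝ)}
    (hp : Tmap A B g c p = p) (t : I01) :
    p.1 t = ∫ s in (0:ℝ)..(t:ℝ), p.2 (pr01 s) := by
  conv_lhs => rw [← hp]
  exact Tmap_fst A B g c p t

private lemma fixedPt_snd {g : C(I01,ℝ)} {c : ℝ} {p : C(I01,ℝ) × C(I01,ℝ)}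
    (hp : Tmap A B g c p = p) (t : I01) :
    p.2 t = c + g t - ∫ s in (0:ℝ)..(t:ℝ), (A s * p.1 (pr01 s) + B s * p.2 (pr01 s)) := by
  conv_lhs => rw [← hp]
  exact Tmap_snd A B g c p t

private lemma combine (g : C(I01,ℝ)) (c : ℝ) (p0 ph : C(I01,ℝ) × C(I01,ℝ))
    (h0 : Tmap A B g 0 p0 = p0) (hh : Tmap A B 0 1 ph = ph) :
    Tmap A B g c (p0.1 + c • ph.1, p0.2 + c • ph.2) = (p0.1 + c • ph.1, p0.2 + c • ph.2) := by
  apply Prod.ext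
  · ext t
    rw [Tmap_fst]
    have h1 : (fun s => (p0.2 + c • ph.2) (pr01 s))
        = fun s => p0.2 (pr01 s) + c * ph.2 (pr01 s) := by
      ext s; simp
    rw [h1, intervalIntegral.integral_add (f := fun s => p0.2 (pr01 s))
      (g := fun s => c * ph.2 (pr01 s)) ((continuous_comp_pr01 p0.2).intervalIntegrable _ _)
      ((continuous_const.mul (continuous_comp_pr01 ph.2)).intervalIntegrable _ _),
      intervalIntegral.integral_const_mul, ← fixedPt_fst A B h0 t, ← fixedPt_fst A B hh t]
    simp
  · ext t
    rw [Tmap_snd]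
    have h1 : (fun s => A s * (p0.1 + c • ph.1) (pr01 s) + B s * (p0.2 + c • ph.2) (pr01 s))
        = fun s => (A s * p0.1 (pr01 s) + B s * p0.2 (pr01 s))
            + c * (A s * ph.1 (pr01 s) + B s * ph.2 (pr01 s)) := by
      ext s; simp; ring
    rw [h1, intervalIntegral.integral_add
      (f := fun s => A s * p0.1 (pr01 s) + B s * p0.2 (pr01 s))
      (g := fun s => c * (A s * ph.1 (pr01 s) + B s * ph.2 (pr01 s)))
      (((A.continuous.mul (continuous_comp_pr01 p0.1))).add
        (B.continuous.mul (continuous_comp_pr01 p0.2)) |>.intervalIntegrable _ _)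
      ((continuous_const.mul (((A.continuous.mul (continuous_comp_pr01 ph.1))).add
        (B.continuous.mul (continuous_comp_pr01 ph.2)))).intervalIntegrable _ _),
      intervalIntegral.integral_const_mul]
    have e0 := fixedPt_snd A B h0 t
    have eh := fixedPt_snd A B hh t
    rw [eq_sub_iff_add_eq] at e0 eh
    simp only [ContinuousMap.add_apply, ContinuousMap.smul_apply, smul_eq_mul,
      ContinuousMap.zero_apply] at *
    linear_combination -e0 - c * eh

private lemma sol_hasDeriv1 {g : C(I01,ℝ)} {c : ℝ} {p : C(I01,ℝ) × C(I01,ℝ)}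
    (hp : Tmap A B g c p = p) {t : ℝ} (ht : t ∈ I01) :
    HasDerivWithinAt (fun r => p.1 (pr01 r)) (p.2 (pr01 t)) I01 t := by
  have hF := hasDerivAt_primitive (continuous_comp_pr01 p.2) t
  refine (hF.hasDerivWithinAt).congr (fun r hr => ?_) ?_
  · rw [pr01_of_mem hr]; exact fixedPt_fst A B hp ⟨r, hr⟩
  · rw [pr01_of_mem ht]; exact fixedPt_fst A B hp ⟨t, ht⟩

private lemma sol_hasDeriv2 {c : ℝ} {p : C(I01,ℝ) × C(I01,ℝ)} (hp : Tmap A B 0 c p = p)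
    {t : ℝ} (ht : t ∈ I01) :
    HasDerivWithinAt (fun r => p.2 (pr01 r))
      (-(A t * p.1 (pr01 t) + B t * p.2 (pr01 t))) I01 t := by
  have hH : Continuous (fun s => A s * p.1 (pr01 s) + B s * p.2 (pr01 s)) :=
    (A.continuous.mul (continuous_comp_pr01 p.1)).add
      (B.continuous.mul (continuous_comp_pr01 p.2))
  have hF : HasDerivAt
      (fun r => c - ∫ s in (0:ℝ)..r, (A s * p.1 (pr01 s) + B s * p.2 (pr01 s)))
      (-(A t * p.1 (pr01 t) + B t * p.2 (pr01 t))) t := by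
    simpa using (hasDerivAt_primitive hH t).const_sub c
  refine (hF.hasDerivWithinAt).congr (fun r hr => ?_) ?_
  · rw [pr01_of_mem hr]
    have := fixedPt_snd A B hp ⟨r, hr⟩
    simpa using this
  · rw [pr01_of_mem ht]
    have := fixedPt_snd A B hp ⟨t, ht⟩
    simpa using this

end Volterra

set_option maxHeartbeats 2000000 in
/-- the operator `DT(ω)` is a Banach space isomorphism of `C₀` if and
only if the linearized boundary value problem has only the zero solution. -/
theorem stmt11 (f fx fy fxx fxy fyy : ℝ → ℝ → ℝ → ℝ)
    (hf : ContBdd3 f) (hfx : ContBdd3 fx) (hfy : ContBdd3 fy)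
    (hfxx : ContBdd3 fxx) (hfxy : ContBdd3 fxy) (hfyy : ContBdd3 fyy)
    (hdx : ∀ t x y : ℝ, HasDerivAt (fun z => f t z y) (fx t x y) x)
    (hdy : ∀ t x y : ℝ, HasDerivAt (fun z => f t x z) (fy t x y) y)
    (hdxx : ∀ t x y : ℝ, HasDerivAt (fun z => fx t z y) (fxx t x y) x)
    (hdxy : ∀ t x y : ℝ, HasDerivAt (fun z => fx t x z) (fxy t x y) y)
    (hdyy : ∀ t x y : ℝ, HasDerivAt (fun z => fy t x z) (fyy t x y) y)
    (ω : C(Set.Icc (0:ℝ) 1, ℝ)) (hω0 : ω ⟨0, by norm_num⟩ = 0)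
    (Dop : C0 →L[ℝ] C0)
    (hD : ∀ θ : C0, ∀ t : Set.Icc (0:ℝ) 1,
      (Dop θ : C(Set.Icc (0:ℝ) 1, ℝ)) t
        = (θ : C(Set.Icc (0:ℝ) 1, ℝ)) t
          + ∫ s in (0:ℝ)..(t:ℝ),
              (fx s (Yc ω s) (Yc' ω s) * Yc (θ : C(Set.Icc (0:ℝ) 1, ℝ)) s
                + fy s (Yc ω s) (Yc' ω s) * Yc' (θ : C(Set.Icc (0:ℝ) 1, ℝ)) s)) :
    (∃ B : C0 →L[ℝ] C0,
        B.comp Dop = ContinuousLinearMap.id ℝ C0 ∧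
        Dop.comp B = ContinuousLinearMap.id ℝ C0)
    ↔ (∀ u u' u'' : ℝ → ℝ,
        (∀ t ∈ Set.Icc (0:ℝ) 1, HasDerivWithinAt u (u' t) (Set.Icc 0 1) t) →
        (∀ t ∈ Set.Icc (0:ℝ) 1, HasDerivWithinAt u' (u'' t) (Set.Icc 0 1) t) →
        ContinuousOn u'' (Set.Icc 0 1) →
        (∀ t ∈ Set.Icc (0:ℝ) 1,
          u'' t + fy t (Yc ω t) (Yc' ω t) * u' t + fx t (Yc ω t) (Yc' ω t) * u t = 0) →
        u 0 = 0 → u 1 = 0 → ∀ t ∈ Set.Icc (0:ℝ) 1, u t = 0) := by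
  classical
  obtain ⟨Ca, hCa⟩ := hfx.2
  obtain ⟨Cb, hCb⟩ := hfy.2
  have hclampc : Continuous (fun t : ℝ => ((pr01 t : ℝ))) :=
    continuous_subtype_val.comp continuous_pr01
  have hYω : Continuous (Yc ω) := continuous_Yc ω
  have hY'ω : Continuous (Yc' ω) := continuous_Yc' ω
  have hmapA : Continuous (fun t : ℝ =>
      (((pr01 t : ℝ), (Yc ω (pr01 t), Yc' ω (pr01 t))) : ℝ × ℝ × ℝ)) :=
    hclampc.prodMk ((hYω.comp hclampc).prodMk (hY'ω.comp hclampc))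
  have hmemA : ∀ t : ℝ, (((pr01 t : ℝ), (Yc ω (pr01 t), Yc' ω (pr01 t))) : ℝ × ℝ × ℝ)
      ∈ (Set.Icc (0:ℝ) 1) ×ˢ (Set.univ : Set (ℝ × ℝ)) := fun t => ⟨(pr01 t).2, trivial⟩
  set A : C(ℝ, ℝ) := ⟨fun t => fx (pr01 t : ℝ) (Yc ω (pr01 t)) (Yc' ω (pr01 t)),
    by exact hfx.1.comp_continuous hmapA hmemA⟩ with hAdef
  set B : C(ℝ, ℝ) := ⟨fun t => fy (pr01 t : ℝ) (Yc ω (pr01 t)) (Yc' ω (pr01 t)),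
    by exact hfy.1.comp_continuous hmapA hmemA⟩ with hBdef
  have hAeq : ∀ t ∈ I01, A t = fx t (Yc ω t) (Yc' ω t) := by
    intro t ht
    simp only [hAdef, ContinuousMap.coe_mk]
    rw [pr01_of_mem ht]
  have hBeq : ∀ t ∈ I01, B t = fy t (Yc ω t) (Yc' ω t) := by
    intro t ht
    simp only [hBdef, ContinuousMap.coe_mk]
    rw [pr01_of_mem ht]
  have hMA : ∀ s, |A s| ≤ Ca := fun s => hCa _ (pr01 s).2 _ _
  have hMB : ∀ s, |B s| ≤ Cb := fun s => hCb _ (pr01 s).2 _ _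
  have h0m : (0:ℝ) ∈ I01 := ⟨le_rfl, zero_le_one⟩
  have h1m : (1:ℝ) ∈ I01 := ⟨zero_le_one, le_rfl⟩
  constructor
  · -- isomorphism → uniqueness
    rintro ⟨Bop, hBD, -⟩ u u' u'' hu hu' hu''c hode hu0 hu1 t ht
    have hu'cont : ContinuousOn u' I01 := fun x hx => (hu' x hx).continuousWithinAt
    set θm : C(Set.Icc (0:ℝ) 1, ℝ) :=
      ⟨fun s => u' s - u' 0, by exact (hu'cont.restrict).sub continuous_const⟩ with hθm
    have hθmem : θm ∈ C0 := by
      show θm ⟨0, by norm_num⟩ = 0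
      exact sub_self _
    set θ : C0 := ⟨θm, hθmem⟩ with hθ
    have hint1 : ∀ s, s ∈ I01 → (∫ r in (0:ℝ)..s, θm (pr01 r)) = u s - u 0 - u' 0 * s := by
      intro s hs
      have hsub : Set.Icc (0:ℝ) s ⊆ I01 := Set.Icc_subset_Icc le_rfl hs.2
      have hcongr : Set.EqOn (fun r => θm (pr01 r)) (fun r => u' r - u' 0)
          (Set.uIcc 0 s) := by
        intro r hr
        rw [Set.uIcc_of_le hs.1] at hr
        show θm (pr01 r) = _
        rw [pr01_of_mem (hsub hr)]
        rfl
      rw [intervalIntegral.integral_congr hcongr]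
      have hi1 : IntervalIntegrable u' MeasureTheory.volume 0 s := by
        apply ContinuousOn.intervalIntegrable
        rw [Set.uIcc_of_le hs.1]
        exact hu'cont.mono hsub
      rw [intervalIntegral.integral_sub hi1 intervalIntegrable_const,
        ftc01 hu hu'cont hs, intervalIntegral.integral_const]
      simp
      ring
    have hYcθ : ∀ s, s ∈ I01 → Yc θm s = u s := by
      intro s hs
      show -s * (∫ r in (0:ℝ)..1, θm (pr01 r)) + (∫ r in (0:ℝ)..s, θm (pr01 r)) = u s
      rw [hint1 1 h1m, hint1 s hs, hu0, hu1]
      ring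
    have hYc'θ : ∀ s, s ∈ I01 → Yc' θm s = u' s := by
      intro s hs
      show -(∫ r in (0:ℝ)..1, θm (pr01 r)) + θm (pr01 s) = u' s
      rw [hint1 1 h1m, hu0, hu1, pr01_of_mem hs]
      show -(0 - 0 - u' 0 * 1) + (u' s - u' 0) = u' s
      ring
    have hDθ0 : Dop θ = 0 := by
      apply Subtype.ext
      apply ContinuousMap.ext
      intro x
      have hx2 := hD θ x
      have hcong : Set.EqOn
          (fun s => fx s (Yc ω s) (Yc' ω s) * Yc (θ : C(Set.Icc (0:ℝ) 1, ℝ)) s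
            + fy s (Yc ω s) (Yc' ω s) * Yc' (θ : C(Set.Icc (0:ℝ) 1, ℝ)) s)
          (fun s => -u'' s) (Set.uIcc 0 (x:ℝ)) := by
        intro s hs
        rw [Set.uIcc_of_le x.2.1] at hs
        have hsI : s ∈ I01 := ⟨hs.1, hs.2.trans x.2.2⟩
        show fx s (Yc ω s) (Yc' ω s) * Yc θm s + fy s (Yc ω s) (Yc' ω s) * Yc' θm s = -u'' s
        rw [hYcθ s hsI, hYc'θ s hsI]
        linarith [hode s hsI]
      rw [intervalIntegral.integral_congr hcong] at hx2
      have hx3 : (∫ s in (0:ℝ)..(x:ℝ), -u'' s) = -(u' x - u' 0) := by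
        rw [intervalIntegral.integral_neg, ftc01 hu' hu''c x.2]
      rw [hx3] at hx2
      have : ((Dop θ : C(Set.Icc (0:ℝ) 1, ℝ))) x = θm x + -(u' x - u' 0) := hx2
      rw [this]
      show θm x + -(u' ↑x - u' 0) = ((0 : C0) : C(Set.Icc (0:ℝ) 1, ℝ)) x
      show u' (x:ℝ) - u' 0 + -(u' ↑x - u' 0) = ((0 : C0) : C(Set.Icc (0:ℝ) 1, ℝ)) x
      simp
    have hθ0 : θ = 0 := by
      have h := ContinuousLinearMap.ext_iff.1 hBD θ
      simp only [ContinuousLinearMap.comp_apply, ContinuousLinearMap.id_apply] at h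
      rw [hDθ0, map_zero] at h
      exact h.symm
    have hu'const : ∀ s ∈ I01, u' s = u' 0 := by
      intro s hs
      have h1 : θm ⟨s, hs⟩ = 0 := by
        have := congrArg Subtype.val hθ0
        have h2 := ContinuousMap.congr_fun this ⟨s, hs⟩
        simpa using h2
      have : u' s - u' 0 = 0 := h1
      linarith
    have hlin : ∀ s ∈ I01, u s = u' 0 * s := by
      intro s hs
      have hder : ∀ x ∈ I01, HasDerivWithinAt (fun r => u r - u' 0 * r) (u' x - u' 0) I01 x := by
        intro x hx
        exact (hu x hx).sub ((((hasDerivAt_id x).const_mul (u' 0)).congr_deriv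
          (mul_one _)).hasDerivWithinAt)
      have hb : ∀ x ∈ I01, ‖u' x - u' 0‖ ≤ 0 := fun x hx => by
        rw [hu'const x hx]; simp
      have hest := Convex.norm_image_sub_le_of_norm_hasDerivWithin_le hder hb
        (convex_Icc _ _) h0m hs
      have : |u s - u' 0 * s - (u 0 - u' 0 * 0)| ≤ 0 := by
        simpa [Real.norm_eq_abs] using hest
      rw [hu0] at this
      have h2 := abs_nonneg (u s - u' 0 * s - (0 - u' 0 * 0))
      have h3 : u s - u' 0 * s - (0 - u' 0 * 0) = 0 := by
        have := abs_eq_zero.1 (le_antisymm this h2)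
        exact this
      linarith [h3]
    have h10 : u' 0 = 0 := by
      have := hlin 1 h1m
      rw [hu1] at this
      linarith
    rw [hlin t ht, h10, zero_mul]
  · -- uniqueness → isomorphism
    intro hU
    have hclosed : IsClosed {ωf : C(Set.Icc (0:ℝ) 1, ℝ) | ωf ⟨0, by norm_num⟩ = 0} :=
      isClosed_eq (continuous_eval_const _) continuous_const
    haveI : CompleteSpace C0 := hclosed.completeSpace_coe
    -- injectivity
    have hker : LinearMap.ker (Dop : C0 →ₗ[ℝ] C0) = ⊥ := by
      rw [LinearMap.ker_eq_bot']
      intro θ hθker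
      set θc : C(Set.Icc (0:ℝ) 1, ℝ) := (θ : C(Set.Icc (0:ℝ) 1, ℝ)) with hθc
      have hDt : ∀ x : Set.Icc (0:ℝ) 1, θc x
          + (∫ s in (0:ℝ)..(x:ℝ), (fx s (Yc ω s) (Yc' ω s) * Yc θc s
              + fy s (Yc ω s) (Yc' ω s) * Yc' θc s)) = 0 := by
        intro x
        have h := hD θ x
        rw [show Dop θ = 0 from hθker] at h
        simpa using h.symm
      set H : ℝ → ℝ := fun s => A s * Yc θc s + B s * Yc' θc s with hH
      have hHcont : Continuous H :=
        (A.continuous.mul (continuous_Yc θc)).add (B.continuous.mul (continuous_Yc' θc))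
      have hθeq : ∀ x : Set.Icc (0:ℝ) 1, θc x = -∫ s in (0:ℝ)..(x:ℝ), H s := by
        intro x
        have h1 := hDt x
        have hcong : Set.EqOn
            (fun s => fx s (Yc ω s) (Yc' ω s) * Yc θc s + fy s (Yc ω s) (Yc' ω s) * Yc' θc s)
            H (Set.uIcc 0 (x:ℝ)) := by
          intro s hs
          rw [Set.uIcc_of_le x.2.1] at hs
          have hsI : s ∈ I01 := ⟨hs.1, hs.2.trans x.2.2⟩
          show _ = A s * Yc θc s + B s * Yc' θc s
          rw [hAeq s hsI, hBeq s hsI]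
        rw [intervalIntegral.integral_congr hcong] at h1
        linarith
      have hder2 : ∀ x ∈ I01, HasDerivWithinAt (Yc' θc) (-(H x)) I01 x := by
        intro x hx
        have hG : HasDerivAt
            (fun r => -(∫ s in (0:ℝ)..1, θc (pr01 s)) + -∫ s in (0:ℝ)..r, H s)
            (-(H x)) x := by
          exact ((hasDerivAt_primitive hHcont x).neg).const_add
            (-(∫ s in (0:ℝ)..1, θc (pr01 s)))
        refine (hG.hasDerivWithinAt).congr (fun r hr => ?_) ?_
        · show -(∫ s in (0:ℝ)..1, θc (pr01 s)) + θc (pr01 r) = _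
          rw [pr01_of_mem hr, hθeq ⟨r, hr⟩]
        · show -(∫ s in (0:ℝ)..1, θc (pr01 s)) + θc (pr01 x) = _
          rw [pr01_of_mem hx, hθeq ⟨x, hx⟩]
      have hode2 : ∀ x ∈ Set.Icc (0:ℝ) 1,
          (fun r => -(H r)) x + fy x (Yc ω x) (Yc' ω x) * Yc' θc x
            + fx x (Yc ω x) (Yc' ω x) * Yc θc x = 0 := by
        intro x hx
        show -(A x * Yc θc x + B x * Yc' θc x) + _ + _ = 0
        rw [← hAeq x hx, ← hBeq x hx]
        ring
      have hzero := hU (Yc θc) (Yc' θc) (fun r => -(H r))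
        (fun x _ => (hasDerivAt_Yc θc x).hasDerivWithinAt)
        hder2 (hHcont.neg.continuousOn) hode2 (Yc_zero θc) (Yc_one θc)
      have hY'0 : ∀ x ∈ I01, Yc' θc x = 0 := by
        intro x hx
        exact deriv_eq_zero_of_eq_zero hx ((hasDerivAt_Yc θc x).hasDerivWithinAt) hzero
      have hconst : ∀ x : Set.Icc (0:ℝ) 1, θc x = ∫ s in (0:ℝ)..1, θc (pr01 s) := by
        intro x
        have h := hY'0 x x.2
        have : -(∫ s in (0:ℝ)..1, θc (pr01 s)) + θc (pr01 (x:ℝ)) = 0 := h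
        rw [pr01_of_mem x.2] at this
        have h2 : θc ⟨(x:ℝ), x.2⟩ = θc x := by congr
        linarith [h2 ▸ this]
      have h00 : (∫ s in (0:ℝ)..1, θc (pr01 s)) = 0 := by
        have h0' : θc ⟨0, by norm_num⟩ = 0 := θ.2
        rw [← hconst ⟨0, by norm_num⟩]
        exact h0'
      apply Subtype.ext
      apply ContinuousMap.ext
      intro x
      show θc x = _
      rw [hconst x, h00]
      simp
    -- surjectivity
    have hrange : LinearMap.range (Dop : C0 →ₗ[ℝ] C0) = ⊤ := by
      rw [LinearMap.range_eq_top]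
      intro g
      set gc : C(Set.Icc (0:ℝ) 1, ℝ) := (g : C(Set.Icc (0:ℝ) 1, ℝ)) with hgc
      obtain ⟨p0, hp0⟩ := Tmap_exists_fixedPt A B hMA hMB gc 0
      obtain ⟨ph, hph⟩ := Tmap_exists_fixedPt A B hMA hMB 0 1
      have huh0 : ph.1 ⟨0, h0m⟩ = 0 := by
        have := fixedPt_fst A B hph ⟨0, h0m⟩
        simpa using this
      have hvh0 : ph.2 ⟨0, h0m⟩ = 1 := by
        have := fixedPt_snd A B hph ⟨0, h0m⟩
        simpa using this
      have hw : ph.1 ⟨1, h1m⟩ ≠ 0 := by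
        intro hw0
        have hzero := hU (fun r => ph.1 (pr01 r)) (fun r => ph.2 (pr01 r))
          (fun r => -(A r * ph.1 (pr01 r) + B r * ph.2 (pr01 r)))
          (fun x hx => sol_hasDeriv1 A B hph hx)
          (fun x hx => sol_hasDeriv2 A B hph hx)
          (by
            apply Continuous.continuousOn
            exact ((A.continuous.mul (continuous_comp_pr01 ph.1)).add
              (B.continuous.mul (continuous_comp_pr01 ph.2))).neg)
          (by
            intro x hx
            show -(A x * ph.1 (pr01 x) + B x * ph.2 (pr01 x))
              + fy x (Yc ω x) (Yc' ω x) * ph.2 (pr01 x)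
              + fx x (Yc ω x) (Yc' ω x) * ph.1 (pr01 x) = 0
            rw [← hAeq x hx, ← hBeq x hx]
            ring)
          (by show ph.1 (pr01 0) = 0; rw [pr01_of_mem h0m]; exact huh0)
          (by show ph.1 (pr01 1) = 0; rw [pr01_of_mem h1m]; exact hw0)
        have hvh00 : ph.2 (pr01 0) = 0 := by
          refine deriv_eq_zero_of_eq_zero h0m (sol_hasDeriv1 A B hph h0m) ?_
          exact hzero
        rw [pr01_of_mem h0m, hvh0] at hvh00
        exact one_ne_zero hvh00
      set c : ℝ := -(p0.1 ⟨1, h1m⟩) / ph.1 ⟨1, h1m⟩ with hc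
      set q : C(Set.Icc (0:ℝ) 1, ℝ) × C(Set.Icc (0:ℝ) 1, ℝ) :=
        (p0.1 + c • ph.1, p0.2 + c • ph.2) with hqdef
      have hq : Tmap A B gc c q = q := combine A B gc c p0 ph hp0 hph
      have hq1 := fixedPt_fst A B hq
      have hq2 := fixedPt_snd A B hq
      have hq11 : q.1 ⟨1, h1m⟩ = 0 := by
        show p0.1 ⟨1, h1m⟩ + c * ph.1 ⟨1, h1m⟩ = 0
        rw [hc, div_mul_cancel₀ _ hw]
        ring
      set θm : C(Set.Icc (0:ℝ) 1, ℝ) :=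
        ⟨fun x => q.2 x - c, q.2.continuous.sub continuous_const⟩ with hθm
      have hq20 : q.2 ⟨0, h0m⟩ = c + gc ⟨0, h0m⟩ := by
        have := hq2 ⟨0, h0m⟩
        simpa using this
      have hθmem : θm ∈ C0 := by
        show θm ⟨0, by norm_num⟩ = 0
        show q.2 ⟨0, by norm_num⟩ - c = 0
        rw [hq20]
        have hg0 : gc ⟨0, by norm_num⟩ = 0 := g.2
        rw [hg0]
        ring
      refine ⟨⟨θm, hθmem⟩, ?_⟩
      have hint2 : ∀ s : Set.Icc (0:ℝ) 1,
          (∫ r in (0:ℝ)..(s:ℝ), θm (pr01 r)) = q.1 s - c * s := by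
        intro s
        have heqf : (fun r => θm (pr01 r)) = fun r => q.2 (pr01 r) - c := rfl
        rw [heqf, intervalIntegral.integral_sub
          ((continuous_comp_pr01 q.2).intervalIntegrable _ _) intervalIntegrable_const,
          ← hq1 s, intervalIntegral.integral_const]
        simp
        ring
      have hi1' : (∫ r in (0:ℝ)..(1:ℝ), θm (pr01 r)) = -c := by
        have := hint2 ⟨1, h1m⟩
        rw [hq11] at this
        simpa using this
      have hYcq : ∀ s : Set.Icc (0:ℝ) 1, Yc θm s = q.1 s := by
        intro s
        show -(s:ℝ) * (∫ r in (0:ℝ)..1, θm (pr01 r)) + (∫ r in (0:ℝ)..(s:ℝ), θm (pr01 r))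
          = q.1 s
        rw [hi1', hint2 s]
        ring
      have hYc'q : ∀ s : Set.Icc (0:ℝ) 1, Yc' θm s = q.2 s := by
        intro s
        show -(∫ r in (0:ℝ)..1, θm (pr01 r)) + θm (pr01 (s:ℝ)) = q.2 s
        rw [hi1', pr01_of_mem s.2]
        show -(-c) + (q.2 ⟨(s:ℝ), s.2⟩ - c) = q.2 s
        have h2 : q.2 ⟨(s:ℝ), s.2⟩ = q.2 s := by congr
        rw [h2]
        ring
      apply Subtype.ext
      apply ContinuousMap.ext
      intro x
      have hx2 := hD ⟨θm, hθmem⟩ x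
      have hcong : Set.EqOn
          (fun s => fx s (Yc ω s) (Yc' ω s) * Yc θm s + fy s (Yc ω s) (Yc' ω s) * Yc' θm s)
          (fun s => A s * q.1 (pr01 s) + B s * q.2 (pr01 s)) (Set.uIcc 0 (x:ℝ)) := by
        intro s hs
        rw [Set.uIcc_of_le x.2.1] at hs
        have hsI : s ∈ I01 := ⟨hs.1, hs.2.trans x.2.2⟩
        show fx s (Yc ω s) (Yc' ω s) * Yc θm s + fy s (Yc ω s) (Yc' ω s) * Yc' θm s
          = A s * q.1 (pr01 s) + B s * q.2 (pr01 s)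
        rw [hAeq s hsI, hBeq s hsI, pr01_of_mem hsI,
          show Yc θm s = q.1 ⟨s, hsI⟩ from hYcq ⟨s, hsI⟩,
          show Yc' θm s = q.2 ⟨s, hsI⟩ from hYc'q ⟨s, hsI⟩]
      rw [intervalIntegral.integral_congr hcong] at hx2
      have hqx := hq2 x
      have hxint : (∫ s in (0:ℝ)..(x:ℝ), (A s * q.1 (pr01 s) + B s * q.2 (pr01 s)))
          = c + gc x - q.2 x := by
        linarith [hq2 x]
      rw [hxint] at hx2
      show ((Dop ⟨θm, hθmem⟩ : C(Set.Icc (0:ℝ) 1, ℝ))) x = gc x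
      rw [hx2]
      show q.2 x - c + (c + gc x - q.2 x) = gc x
      ring
    refine ⟨((ContinuousLinearEquiv.ofBijective (𝕜 := ℝ) (𝕜' := ℝ) (E := C0) (F := C0) Dop hker hrange).symm : C0 →L[ℝ] C0), ?_, ?_⟩
    · apply ContinuousLinearMap.ext
      intro x
      simp only [ContinuousLinearMap.comp_apply, ContinuousLinearEquiv.coe_coe,
        ContinuousLinearMap.id_apply]
      exact ContinuousLinearEquiv.symm_apply_apply _ x
    · apply ContinuousLinearMap.ext
      intro x
      simp only [ContinuousLinearMap.comp_apply, ContinuousLinearEquiv.coe_coe,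
        ContinuousLinearMap.id_apply]
      exact ContinuousLinearEquiv.apply_symm_apply (ContinuousLinearEquiv.ofBijective (𝕜 := ℝ) (𝕜' := ℝ) (E := C0) (F := C0) Dop hker hrange) x
end

section
/- Let f : [0,1]×ℝ²→ℝ be continuous, let Γ ⊆ C₀, and let X : Γ → C¹₀ be a map such that for every ω ∈ Γ the function X(ω) satisfies X(ω)'(t) + ∫₀ᵗ f(s, X(ω)(s), X(ω)'(s)) ds = X(ω)'(0) + ω(t) for all t ∈ [0,1]. Define S : Γ → C₀ by S_t(ω) = ω(t) - ∫₀ᵗ f(s, X(ω)(s), X(ω)'(s)) ds. Then T(S(ω)) = ω for every ω ∈ Γ; in particular S is injective on Γ and T maps S(Γ) onto Γ. -/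
open MeasureTheory

/-- `T ∘ S = I` on `Γ`; in particular `S` is injective on `Γ` and
`T` maps `S(Γ)` onto `Γ`. -/
theorem stmt12 (f : ℝ → ℝ → ℝ → ℝ)
    (hf : ContinuousOn (fun p : ℝ × ℝ × ℝ => f p.1 p.2.1 p.2.2)
      (Set.Icc 0 1 ×ˢ (Set.univ : Set (ℝ × ℝ))))
    (Γ : Set C(Set.Icc (0:ℝ) 1, ℝ))
    (hΓ : ∀ ω ∈ Γ, ω ⟨0, by norm_num⟩ = 0)
    (X X' : C(Set.Icc (0:ℝ) 1, ℝ) → ℝ → ℝ)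
    (hX : ∀ ω ∈ Γ,
      (∀ t ∈ Set.Icc (0:ℝ) 1, HasDerivWithinAt (X ω) (X' ω t) (Set.Icc 0 1) t) ∧
      ContinuousOn (X' ω) (Set.Icc 0 1) ∧ X ω 0 = 0 ∧ X ω 1 = 0 ∧
      ∀ t ∈ Set.Icc (0:ℝ) 1,
        X' ω t + ∫ s in (0:ℝ)..t, f s (X ω s) (X' ω s) = X' ω 0 + ω (pr01 t))
    (S : C(Set.Icc (0:ℝ) 1, ℝ) → C(Set.Icc (0:ℝ) 1, ℝ))
    (hS : ∀ ω ∈ Γ, ∀ t : Set.Icc (0:ℝ) 1,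
      S ω t = ω t - ∫ s in (0:ℝ)..(t:ℝ), f s (X ω s) (X' ω s))
    (T : C(Set.Icc (0:ℝ) 1, ℝ) → C(Set.Icc (0:ℝ) 1, ℝ))
    (hT : ∀ ω : C(Set.Icc (0:ℝ) 1, ℝ), ∀ t : Set.Icc (0:ℝ) 1,
      T ω t = ω t + ∫ s in (0:ℝ)..(t:ℝ), f s (Yc ω s) (Yc' ω s)) :
    (∀ ω ∈ Γ, T (S ω) = ω) ∧ Set.InjOn S Γ ∧ Set.SurjOn T (S '' Γ) Γ := by

  have key : ∀ ω ∈ Γ, T (S ω) = ω := by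
    intro ω hω
    obtain ⟨hXd, hX'c, hX0, hX1, heq⟩ := hX ω hω
    set g : ℝ → ℝ := fun s => f s (X ω s) (X' ω s) with hg_def
    have hXc : ContinuousOn (X ω) (Set.Icc 0 1) := fun t ht =>
      (hXd t ht).continuousWithinAt
    have hgc : ContinuousOn g (Set.Icc 0 1) := by
      have hmap : ContinuousOn (fun s : ℝ => ((s, X ω s, X' ω s) : ℝ × ℝ × ℝ))
          (Set.Icc 0 1) := continuousOn_id.prodMk (hXc.prodMk hX'c)
      exact hf.comp hmap (fun s hs => ⟨hs, trivial⟩)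
    have hsub : ∀ t ∈ Set.Icc (0:ℝ) 1, Set.uIcc (0:ℝ) t ⊆ Set.Icc 0 1 := by
      intro t ht
      rw [Set.uIcc_of_le ht.1]
      exact Set.Icc_subset_Icc le_rfl ht.2
    have hgint : ∀ t ∈ Set.Icc (0:ℝ) 1, IntervalIntegrable g volume 0 t := fun t ht =>
      (hgc.mono (hsub t ht)).intervalIntegrable
    have hX'int : ∀ t ∈ Set.Icc (0:ℝ) 1, IntervalIntegrable (X' ω) volume 0 t :=
      fun t ht => (hX'c.mono (hsub t ht)).intervalIntegrable
    have hpr : ∀ s ∈ Set.Icc (0:ℝ) 1, ((pr01 s : Set.Icc (0:ℝ) 1) : ℝ) = s := by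
      intro s hs
      simp [pr01, Set.projIcc_of_mem zero_le_one hs]
    -- FTC for X
    have hFTC : ∀ t ∈ Set.Icc (0:ℝ) 1, (∫ s in (0:ℝ)..t, X' ω s) = X ω t := by
      intro t ht
      have h0t : Set.Icc (0:ℝ) t ⊆ Set.Icc 0 1 := Set.Icc_subset_Icc le_rfl ht.2
      have := intervalIntegral.integral_eq_sub_of_hasDeriv_right_of_le ht.1
        (hXc.mono h0t)
        (fun x hx => ((hXd x ⟨hx.1.le, (hx.2.trans_le ht.2).le⟩).hasDerivAt
          (Icc_mem_nhds hx.1 (hx.2.trans_le ht.2))).hasDerivWithinAt)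
        (hX'int t ht)
      rw [this, hX0, sub_zero]
    have hint1 : (∫ s in (0:ℝ)..1, X' ω s) = 0 := by
      rw [hFTC 1 ⟨zero_le_one, le_rfl⟩, hX1]
    -- rearranged ODE
    have h1 : ∀ t ∈ Set.Icc (0:ℝ) 1,
        ω (pr01 t) - (∫ s in (0:ℝ)..t, g s) = X' ω t - X' ω 0 := by
      intro t ht
      have := heq t ht
      linarith [this]
    -- value of S ω
    have hSval : ∀ s ∈ Set.Icc (0:ℝ) 1, S ω (pr01 s) = X' ω s - X' ω 0 := by
      intro s hs
      rw [hS ω hω (pr01 s), hpr s hs]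
      exact h1 s hs
    -- integral of S ω over [0,1]
    have hint0 : (∫ s in (0:ℝ)..1, (S ω) (pr01 s)) = -(X' ω 0) := by
      rw [intervalIntegral.integral_congr (g := fun s => X' ω s - X' ω 0)
        (by intro s hs; exact hSval s (hsub 1 ⟨zero_le_one, le_rfl⟩ hs))]
      rw [intervalIntegral.integral_sub (hX'int 1 ⟨zero_le_one, le_rfl⟩)
        intervalIntegrable_const, hint1, intervalIntegral.integral_const]
      simp
    have hYc' : ∀ t ∈ Set.Icc (0:ℝ) 1, Yc' (S ω) t = X' ω t := by
      intro t ht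
      rw [Yc', hint0, hSval t ht]
      ring
    have hYc : ∀ t ∈ Set.Icc (0:ℝ) 1, Yc (S ω) t = X ω t := by
      intro t ht
      rw [Yc, hint0]
      rw [intervalIntegral.integral_congr (g := fun s => X' ω s - X' ω 0)
        (by intro s hs; exact hSval s (hsub t ht hs))]
      rw [intervalIntegral.integral_sub (hX'int t ht) intervalIntegrable_const,
        hFTC t ht, intervalIntegral.integral_const]
      simp
    ext t
    rw [hT (S ω) t, hS ω hω t]
    have hcongr : (∫ s in (0:ℝ)..(t:ℝ), f s (Yc (S ω) s) (Yc' (S ω) s))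
        = ∫ s in (0:ℝ)..(t:ℝ), g s := by
      apply intervalIntegral.integral_congr
      intro s hs
      have hs' : s ∈ Set.Icc (0:ℝ) 1 := hsub (t:ℝ) t.2 hs
      show f s (Yc (S ω) s) (Yc' (S ω) s) = g s
      rw [hYc s hs', hYc' s hs']
    rw [hcongr]
    ring
  refine ⟨key, ?_, ?_⟩
  · intro ω1 h1 ω2 h2 he
    rw [← key ω1 h1, ← key ω2 h2, he]
  · intro ω hω
    exact ⟨S ω, ⟨ω, hω, rfl⟩, key ω hω⟩
end

section
/- Let f : [0,1]×ℝ²→ℝ be continuous, let Γ ⊆ C₀, and let X : Γ → C¹₀ be a map. Define S : Γ → C₀ by S_t(ω) = ω(t) - ∫₀ᵗ f(s, X(ω)(s), X(ω)'(s)) ds. Then X(ω) satisfies X(ω)'(t) + ∫₀ᵗ f(s, X(ω)(s), X(ω)'(s)) ds = X(ω)'(0) + ω(t) for all t ∈ [0,1] and all ω ∈ Γ if and only if X(ω)(t) = Y_t(S(ω)) for all t ∈ [0,1] and all ω ∈ Γ. -/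
open MeasureTheory

/-- `Y_t(ω) = -t ∫₀¹ ω(s) ds + ∫₀ᵗ ω(s) ds`. -/
noncomputable def Yw (ω : ℝ → ℝ) (t : ℝ) : ℝ :=
  -t * (∫ s in (0:ℝ)..1, ω s) + ∫ s in (0:ℝ)..t, ω s

/-- FTC-1 within `Icc 0 1`. -/
lemma ftc_icc {S : ℝ → ℝ} (hS : ContinuousOn S (Set.Icc 0 1)) {t : ℝ} (ht : t ∈ Set.Icc 0 1) :
    HasDerivWithinAt (fun u => ∫ s in (0:ℝ)..u, S s) (S t) (Set.Icc 0 1) t := by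
  haveI : Fact (t ∈ Set.Icc (0:ℝ) 1) := ⟨ht⟩
  exact intervalIntegral.integral_hasDerivWithinAt_right
    ((hS.mono (by rw [Set.uIcc_of_le ht.1]; exact Set.Icc_subset_Icc le_rfl ht.2)).intervalIntegrable)
    (hS.stronglyMeasurableAtFilter_nhdsWithin measurableSet_Icc t)
    (hS t ht)

lemma intervalIntegrable_of_contOn {S : ℝ → ℝ} (hS : ContinuousOn S (Set.Icc 0 1)) {t : ℝ}
    (ht : t ∈ Set.Icc (0:ℝ) 1) : IntervalIntegrable S volume 0 t :=
  (hS.mono (by rw [Set.uIcc_of_le ht.1]; exact Set.Icc_subset_Icc le_rfl ht.2)).intervalIntegrable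

/-- `X(ω)` solves the integral equation for every `ω ∈ Γ` if and only if
`X(ω) = Y(S(ω))` on `[0,1]` for every `ω ∈ Γ`, where
`S_t(ω) = ω(t) - ∫₀ᵗ f(s, X(ω)(s), X(ω)'(s)) ds`. -/
theorem stmt13 (f : ℝ → ℝ → ℝ → ℝ)
    (hf : ContinuousOn (fun p : ℝ × ℝ × ℝ => f p.1 p.2.1 p.2.2)
      (Set.Icc 0 1 ×ˢ (Set.univ : Set (ℝ × ℝ))))
    (Γ : Set (ℝ → ℝ))
    (hΓ : ∀ ω ∈ Γ, ContinuousOn ω (Set.Icc 0 1) ∧ ω 0 = 0)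
    (X X' : (ℝ → ℝ) → ℝ → ℝ)
    (hX : ∀ ω ∈ Γ,
      (∀ t ∈ Set.Icc (0:ℝ) 1, HasDerivWithinAt (X ω) (X' ω t) (Set.Icc 0 1) t) ∧
      ContinuousOn (X' ω) (Set.Icc 0 1) ∧ X ω 0 = 0 ∧ X ω 1 = 0) :
    (∀ ω ∈ Γ, ∀ t ∈ Set.Icc (0:ℝ) 1,
        X' ω t + ∫ s in (0:ℝ)..t, f s (X ω s) (X' ω s) = X' ω 0 + ω t)
    ↔ (∀ ω ∈ Γ, ∀ t ∈ Set.Icc (0:ℝ) 1,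
        X ω t = Yw (fun τ => ω τ - ∫ s in (0:ℝ)..τ, f s (X ω s) (X' ω s)) t) := by
  have key : ∀ ω ∈ Γ,
      ((∀ t ∈ Set.Icc (0:ℝ) 1,
        X' ω t + ∫ s in (0:ℝ)..t, f s (X ω s) (X' ω s) = X' ω 0 + ω t)
      ↔ (∀ t ∈ Set.Icc (0:ℝ) 1,
        X ω t = Yw (fun τ => ω τ - ∫ s in (0:ℝ)..τ, f s (X ω s) (X' ω s)) t)) := by
    intro ω hω
    obtain ⟨hωc, hω0⟩ := hΓ ω hω
    obtain ⟨hXd, hX'c, hX0, hX1⟩ := hX ω hω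
    set g : ℝ → ℝ := fun s => f s (X ω s) (X' ω s) with hgdef
    have hXc : ContinuousOn (X ω) (Set.Icc 0 1) :=
      fun t ht => (hXd t ht).continuousWithinAt
    have hg : ContinuousOn g (Set.Icc 0 1) := by
      have hc : ContinuousOn (fun s : ℝ => (s, X ω s, X' ω s)) (Set.Icc 0 1) :=
        continuousOn_id.prodMk (hXc.prodMk hX'c)
      exact hf.comp hc (fun s hs => ⟨hs, trivial⟩)
    set S : ℝ → ℝ := fun τ => ω τ - ∫ s in (0:ℝ)..τ, g s with hSdef
    have hS : ContinuousOn S (Set.Icc 0 1) :=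
      hωc.sub (fun t ht => (ftc_icc hg ht).continuousWithinAt)
    have hS0 : S 0 = 0 := by simp [hSdef, hω0]
    set I : ℝ := ∫ s in (0:ℝ)..1, S s with hIdef
    constructor
    · intro heq
      -- X' t = X' 0 + S t on [0,1]
      have hX'eq : ∀ t ∈ Set.Icc (0:ℝ) 1, X' ω t = X' ω 0 + S t := by
        intro t ht
        have := heq t ht
        simp only [hSdef]; linarith
      -- ∫₀ᵗ X' = X t
      have hint : ∀ t ∈ Set.Icc (0:ℝ) 1, (∫ s in (0:ℝ)..t, X' ω s) = X ω t := by
        intro t ht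
        have := intervalIntegral.integral_eq_sub_of_hasDeriv_right_of_le ht.1
          (hXc.mono (Set.Icc_subset_Icc le_rfl ht.2))
          (fun x hx => ((hXd x ⟨le_of_lt hx.1, le_of_lt (lt_of_lt_of_le hx.2 ht.2)⟩).hasDerivAt
            (Icc_mem_nhds (lt_of_lt_of_le hx.1 (le_of_lt (lt_of_lt_of_le hx.2 ht.2)) |> fun _ => hx.1)
              (lt_of_lt_of_le hx.2 ht.2))).hasDerivWithinAt)
          (intervalIntegrable_of_contOn hX'c ht)
        rw [this, hX0, sub_zero]
      -- value of the integral of X'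
      have hval : ∀ t ∈ Set.Icc (0:ℝ) 1, X ω t = X' ω 0 * t + ∫ s in (0:ℝ)..t, S s := by
        intro t ht
        rw [← hint t ht]
        rw [intervalIntegral.integral_congr (g := fun s => X' ω 0 + S s)
          (fun s hs => hX'eq s (by
            rw [Set.uIcc_of_le ht.1] at hs
            exact ⟨hs.1, le_trans hs.2 ht.2⟩))]
        rw [intervalIntegral.integral_add intervalIntegrable_const
          (intervalIntegrable_of_contOn hS ht), intervalIntegral.integral_const]
        simp [mul_comm]
      have h1 : X' ω 0 = -I := by
        have := hval 1 ⟨zero_le_one, le_rfl⟩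
        rw [hX1] at this
        simp only [mul_one, hIdef] at this ⊢
        linarith
      intro t ht
      rw [hval t ht, h1]
      simp only [Yw, hSdef, hIdef]
      ring
    · intro heq t ht
      -- derivative of Yw S within Icc
      have hYd : HasDerivWithinAt (Yw S) (-I + S t) (Set.Icc 0 1) t := by
        have h1 : HasDerivWithinAt (fun u => -u * I) (-I) (Set.Icc 0 1) t := by
          simpa using (((hasDerivWithinAt_id t (Set.Icc 0 1)).neg).mul_const I)
        exact h1.add (ftc_icc hS ht)
      have hXd' : HasDerivWithinAt (X ω) (-I + S t) (Set.Icc 0 1) t :=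
        hYd.congr (fun u hu => heq u hu) (heq t ht)
      have hud := uniqueDiffOn_Icc (one_pos : (0:ℝ) < 1) t ht
      have hX't : X' ω t = -I + S t := by
        rw [← (hXd t ht).derivWithin hud, hXd'.derivWithin hud]
      have hX'0 : X' ω 0 = -I := by
        have h0 : (0:ℝ) ∈ Set.Icc (0:ℝ) 1 := ⟨le_rfl, zero_le_one⟩
        have hYd0 : HasDerivWithinAt (Yw S) (-I + S 0) (Set.Icc 0 1) 0 := by
          have h1 : HasDerivWithinAt (fun u => -u * I) (-I) (Set.Icc 0 1) 0 := by
            simpa using (((hasDerivWithinAt_id (0:ℝ) (Set.Icc 0 1)).neg).mul_const I)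
          exact h1.add (ftc_icc hS h0)
        have hXd'0 : HasDerivWithinAt (X ω) (-I + S 0) (Set.Icc 0 1) 0 :=
          hYd0.congr (fun u hu => heq u hu) (heq 0 h0)
        have hud0 := uniqueDiffOn_Icc (one_pos : (0:ℝ) < 1) 0 h0
        rw [← (hXd 0 h0).derivWithin hud0, hXd'0.derivWithin hud0, hS0, add_zero]
      rw [hX't, hX'0]
      simp only [hSdef]
      ring
  constructor
  · intro h ω hω; exact (key ω hω).mp (h ω hω)
  · intro h ω hω; exact (key ω hω).mpr (h ω hω)
end

section
/- Assume f : [0,1]×ℝ²→ℝ is continuous and bounded and its first and second partial derivatives f_x, f_y, f_xx, f_xy, f_yy with respect to the second and third variables exist and are continuous and bounded. Fix ω ∈ C₀ and h ∈ L²(0,1), and set h̃(t) = ∫₀ᵗ h(s) ds. Then, with convergence in L²(0,1), lim_{r→0} (1/r)·[ f(·, Y_·(ω + r h̃), Y'_·(ω + r h̃)) - f(·, Y_·(ω), Y'_·(ω)) ] = f_x(·, Y_·(ω), Y'_·(ω))·Y_·(h̃) + f_y(·, Y_·(ω), Y'_·(ω))·Y'_·(h̃). -/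
open MeasureTheory Filter

/-- `Y'_t(ω) = -∫₀¹ ω(s) ds + ω(t)`. -/
noncomputable def Yw' (ω : ℝ → ℝ) (t : ℝ) : ℝ :=
  -(∫ s in (0:ℝ)..1, ω s) + ω t

lemma my_lip {g g' : ℝ → ℝ} {M : ℝ} (hd : ∀ x, HasDerivAt g (g' x) x)
    (hb : ∀ x, |g' x| ≤ M) (a b : ℝ) : |g b - g a| ≤ M * |b - a| := by
  have := convex_univ.norm_image_sub_le_of_norm_hasDerivWithin_le
    (f := g) (f' := g') (fun x _ => (hd x).hasDerivWithinAt)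
    (fun x _ => by simpa [Real.norm_eq_abs] using hb x) (Set.mem_univ a) (Set.mem_univ b)
  simpa [Real.norm_eq_abs] using this

lemma my_rem {g g' : ℝ → ℝ} {M : ℝ} (hd : ∀ x, HasDerivAt g (g' x) x)
    (hlip : ∀ x y, |g' x - g' y| ≤ M * |x - y|) (a b : ℝ) :
    |g b - g a - g' a * (b - a)| ≤ M * (b - a) ^ 2 := by
  have hM : 0 ≤ M := by
    have h1 := hlip (a + 1) a
    have h2 := abs_nonneg (g' (a + 1) - g' a)
    simp at h1
    linarith
  have hmem : ∀ z ∈ Set.uIcc a b, |z - a| ≤ |b - a| := by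
    intro z hz
    rw [Set.mem_uIcc] at hz
    rw [abs_sub_le_iff]
    rcases hz with ⟨h1, h2⟩ | ⟨h1, h2⟩ <;>
      constructor <;> [skip; skip; skip; skip] <;>
      cases' abs_cases (b - a) with hc hc <;> linarith [hc.1]
  have hdφ : ∀ z, HasDerivAt (fun z => g z - g' a * z) (g' z - g' a) z := by
    intro z
    have : HasDerivAt (fun z : ℝ => g' a * z) (g' a) z := by
      simpa using (hasDerivAt_id z).const_mul (g' a)
    exact (hd z).sub this
  have key := (convex_uIcc a b).norm_image_sub_le_of_norm_hasDerivWithin_le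
    (f := fun z => g z - g' a * z) (f' := fun z => g' z - g' a)
    (fun z _ => (hdφ z).hasDerivWithinAt)
    (fun z hz => by
      rw [Real.norm_eq_abs]
      calc |g' z - g' a| ≤ M * |z - a| := hlip z a
        _ ≤ M * |b - a| := by
            have := hmem z hz
            nlinarith)
    (Set.left_mem_uIcc) (Set.right_mem_uIcc)
  rw [Real.norm_eq_abs, Real.norm_eq_abs] at key
  have e : g b - g' a * b - (g a - g' a * a) = g b - g a - g' a * (b - a) := by ring
  rw [e] at key
  calc |g b - g a - g' a * (b - a)| ≤ M * |b - a| * |b - a| := key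
    _ = M * (b - a) ^ 2 := by rw [mul_assoc, ← abs_mul, ← sq, abs_of_nonneg (sq_nonneg _)]

lemma my_taylor2 (F Fx Fy Fxx Fxy Fyy : ℝ → ℝ → ℝ) (M : ℝ)
    (hdx : ∀ x y, HasDerivAt (fun z => F z y) (Fx x y) x)
    (hdy : ∀ x y, HasDerivAt (fun z => F x z) (Fy x y) y)
    (hdxx : ∀ x y, HasDerivAt (fun z => Fx z y) (Fxx x y) x)
    (hdxy : ∀ x y, HasDerivAt (fun z => Fx x z) (Fxy x y) y)
    (hdyy : ∀ x y, HasDerivAt (fun z => Fy x z) (Fyy x y) y)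
    (hbxx : ∀ x y, |Fxx x y| ≤ M) (hbxy : ∀ x y, |Fxy x y| ≤ M)
    (hbyy : ∀ x y, |Fyy x y| ≤ M) (x y u v : ℝ) :
    |F (x + u) (y + v) - F x y - Fx x y * u - Fy x y * v| ≤ M * (|u| + |v|) ^ 2 := by
  have hM : 0 ≤ M := (abs_nonneg _).trans (hbxx x y)
  -- E1
  have hE1 : |F (x + u) (y + v) - F x (y + v) - Fx x (y + v) * u| ≤ M * u ^ 2 := by
    have := my_rem (g := fun z => F z (y + v)) (g' := fun z => Fx z (y + v))
      (fun z => hdx z (y + v))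
      (fun z w => my_lip (fun p => hdxx p (y + v)) (fun p => hbxx p (y + v)) w z) x (x + u)
    simpa using this
  have hE2 : |Fx x (y + v) - Fx x y| ≤ M * |v| := by
    have := my_lip (g := fun z => Fx x z) (g' := fun z => Fxy x z)
      (fun z => hdxy x z) (fun z => hbxy x z) y (y + v)
    simpa using this
  have hE3 : |F x (y + v) - F x y - Fy x y * v| ≤ M * v ^ 2 := by
    have := my_rem (g := fun z => F x z) (g' := fun z => Fy x z)
      (fun z => hdy x z)
      (fun z w => my_lip (fun p => hdyy x p) (fun p => hbyy x p) w z) y (y + v)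
    simpa using this
  have habs : |F (x + u) (y + v) - F x y - Fx x y * u - Fy x y * v| ≤
      M * u ^ 2 + M * |v| * |u| + M * v ^ 2 := by
    have e : F (x + u) (y + v) - F x y - Fx x y * u - Fy x y * v =
        (F (x + u) (y + v) - F x (y + v) - Fx x (y + v) * u)
        + (Fx x (y + v) - Fx x y) * u
        + (F x (y + v) - F x y - Fy x y * v) := by ring
    rw [e]
    calc _ ≤ |(F (x + u) (y + v) - F x (y + v) - Fx x (y + v) * u)
        + (Fx x (y + v) - Fx x y) * u| + |F x (y + v) - F x y - Fy x y * v| := abs_add_le _ _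
      _ ≤ |F (x + u) (y + v) - F x (y + v) - Fx x (y + v) * u|
          + |(Fx x (y + v) - Fx x y) * u| + |F x (y + v) - F x y - Fy x y * v| := by
            gcongr; exact abs_add_le _ _
      _ ≤ M * u ^ 2 + M * |v| * |u| + M * v ^ 2 := by
            rw [abs_mul]
            gcongr
  have h1 : (0:ℝ) ≤ |u| := abs_nonneg u
  have h2 : (0:ℝ) ≤ |v| := abs_nonneg v
  have h3 : |u| ^ 2 = u ^ 2 := sq_abs u
  have h4 : |v| ^ 2 = v ^ 2 := sq_abs v
  have h5 : (0:ℝ) ≤ |u| * |v| := mul_nonneg h1 h2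
  calc _ ≤ M * u ^ 2 + M * |v| * |u| + M * v ^ 2 := habs
    _ ≤ M * (|u| + |v|) ^ 2 := by nlinarith

/-- the difference quotient of `f(·, Y(ω + r h̃), Y'(ω + r h̃))` converges
in `L²(0,1)`, as `r → 0`, to `f_x(·,Y(ω),Y'(ω))·Y(h̃) + f_y(·,Y(ω),Y'(ω))·Y'(h̃)`. -/
theorem stmt14 (f fx fy fxx fxy fyy : ℝ → ℝ → ℝ → ℝ)
    (hf : ContBdd3 f) (hfx : ContBdd3 fx) (hfy : ContBdd3 fy)
    (hfxx : ContBdd3 fxx) (hfxy : ContBdd3 fxy) (hfyy : ContBdd3 fyy)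
    (hdx : ∀ t x y : ℝ, HasDerivAt (fun z => f t z y) (fx t x y) x)
    (hdy : ∀ t x y : ℝ, HasDerivAt (fun z => f t x z) (fy t x y) y)
    (hdxx : ∀ t x y : ℝ, HasDerivAt (fun z => fx t z y) (fxx t x y) x)
    (hdxy : ∀ t x y : ℝ, HasDerivAt (fun z => fx t x z) (fxy t x y) y)
    (hdyy : ∀ t x y : ℝ, HasDerivAt (fun z => fy t x z) (fyy t x y) y)
    (ω : ℝ → ℝ) (hω : ContinuousOn ω (Set.Icc 0 1)) (hω0 : ω 0 = 0)
    (h : ℝ → ℝ) (hh : MemLp h 2 (volume.restrict (Set.Ioo (0:ℝ) 1))) :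
    Tendsto (fun r : ℝ =>
      ∫ t in Set.Ioo (0:ℝ) 1,
        ((f t (Yw (fun τ => ω τ + r * ∫ s in (0:ℝ)..τ, h s) t)
              (Yw' (fun τ => ω τ + r * ∫ s in (0:ℝ)..τ, h s) t)
            - f t (Yw ω t) (Yw' ω t)) / r
          - (fx t (Yw ω t) (Yw' ω t) * Yw (fun τ => ∫ s in (0:ℝ)..τ, h s) t
            + fy t (Yw ω t) (Yw' ω t) * Yw' (fun τ => ∫ s in (0:ℝ)..τ, h s) t)) ^ 2)
      (nhdsWithin (0:ℝ) {(0:ℝ)}ᶜ) (nhds (0:ℝ)) := by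
  obtain ⟨Cxx, hCxx⟩ := hfxx.2
  obtain ⟨Cxy, hCxy⟩ := hfxy.2
  obtain ⟨Cyy, hCyy⟩ := hfyy.2
  set M : ℝ := max Cxx (max Cxy Cyy) with hMdef
  -- h is integrable on [0,1]
  haveI : IsFiniteMeasure (volume.restrict (Set.Ioo (0:ℝ) 1)) :=
    ⟨by rw [Measure.restrict_apply_univ]; simp⟩
  have hint : IntegrableOn h (Set.Icc (0:ℝ) 1) volume := by
    rw [integrableOn_Icc_iff_integrableOn_Ioo]
    exact hh.integrable (by norm_num)
  -- the primitive of h is continuous on [0,1]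
  have hht : ContinuousOn (fun τ => ∫ s in (0:ℝ)..τ, h s) (Set.Icc 0 1) := by
    have := intervalIntegral.continuousOn_primitive_interval (a := (0:ℝ)) (b := 1)
      (μ := volume) (f := h) (by rwa [Set.uIcc_of_le zero_le_one])
    rwa [Set.uIcc_of_le zero_le_one] at this
  -- A and B are continuous on [0,1], hence bounded
  have hihti1 : IntervalIntegrable (fun τ => ∫ s in (0:ℝ)..τ, h s) volume 0 1 :=
    (by rw [Set.uIcc_of_le zero_le_one]; exact hht :
      ContinuousOn (fun τ => ∫ s in (0:ℝ)..τ, h s) (Set.uIcc 0 1)).intervalIntegrable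
  have hiω1 : IntervalIntegrable ω volume 0 1 :=
    (by rw [Set.uIcc_of_le zero_le_one]; exact hω :
      ContinuousOn ω (Set.uIcc 0 1)).intervalIntegrable
  have hA : ContinuousOn (fun t => Yw (fun τ => ∫ s in (0:ℝ)..τ, h s) t) (Set.Icc 0 1) := by
    unfold Yw
    apply ContinuousOn.add
    · exact (continuous_id.neg.mul continuous_const).continuousOn
    · have := intervalIntegral.continuousOn_primitive_interval (a := (0:ℝ)) (b := 1)
        (μ := volume) (f := fun τ => ∫ s in (0:ℝ)..τ, h s)
        (by rw [Set.uIcc_of_le zero_le_one]; exact hht.integrableOn_Icc)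
      rwa [Set.uIcc_of_le zero_le_one] at this
  have hB : ContinuousOn (fun t => Yw' (fun τ => ∫ s in (0:ℝ)..τ, h s) t) (Set.Icc 0 1) := by
    unfold Yw'
    exact continuousOn_const.add hht
  obtain ⟨CA, hCA⟩ := isCompact_Icc.exists_bound_of_continuousOn hA
  obtain ⟨CB, hCB⟩ := isCompact_Icc.exists_bound_of_continuousOn hB
  have hCA0 : 0 ≤ CA := le_trans (norm_nonneg _) (hCA 0 (by norm_num))
  have hCB0 : 0 ≤ CB := le_trans (norm_nonneg _) (hCB 0 (by norm_num))
  set K : ℝ := (M * (CA + CB) ^ 2) ^ 2 with hKdef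
  -- the key pointwise / integral bound
  have key : ∀ r : ℝ, r ≠ 0 →
      (∫ t in Set.Ioo (0:ℝ) 1,
        ((f t (Yw (fun τ => ω τ + r * ∫ s in (0:ℝ)..τ, h s) t)
              (Yw' (fun τ => ω τ + r * ∫ s in (0:ℝ)..τ, h s) t)
            - f t (Yw ω t) (Yw' ω t)) / r
          - (fx t (Yw ω t) (Yw' ω t) * Yw (fun τ => ∫ s in (0:ℝ)..τ, h s) t
            + fy t (Yw ω t) (Yw' ω t) * Yw' (fun τ => ∫ s in (0:ℝ)..τ, h s) t)) ^ 2)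
      ≤ K * r ^ 2 := by
    intro r hr
    have hb : ∀ t ∈ Set.Ioo (0:ℝ) 1,
        ‖((f t (Yw (fun τ => ω τ + r * ∫ s in (0:ℝ)..τ, h s) t)
              (Yw' (fun τ => ω τ + r * ∫ s in (0:ℝ)..τ, h s) t)
            - f t (Yw ω t) (Yw' ω t)) / r
          - (fx t (Yw ω t) (Yw' ω t) * Yw (fun τ => ∫ s in (0:ℝ)..τ, h s) t
            + fy t (Yw ω t) (Yw' ω t) * Yw' (fun τ => ∫ s in (0:ℝ)..τ, h s) t)) ^ 2‖
        ≤ K * r ^ 2 := by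
      intro t ht
      have htI : t ∈ Set.Icc (0:ℝ) 1 := Set.Ioo_subset_Icc_self ht
      have hsub : Set.uIcc (0:ℝ) t ⊆ Set.Icc 0 1 := by
        rw [Set.uIcc_of_le htI.1]
        exact Set.Icc_subset_Icc le_rfl htI.2
      have hiωt : IntervalIntegrable ω volume 0 t := (hω.mono hsub).intervalIntegrable
      have hihtt : IntervalIntegrable (fun τ => ∫ s in (0:ℝ)..τ, h s) volume 0 t :=
        (hht.mono hsub).intervalIntegrable
      set X := Yw ω t with hX
      set Z := Yw' ω t with hZ
      set A := Yw (fun τ => ∫ s in (0:ℝ)..τ, h s) t with hA'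
      set B := Yw' (fun τ => ∫ s in (0:ℝ)..τ, h s) t with hB'
      have e1 : Yw (fun τ => ω τ + r * ∫ s in (0:ℝ)..τ, h s) t = X + r * A := by
        rw [hX, hA']
        unfold Yw
        rw [intervalIntegral.integral_add hiω1 (hihti1.const_mul r),
            intervalIntegral.integral_add hiωt (hihtt.const_mul r),
            intervalIntegral.integral_const_mul, intervalIntegral.integral_const_mul]
        ring
      have e2 : Yw' (fun τ => ω τ + r * ∫ s in (0:ℝ)..τ, h s) t = Z + r * B := by
        rw [hZ, hB']
        unfold Yw'
        rw [intervalIntegral.integral_add hiω1 (hihti1.const_mul r),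
            intervalIntegral.integral_const_mul]
        ring
      rw [e1, e2]
      -- Taylor estimate
      have hMxx : ∀ x y : ℝ, |fxx t x y| ≤ M := fun x y =>
        le_trans (hCxx t htI x y) (le_max_left _ _)
      have hMxy : ∀ x y : ℝ, |fxy t x y| ≤ M := fun x y =>
        le_trans (hCxy t htI x y) (le_trans (le_max_left _ _) (le_max_right _ _))
      have hMyy : ∀ x y : ℝ, |fyy t x y| ≤ M := fun x y =>
        le_trans (hCyy t htI x y) (le_trans (le_max_right _ _) (le_max_right _ _))
      have hM0 : 0 ≤ M := le_trans (abs_nonneg _) (hMxx 0 0)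
      have htaylor := my_taylor2 (f t) (fx t) (fy t) (fxx t) (fxy t) (fyy t) M
        (hdx t) (hdy t) (hdxx t) (hdxy t) (hdyy t) hMxx hMxy hMyy X Z (r * A) (r * B)
      set d : ℝ := (f t (X + r * A) (Z + r * B) - f t X Z) / r - (fx t X Z * A + fy t X Z * B)
        with hd'
      have hdnum : d = (f t (X + r * A) (Z + r * B) - f t X Z - fx t X Z * (r * A)
          - fy t X Z * (r * B)) / r := by
        rw [hd']
        field_simp
        ring
      have habsd : |d| ≤ M * |r| * (|A| + |B|) ^ 2 := by
        rw [hdnum, abs_div, div_le_iff₀ (abs_pos.2 hr)]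
        calc |f t (X + r * A) (Z + r * B) - f t X Z - fx t X Z * (r * A) - fy t X Z * (r * B)|
            ≤ M * (|r * A| + |r * B|) ^ 2 := htaylor
          _ = M * |r| * (|A| + |B|) ^ 2 * |r| := by rw [abs_mul, abs_mul]; ring
      have hAb : |A| ≤ CA := by
        have := hCA t htI
        rwa [Real.norm_eq_abs] at this
      have hBb : |B| ≤ CB := by
        have := hCB t htI
        rwa [Real.norm_eq_abs] at this
      have habsd2 : |d| ≤ M * (CA + CB) ^ 2 * |r| := by
        calc |d| ≤ M * |r| * (|A| + |B|) ^ 2 := habsd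
          _ ≤ M * |r| * (CA + CB) ^ 2 :=
              mul_le_mul_of_nonneg_left
                (pow_le_pow_left₀ (by positivity) (add_le_add hAb hBb) 2)
                (by positivity)
          _ = M * (CA + CB) ^ 2 * |r| := by ring
      rw [Real.norm_eq_abs, abs_of_nonneg (sq_nonneg _)]
      calc d ^ 2 = |d| ^ 2 := (sq_abs d).symm
        _ ≤ (M * (CA + CB) ^ 2 * |r|) ^ 2 := by
            apply pow_le_pow_left₀ (abs_nonneg d) habsd2
        _ = K * r ^ 2 := by rw [hKdef, mul_pow, mul_pow, sq_abs]
    calc _ ≤ ‖∫ t in Set.Ioo (0:ℝ) 1,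
        ((f t (Yw (fun τ => ω τ + r * ∫ s in (0:ℝ)..τ, h s) t)
              (Yw' (fun τ => ω τ + r * ∫ s in (0:ℝ)..τ, h s) t)
            - f t (Yw ω t) (Yw' ω t)) / r
          - (fx t (Yw ω t) (Yw' ω t) * Yw (fun τ => ∫ s in (0:ℝ)..τ, h s) t
            + fy t (Yw ω t) (Yw' ω t) * Yw' (fun τ => ∫ s in (0:ℝ)..τ, h s) t)) ^ 2‖ :=
        le_abs_self _
      _ ≤ (K * r ^ 2) * (volume (Set.Ioo (0:ℝ) 1)).toReal := by
          apply norm_setIntegral_le_of_norm_le_const_ae' (by simp)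
          exact Eventually.of_forall hb
      _ = K * r ^ 2 := by simp
  -- squeeze
  apply squeeze_zero'
  · exact Eventually.of_forall fun r => integral_nonneg fun t => sq_nonneg _
  · filter_upwards [self_mem_nhdsWithin] with r hr
    exact key r hr
  · have hcont : Continuous fun r : ℝ => K * r ^ 2 := by continuity
    have := hcont.tendsto' 0 0 (by norm_num)
    exact this.mono_left nhdsWithin_le_nhds
end

section
/- Let f : ℝ → ℝ be continuous and bounded. Then for every ω ∈ C₀ there exists a continuous function X : [0,1] → ℝ satisfying X(t) = ∫₀¹ K(t,s) f(X(s)) ds + Y_t(ω) for all t ∈ [0,1] (in particular X(0) = X(1) = 0). -/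
open MeasureTheory

/-- The Green's function of `-d²/dt²` with Dirichlet boundary conditions. -/
noncomputable def Kgreen (t s : ℝ) : ℝ := min t s - t * s

section Aux
open Set Filter BoundedContinuousFunction intervalIntegral

open scoped NNReal

/-- projection of `ℝ` onto `[0,1]`. -/
noncomputable def pj : ℝ → (Set.Icc (0:ℝ) 1) := Set.projIcc 0 1 zero_le_one

lemma pj_cont : Continuous pj := continuous_projIcc

lemma pj_val {s : ℝ} (hs : s ∈ Set.Icc (0:ℝ) 1) : ((pj s : ℝ)) = s := by
  rw [pj, Set.projIcc_of_mem _ hs]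

/-- The space of bounded continuous functions on `[0,1]`. -/
abbrev EE := Set.Icc (0:ℝ) 1 →ᵇ ℝ

lemma min_sub_min_le_abs (a b c : ℝ) : |min a c - min b c| ≤ |a - b| := by
  have aux : ∀ p q : ℝ, min p c - min q c ≤ |p - q| := by
    intro p q
    rcases le_total q c with h | h
    · rw [min_eq_left h]
      have := min_le_left p c
      have := le_abs_self (p - q)
      linarith
    · rw [min_eq_right h]
      have := min_le_right p c
      have := abs_nonneg (p - q)
      linarith
  rw [abs_sub_le_iff]
  exact ⟨aux a b, by rw [abs_sub_comm]; exact aux b a⟩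

lemma int_abs_le {h b : ℝ → ℝ} (hh : Continuous h) (hb : Continuous b) {t : ℝ} (ht : 0 ≤ t)
    (hle : ∀ s ∈ Set.Icc 0 t, |h s| ≤ b s) :
    |∫ s in (0:ℝ)..t, h s| ≤ ∫ s in (0:ℝ)..t, b s :=
  (intervalIntegral.abs_integral_le_integral_abs ht).trans
    (intervalIntegral.integral_mono_on ht (hh.abs.intervalIntegrable _ _)
      (hb.intervalIntegrable _ _) hle)

/-- The Green identity. -/
lemma green_id {u : ℝ → ℝ} (hu : Continuous u) {t : ℝ} (ht : t ∈ Set.Icc (0:ℝ) 1) :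
    ∫ s in (0:ℝ)..1, Kgreen t s * u s
      = t * (∫ s in (0:ℝ)..1, (1 - s) * u s) - ∫ s in (0:ℝ)..t, (t - s) * u s := by
  obtain ⟨ht0, ht1⟩ := ht
  have hK : Continuous fun s => Kgreen t s * u s := by
    unfold Kgreen
    exact ((continuous_const.min continuous_id).sub (continuous_const.mul continuous_id)).mul hu
  have h1 : Continuous fun s : ℝ => (1 - s) * u s :=
    (continuous_const.sub continuous_id).mul hu
  rw [← intervalIntegral.integral_add_adjacent_intervals (hK.intervalIntegrable 0 t)
      (hK.intervalIntegrable t 1),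
    ← intervalIntegral.integral_add_adjacent_intervals (h1.intervalIntegrable 0 t)
      (h1.intervalIntegrable t 1)]
  have e1 : ∫ s in (0:ℝ)..t, Kgreen t s * u s
      = (∫ s in (0:ℝ)..t, (1 - s) * u s) * t - ∫ s in (0:ℝ)..t, (t - s) * u s := by
    rw [← intervalIntegral.integral_mul_const,
      ← intervalIntegral.integral_sub (f := fun s => (1 - s) * u s * t) (g := fun s => (t - s) * u s)
        ((h1.mul continuous_const).intervalIntegrable _ _)
        (((continuous_const.sub continuous_id').mul hu).intervalIntegrable _ _)]
    apply intervalIntegral.integral_congr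
    intro s hs
    rw [Set.uIcc_of_le ht0] at hs
    show (min t s - t * s) * u s = _
    rw [min_eq_right hs.2]
    ring
  have e2 : ∫ s in t..1, Kgreen t s * u s = (∫ s in t..1, (1 - s) * u s) * t := by
    rw [← intervalIntegral.integral_mul_const]
    apply intervalIntegral.integral_congr
    intro s hs
    rw [Set.uIcc_of_le ht1] at hs
    show (min t s - t * s) * u s = _
    rw [min_eq_left hs.1]
    ring
  rw [e1, e2]
  ring

noncomputable def Wint (h : ℝ → ℝ) (r : ℝ) : ℝ :=
  r * (∫ s in (0:ℝ)..r, h s) - ∫ s in (0:ℝ)..r, s * h s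

lemma Wint_cont {h : ℝ → ℝ} (hh : Continuous h) : Continuous (Wint h) := by
  unfold Wint
  exact (continuous_id.mul (intervalIntegral.continuous_primitive
      (fun a b => hh.intervalIntegrable a b) 0)).sub
    (intervalIntegral.continuous_primitive (fun a b => (continuous_id.mul hh).intervalIntegrable a b) 0)

lemma Wint_eq {h : ℝ → ℝ} (hh : Continuous h) (r : ℝ) :
    Wint h r = ∫ s in (0:ℝ)..r, (r - s) * h s := by
  unfold Wint
  rw [← intervalIntegral.integral_const_mul,
    ← intervalIntegral.integral_sub (f := fun s => r * h s) (g := fun s => s * h s)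
      ((continuous_const.mul hh).intervalIntegrable _ _)
      ((continuous_id'.mul hh).intervalIntegrable _ _)]
  apply intervalIntegral.integral_congr
  intro s _
  simp only [id_eq]
  ring

/-- Existence of a solution for Lipschitz nonlinearity. -/
lemma exists_sol_lip (g : ℝ → ℝ) (L : ℝ≥0) (hlip : LipschitzWith L g) (B : ℝ)
    (hB : ∀ y, |g y| ≤ B) (Z : ℝ → ℝ) (hZ : Continuous Z) (hZ1 : Z 1 = 0) :
    ∃ x : EE, ∀ t : Set.Icc (0:ℝ) 1,
      x t = (∫ s in (0:ℝ)..1, Kgreen (t:ℝ) s * g (x (pj s))) + Z t := by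
  have hg : Continuous g := hlip.continuous
  have hB0 : 0 ≤ B := le_trans (abs_nonneg _) (hB 0)
  have hcomp : ∀ x : EE, Continuous fun s : ℝ => g (x (pj s)) :=
    fun x => hg.comp (x.continuous.comp pj_cont)
  have hc2 : ∀ (r : ℝ) (x : EE), Continuous fun s : ℝ => (r - s) * g (x (pj s)) :=
    fun r x => (continuous_const.sub continuous_id').mul (hcomp x)
  set S : ℝ → EE → EE := fun a x => BoundedContinuousFunction.mkOfCompact
    ⟨fun t => a * t + Z t - Wint (fun s => g (x (pj s))) t,
     ((continuous_const.mul continuous_subtype_val).add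
        (hZ.comp continuous_subtype_val)).sub
        ((Wint_cont (hg.comp ((x.continuous.comp pj_cont)))).comp continuous_subtype_val)⟩
    with hS
  have Sapp : ∀ (a : ℝ) (x : EE) (t : Set.Icc (0:ℝ) 1),
      S a x t = a * t + Z t - ∫ s in (0:ℝ)..(t:ℝ), ((t:ℝ) - s) * g (x (pj s)) := by
    intro a x t
    show a * t + Z t - Wint _ t = _
    rw [Wint_eq (hcomp x)]
  -- pointwise iterate estimate
  have key : ∀ (a : ℝ) (n : ℕ), ∀ x y : EE, ∀ t : Set.Icc (0:ℝ) 1,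
      |(S a)^[n] x t - (S a)^[n] y t| ≤ (L:ℝ)^n * (t:ℝ)^n / n.factorial * dist x y := by
    intro a n
    induction n with
    | zero =>
      intro x y t
      have h := BoundedContinuousFunction.dist_coe_le_dist (f := x) (g := y) t
      rw [Real.dist_eq] at h
      simpa using h
    | succ n ih =>
      intro x y t
      rw [Function.iterate_succ_apply', Function.iterate_succ_apply']
      set X := (S a)^[n] x with hXdef
      set Y := (S a)^[n] y with hYdef
      have ht0 : (0:ℝ) ≤ t := t.2.1
      have ht1 : (t:ℝ) ≤ 1 := t.2.2
      set d := dist x y with hd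
      have hd0 : 0 ≤ d := dist_nonneg
      have h1 : S a X t - S a Y t
          = ∫ s in (0:ℝ)..(t:ℝ),
              (((t:ℝ) - s) * g (Y (pj s)) - ((t:ℝ) - s) * g (X (pj s))) := by
        rw [Sapp, Sapp, intervalIntegral.integral_sub ((hc2 _ Y).intervalIntegrable _ _)
          ((hc2 _ X).intervalIntegrable _ _)]
        ring
      rw [h1]
      have hb : ∀ s ∈ Set.Icc (0:ℝ) (t:ℝ),
          |((t:ℝ) - s) * g (Y (pj s)) - ((t:ℝ) - s) * g (X (pj s))|
            ≤ ((L:ℝ)^(n+1) / n.factorial * d) * s ^ n := by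
        intro s hs
        have hs1 : s ∈ Set.Icc (0:ℝ) 1 := ⟨hs.1, hs.2.trans ht1⟩
        have e1 : |((t:ℝ) - s) * g (Y (pj s)) - ((t:ℝ) - s) * g (X (pj s))|
            = |(t:ℝ) - s| * |g (Y (pj s)) - g (X (pj s))| := by
          rw [← abs_mul, mul_sub]
        rw [e1]
        have e2 : |(t:ℝ) - s| ≤ 1 := by
          rw [abs_le]; exact ⟨by linarith [hs.1, hs.2], by linarith [hs.1, hs.2]⟩
        have e4 : |Y (pj s) - X (pj s)| ≤ (L:ℝ)^n * s^n / n.factorial * d := by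
          have h := ih y x (pj s)
          rw [pj_val hs1, dist_comm y x] at h
          exact h
        have e3 : |g (Y (pj s)) - g (X (pj s))| ≤ (L:ℝ) * |Y (pj s) - X (pj s)| := by
          have h := hlip.dist_le_mul (Y (pj s)) (X (pj s))
          rw [Real.dist_eq, Real.dist_eq] at h
          exact h
        have e5 : |g (Y (pj s)) - g (X (pj s))|
            ≤ (L:ℝ) * ((L:ℝ)^n * s^n / n.factorial * d) :=
          e3.trans (mul_le_mul_of_nonneg_left e4 L.coe_nonneg)
        calc |(t:ℝ) - s| * |g (Y (pj s)) - g (X (pj s))|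
            ≤ 1 * ((L:ℝ) * ((L:ℝ)^n * s^n / n.factorial * d)) :=
              mul_le_mul e2 e5 (abs_nonneg _) zero_le_one
          _ = ((L:ℝ)^(n+1) / n.factorial * d) * s ^ n := by ring
      have hint := int_abs_le
        (h := fun s => ((t:ℝ) - s) * g (Y (pj s)) - ((t:ℝ) - s) * g (X (pj s)))
        (b := fun s => ((L:ℝ)^(n+1) / n.factorial * d) * s ^ n) ((hc2 _ Y).sub (hc2 _ X))
        (continuous_const.mul (continuous_pow n)) ht0 hb
      have hcalc : ∫ s in (0:ℝ)..(t:ℝ), ((L:ℝ)^(n+1) / n.factorial * d) * s ^ n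
          = ((L:ℝ)^(n+1) / n.factorial * d) * ((t:ℝ)^(n+1) / (n+1)) := by
        rw [intervalIntegral.integral_const_mul, integral_pow]
        norm_num
      rw [hcalc] at hint
      refine hint.trans (le_of_eq ?_)
      rw [Nat.factorial_succ]
      have hn1 : ((n:ℝ) + 1) ≠ 0 := by positivity
      have hnf : ((n.factorial : ℝ)) ≠ 0 := by
        exact_mod_cast Nat.factorial_ne_zero n
      push_cast
      field_simp
  -- distance estimate for iterates
  have keyd : ∀ (a : ℝ) (n : ℕ) (x y : EE),
      dist ((S a)^[n] x) ((S a)^[n] y) ≤ (L:ℝ)^n / n.factorial * dist x y := by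
    intro a n x y
    have hnn : (0:ℝ) ≤ (L:ℝ)^n / n.factorial * dist x y := by positivity
    rw [BoundedContinuousFunction.dist_le hnn]
    intro t
    rw [Real.dist_eq]
    refine (key a n x y t).trans ?_
    have htn : (t:ℝ)^n ≤ 1 := pow_le_one₀ t.2.1 t.2.2
    calc (L:ℝ)^n * (t:ℝ)^n / n.factorial * dist x y
        ≤ (L:ℝ)^n * 1 / n.factorial * dist x y := by gcongr
      _ = (L:ℝ)^n / n.factorial * dist x y := by rw [mul_one]
  -- choose a contracting iterate
  obtain ⟨N, hN⟩ := ((FloorSemiring.tendsto_pow_div_factorial_atTop (L:ℝ)).eventually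
    (gt_mem_nhds one_pos)).exists
  have hKnn : (0:ℝ) ≤ (L:ℝ)^N / N.factorial := by positivity
  set KN : ℝ≥0 := ⟨(L:ℝ)^N / N.factorial, hKnn⟩ with hKN
  have hcontr : ∀ a : ℝ, ContractingWith KN ((S a)^[N]) := by
    intro a
    constructor
    · rw [← NNReal.coe_lt_one]
      exact hN
    · exact LipschitzWith.of_dist_le_mul fun x y => keyd a N x y
  set X : ℝ → EE := fun a => ContractingWith.fixedPoint ((S a)^[N]) (hcontr a) with hX
  have hfix : ∀ a, S a (X a) = X a := fun a =>
    ContractingWith.isFixedPt_fixedPoint_iterate (hcontr a)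
  -- dependence on the parameter a
  have hshift : ∀ (a b : ℝ) (z : EE), dist (S a z) (S b z) ≤ |a - b| := by
    intro a b z
    rw [BoundedContinuousFunction.dist_le (abs_nonneg _)]
    intro t
    have e : (S a z) t - (S b z) t = (a - b) * t := by
      rw [Sapp, Sapp]; ring
    rw [Real.dist_eq, e, abs_mul]
    have h1 : |(t:ℝ)| ≤ 1 := by
      rw [abs_le]; exact ⟨by linarith [t.2.1], t.2.2⟩
    calc |a - b| * |(t:ℝ)| ≤ |a - b| * 1 :=
          mul_le_mul_of_nonneg_left h1 (abs_nonneg _)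
      _ = |a - b| := mul_one _
  have hlip1 : ∀ (a : ℝ) (x y : EE),
      dist (S a x) (S a y) ≤ max 1 (L:ℝ) * dist x y := by
    intro a x y
    have h := keyd a 1 x y
    simp only [Function.iterate_one, pow_one, Nat.factorial_one, Nat.cast_one, div_one] at h
    exact h.trans (mul_le_mul_of_nonneg_right (le_max_right _ _) dist_nonneg)
  set Λ : ℝ := max 1 (L:ℝ) with hΛ
  have hΛ1 : (1:ℝ) ≤ Λ := le_max_left _ _
  have hΛ0 : (0:ℝ) ≤ Λ := by linarith
  have tel : ∀ (n : ℕ) (a b : ℝ) (z : EE),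
      dist ((S a)^[n] z) ((S b)^[n] z) ≤ n * Λ^n * |a - b| := by
    intro n a b
    induction n with
    | zero => intro z; simp
    | succ n ih =>
      intro z
      rw [Function.iterate_succ_apply', Function.iterate_succ_apply']
      have h1 : dist (S a ((S a)^[n] z)) (S a ((S b)^[n] z)) ≤ Λ * (n * Λ^n * |a - b|) :=
        (hlip1 a _ _).trans (mul_le_mul_of_nonneg_left (ih z) hΛ0)
      have h2 := hshift a b ((S b)^[n] z)
      have h3 := dist_triangle (S a ((S a)^[n] z)) (S a ((S b)^[n] z)) (S b ((S b)^[n] z))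
      have h5 : (1:ℝ) ≤ Λ^(n+1) := one_le_pow₀ hΛ1
      have h6 : |a - b| ≤ Λ^(n+1) * |a - b| := le_mul_of_one_le_left (abs_nonneg _) h5
      have h7 : Λ^(n+1) = Λ * Λ^n := by rw [pow_succ]; ring
      have h8 : Λ * (n * Λ^n * |a - b|) = n * Λ^(n+1) * |a - b| := by rw [h7]; ring
      push_cast
      linarith [h1, h2, h3, h6, h8]
  have hone : (1:ℝ) ∈ Set.Icc (0:ℝ) 1 := ⟨zero_le_one, le_refl 1⟩
  have h1K : (0:ℝ) < 1 - KN := (hcontr 0).one_sub_K_pos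
  have hXdist : ∀ a b : ℝ, dist (X a) (X b) ≤ (N * Λ^N / (1 - (KN:ℝ))) * |a - b| := by
    intro a b
    have h := (hcontr a).dist_fixedPoint_fixedPoint_of_dist_le' ((S b)^[N])
      ((hcontr a).fixedPoint_isFixedPt) ((hcontr b).fixedPoint_isFixedPt)
      (fun z => tel N a b z)
    refine h.trans (le_of_eq ?_)
    field_simp
  set F : ℝ → ℝ := fun a => X a ⟨1, hone⟩ with hF
  have hc0 : (0:ℝ) ≤ N * Λ^N / (1 - (KN:ℝ)) := by positivity
  have hFcont : Continuous F := by
    apply LipschitzWith.continuous (K := Real.toNNReal (N * Λ^N / (1 - (KN:ℝ))))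
    apply LipschitzWith.of_dist_le_mul
    intro a b
    have h1 : dist (F a) (F b) ≤ dist (X a) (X b) :=
      BoundedContinuousFunction.dist_coe_le_dist _
    refine h1.trans ((hXdist a b).trans (le_of_eq ?_))
    rw [Real.coe_toNNReal _ hc0, Real.dist_eq]
  have hFeq : ∀ a, F a = a - ∫ s in (0:ℝ)..1, (1 - s) * g (X a (pj s)) := by
    intro a
    have h1 : X a ⟨1, hone⟩
        = a * 1 + Z 1 - ∫ s in (0:ℝ)..1, ((1:ℝ) - s) * g (X a (pj s)) := by
      conv_lhs => rw [← hfix a]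
      exact Sapp a (X a) ⟨1, hone⟩
    show X a ⟨1, hone⟩ = _
    rw [h1, hZ1]
    ring
  have hIb : ∀ a, |∫ s in (0:ℝ)..1, (1 - s) * g (X a (pj s))| ≤ B := by
    intro a
    have h := intervalIntegral.norm_integral_le_of_norm_le_const (C := B)
      (f := fun s => (1 - s) * g (X a (pj s))) (a := 0) (b := 1) ?_
    · rw [Real.norm_eq_abs] at h
      simpa using h
    · intro s hs
      rw [Set.uIoc_of_le zero_le_one] at hs
      rw [Real.norm_eq_abs, abs_mul]
      have h1 : |1 - s| ≤ 1 := by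
        rw [abs_le]; exact ⟨by linarith [hs.2], by linarith [hs.1]⟩
      have h2 := hB (X a (pj s))
      calc |1 - s| * |g (X a (pj s))| ≤ 1 * B :=
            mul_le_mul h1 h2 (abs_nonneg _) zero_le_one
        _ = B := one_mul _
  have hroot : ∃ a, F a = 0 := by
    have hsub := intermediate_value_Icc (by linarith : -(B+1) ≤ (B+1)) hFcont.continuousOn
    have h0mem : (0:ℝ) ∈ Set.Icc (F (-(B+1))) (F (B+1)) := by
      constructor
      · rw [hFeq]
        have := (abs_le.1 (hIb (-(B+1)))).1
        linarith
      · rw [hFeq]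
        have := (abs_le.1 (hIb (B+1))).2
        linarith
    obtain ⟨a, _, hFa⟩ := hsub h0mem
    exact ⟨a, hFa⟩
  obtain ⟨a, hFa⟩ := hroot
  refine ⟨X a, fun t => ?_⟩
  have hfixt : X a t = a * t + Z t - ∫ s in (0:ℝ)..(t:ℝ), ((t:ℝ) - s) * g (X a (pj s)) := by
    conv_lhs => rw [← hfix a]
    exact Sapp a (X a) t
  have hA : a = ∫ s in (0:ℝ)..1, (1 - s) * g (X a (pj s)) := by
    have h := hFeq a
    rw [hFa] at h
    linarith
  have hgreen := green_id (hcomp (X a)) t.2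
  rw [hfixt, hgreen, ← hA]
  ring

/-- uniform continuity on compacts, quantitative form. -/
lemma unif_cont_on (f : ℝ → ℝ) (hf : Continuous f) (R ε : ℝ) (hε : 0 < ε) :
    ∃ δ > (0:ℝ), ∀ u v : ℝ, |u| ≤ R → |v| ≤ R → |u - v| ≤ δ → |f u - f v| ≤ ε := by
  have huc : UniformContinuousOn f (Set.Icc (-R) R) :=
    (isCompact_Icc).uniformContinuousOn_of_continuous hf.continuousOn
  rw [Metric.uniformContinuousOn_iff] at huc
  obtain ⟨δ, hδ, hδ'⟩ := huc ε hε
  refine ⟨δ / 2, by linarith, fun u v hu hv huv => ?_⟩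
  have h1 : u ∈ Set.Icc (-R) R := abs_le.1 hu
  have h2 : v ∈ Set.Icc (-R) R := abs_le.1 hv
  have : dist u v < δ := by rw [Real.dist_eq]; linarith
  have := hδ' u h1 v h2 this
  rw [Real.dist_eq] at this
  exact this.le

/-- Lipschitz approximation of a bounded continuous function. -/
lemma lip_approx (f : ℝ → ℝ) (hf : Continuous f) (C : ℝ) (hC : ∀ x, |f x| ≤ C) :
    ∃ g : ℕ → ℝ → ℝ, (∀ n : ℕ, LipschitzWith (n : ℝ≥0) (g n)) ∧ (∀ n x, |g n x| ≤ C) ∧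
      ∀ R ε : ℝ, 0 < ε → ∀ᶠ n in atTop, ∀ x : ℝ, |x| ≤ R → |g n x - f x| ≤ ε := by
  have hC0 : 0 ≤ C := le_trans (abs_nonneg _) (hC 0)
  set g : ℕ → ℝ → ℝ := fun n x => ⨅ y : ℝ, (f y + n * |x - y|) with hg
  have hbdd : ∀ n : ℕ, ∀ x : ℝ, BddBelow (Set.range fun y => f y + n * |x - y|) := by
    intro n x
    refine ⟨-C, fun z hz => ?_⟩
    obtain ⟨y, rfl⟩ := hz
    show -C ≤ f y + n * |x - y|
    have h1 := (abs_le.1 (hC y)).1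
    have h2 : (0:ℝ) ≤ n * |x - y| := by positivity
    linarith
  have hle : ∀ n x, g n x ≤ f x := by
    intro n x
    have := ciInf_le (hbdd n x) x
    simpa using this
  have hge : ∀ n x, -C ≤ g n x := by
    intro n x
    apply le_ciInf
    intro y
    have h1 := (abs_le.1 (hC y)).1
    have h2 : (0:ℝ) ≤ n * |x - y| := by positivity
    linarith
  refine ⟨g, ?_, ?_, ?_⟩
  · -- Lipschitz
    intro n
    apply LipschitzWith.of_dist_le_mul
    intro x x'
    rw [Real.dist_eq, Real.dist_eq]
    have key : ∀ a b : ℝ, g n a - g n b ≤ n * |a - b| := by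
      intro a b
      have main : g n a - n * |a - b| ≤ g n b := by
        apply le_ciInf
        intro y
        show g n a - ↑n * |a - b| ≤ f y + ↑n * |b - y|
        have h1 : g n a ≤ f y + n * |a - y| := by
          have := ciInf_le (hbdd n a) y
          simpa using this
        have h2 : |a - y| ≤ |a - b| + |b - y| := abs_sub_le a b y
        have h3 : (n:ℝ) * |a - y| ≤ n * (|a - b| + |b - y|) :=
          mul_le_mul_of_nonneg_left h2 (by positivity)
        have h4 : (n:ℝ) * (|a - b| + |b - y|) = n * |a - b| + n * |b - y| := by ring
        linarith
      linarith
    rw [abs_sub_le_iff]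
    push_cast
    constructor
    · exact key x x'
    · rw [abs_sub_comm]; exact key x' x
  · -- bound
    intro n x
    rw [abs_le]
    exact ⟨hge n x, (hle n x).trans (abs_le.1 (hC x)).2⟩
  · -- convergence
    intro R ε hε
    obtain ⟨δ, hδ, hδ'⟩ := unif_cont_on f hf (R + 1) ε hε
    have hδ1 : 0 < min δ 1 := lt_min hδ one_pos
    obtain ⟨N, hN⟩ := exists_nat_ge (2 * C / min δ 1)
    rw [Filter.eventually_atTop]
    refine ⟨N, fun n hn x hx => ?_⟩
    have hgef : f x - ε ≤ g n x := by
      apply le_ciInf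
      intro y
      show f x - ε ≤ f y + ↑n * |x - y|
      rcases le_or_gt |x - y| (min δ 1) with hcase | hcase
      · have hy : |y| ≤ R + 1 := by
          have h1 := abs_sub_abs_le_abs_sub y x
          have h2 : |x - y| ≤ 1 := hcase.trans (min_le_right _ _)
          rw [abs_sub_comm] at h2
          linarith
        have hx' : |x| ≤ R + 1 := by linarith
        have hfe := hδ' x y hx' hy (hcase.trans (min_le_left _ _))
        have h3 : (0:ℝ) ≤ n * |x - y| := by positivity
        have := (abs_le.1 hfe).2
        linarith
      · have h1 : (N:ℝ) * min δ 1 ≤ n * |x - y| := by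
          apply mul_le_mul (by exact_mod_cast Nat.cast_le.2 hn) hcase.le hδ1.le
            (by positivity)
        have h2 : 2 * C ≤ (N:ℝ) * min δ 1 := by
          rw [div_le_iff₀ hδ1] at hN
          linarith
        have h3 := (abs_le.1 (hC y)).1
        have h4 := (abs_le.1 (hC x)).2
        linarith
    have := hle n x
    rw [abs_sub_le_iff]
    constructor <;> linarith

lemma Kgreen_cont (r : ℝ) : Continuous fun s => Kgreen r s := by
  unfold Kgreen
  exact (continuous_const.min continuous_id).sub (continuous_const.mul continuous_id)

/-- basic bound on the Green kernel. -/
lemma Kgreen_bd {t s : ℝ} (ht : t ∈ Set.Icc (0:ℝ) 1) (hs : s ∈ Set.Icc (0:ℝ) 1) :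
    |Kgreen t s| ≤ 1 := by
  obtain ⟨ht0, ht1⟩ := ht; obtain ⟨hs0, hs1⟩ := hs
  rw [Kgreen, abs_le]
  constructor
  · have h1 : t * s ≤ min t s := by
      rcases le_total t s with h | h
      · rw [min_eq_left h]; nlinarith
      · rw [min_eq_right h]; nlinarith
    linarith
  · have h2 : min t s ≤ 1 := le_trans (min_le_left _ _) ht1
    nlinarith

lemma Kgreen_lip {t t' s : ℝ} (hs : s ∈ Set.Icc (0:ℝ) 1) :
    |Kgreen t s - Kgreen t' s| ≤ 2 * |t - t'| := by
  obtain ⟨hs0, hs1⟩ := hs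
  have h1 := min_sub_min_le_abs t t' s
  have h2 : |t * s - t' * s| ≤ |t - t'| := by
    rw [← sub_mul, abs_mul]
    calc |t - t'| * |s| ≤ |t - t'| * 1 := by
          apply mul_le_mul_of_nonneg_left _ (abs_nonneg _)
          rw [abs_le]; constructor <;> linarith
      _ = |t - t'| := mul_one _
  calc |Kgreen t s - Kgreen t' s| = |(min t s - min t' s) - (t * s - t' * s)| := by
        rw [Kgreen, Kgreen]; ring_nf
    _ ≤ |min t s - min t' s| + |t * s - t' * s| := abs_sub _ _
    _ ≤ 2 * |t - t'| := by linarith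

end Aux

/-- existence of a continuous solution of the Green's-function integral
equation when `f` is continuous and bounded. -/
theorem stmt15 (f : ℝ → ℝ) (hf : Continuous f) (hb : ∃ C : ℝ, ∀ x : ℝ, |f x| ≤ C)
    (ω : ℝ → ℝ) (hω : ContinuousOn ω (Set.Icc 0 1)) (hω0 : ω 0 = 0) :
    ∃ X : ℝ → ℝ, ContinuousOn X (Set.Icc 0 1) ∧
      (∀ t ∈ Set.Icc (0:ℝ) 1,
        X t = (∫ s in (0:ℝ)..1, Kgreen t s * f (X s)) + Yw ω t) ∧
      X 0 = 0 ∧ X 1 = 0 := by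
  classical
  obtain ⟨C, hC⟩ := hb
  have hC0 : (0:ℝ) ≤ C := le_trans (abs_nonneg _) (hC 0)
  -- continuous extension of ω and the function Z
  set ω' : ℝ → ℝ := fun s => (Set.Icc (0:ℝ) 1).restrict ω (pj s) with hω'def
  have hω'c : Continuous ω' := (ContinuousOn.restrict hω).comp pj_cont
  have hω'eq : ∀ s ∈ Set.Icc (0:ℝ) 1, ω' s = ω s := by
    intro s hs
    show ω ((pj s : ℝ)) = ω s
    rw [pj_val hs]
  set Z : ℝ → ℝ := fun t => -t * (∫ s in (0:ℝ)..1, ω' s) + ∫ s in (0:ℝ)..t, ω' s with hZdef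
  have hZc : Continuous Z :=
    (continuous_neg.mul continuous_const).add
      (intervalIntegral.continuous_primitive (fun a b => hω'c.intervalIntegrable a b) 0)
  have hZ1 : Z 1 = 0 := by
    show -(1:ℝ) * (∫ s in (0:ℝ)..1, ω' s) + ∫ s in (0:ℝ)..1, ω' s = 0
    ring
  have hZ0 : Z 0 = 0 := by
    show -(0:ℝ) * (∫ s in (0:ℝ)..1, ω' s) + ∫ s in (0:ℝ)..(0:ℝ), ω' s = 0
    rw [intervalIntegral.integral_same]
    ring
  have hZY : ∀ t ∈ Set.Icc (0:ℝ) 1, Z t = Yw ω t := by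
    intro t ht
    have i1 : (∫ s in (0:ℝ)..1, ω' s) = ∫ s in (0:ℝ)..1, ω s := by
      apply intervalIntegral.integral_congr
      intro s hs
      rw [Set.uIcc_of_le zero_le_one] at hs
      exact hω'eq s hs
    have i2 : (∫ s in (0:ℝ)..t, ω' s) = ∫ s in (0:ℝ)..t, ω s := by
      apply intervalIntegral.integral_congr
      intro s hs
      rw [Set.uIcc_of_le ht.1] at hs
      exact hω'eq s ⟨hs.1, hs.2.trans ht.2⟩
    rw [Yw, ← i1, ← i2]
  -- Lipschitz approximations and their solutions
  obtain ⟨g, hglip, hgbd, hgconv⟩ := lip_approx f hf C hC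
  have hsol : ∀ n : ℕ, ∃ x : EE, ∀ t : Set.Icc (0:ℝ) 1,
      x t = (∫ s in (0:ℝ)..1, Kgreen (t:ℝ) s * g n (x (pj s))) + Z t :=
    fun n => exists_sol_lip (g n) n (hglip n) C (hgbd n) Z hZc hZ1
  choose x hx using hsol
  set Zc : EE := BoundedContinuousFunction.mkOfCompact
    ⟨fun p => Z p, hZc.comp continuous_subtype_val⟩ with hZcdef
  have hZcapp : ∀ p : Set.Icc (0:ℝ) 1, Zc p = Z p := fun p => rfl
  set G : ℕ → EE := fun n => x n - Zc with hGdef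
  have hGapp : ∀ (n : ℕ) (t : Set.Icc (0:ℝ) 1),
      G n t = ∫ s in (0:ℝ)..1, Kgreen (t:ℝ) s * g n (x n (pj s)) := by
    intro n t
    show x n t - Zc t = _
    rw [hx n t, hZcapp]
    ring
  -- continuity of the integrands
  have hvc : ∀ n : ℕ, Continuous fun s : ℝ => g n (x n (pj s)) :=
    fun n => (hglip n).continuous.comp ((x n).continuous.comp pj_cont)
  have hvbd : ∀ (n : ℕ) (s : ℝ), |g n (x n (pj s))| ≤ C := fun n s => hgbd n _
  -- uniform bound and equi-Lipschitz property of G n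
  have hGbd : ∀ (n : ℕ) (t : Set.Icc (0:ℝ) 1), |G n t| ≤ C := by
    intro n t
    rw [hGapp]
    have h := intervalIntegral.norm_integral_le_of_norm_le_const (C := C)
      (f := fun s => Kgreen (t:ℝ) s * g n (x n (pj s))) (a := 0) (b := 1) ?_
    · rw [Real.norm_eq_abs] at h
      simpa using h
    · intro s hs
      rw [Set.uIoc_of_le zero_le_one] at hs
      have hs1 : s ∈ Set.Icc (0:ℝ) 1 := ⟨hs.1.le, hs.2⟩
      rw [Real.norm_eq_abs, abs_mul]
      calc |Kgreen (t:ℝ) s| * |g n (x n (pj s))| ≤ 1 * C :=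
            mul_le_mul (Kgreen_bd t.2 hs1) (hvbd n s) (abs_nonneg _) zero_le_one
        _ = C := one_mul _
  have hGlip : ∀ (n : ℕ) (t t' : Set.Icc (0:ℝ) 1),
      |G n t - G n t'| ≤ 2 * C * |(t:ℝ) - (t':ℝ)| := by
    intro n t t'
    rw [hGapp, hGapp, ← intervalIntegral.integral_sub
      (f := fun s => Kgreen (t:ℝ) s * g n (x n (pj s)))
      (g := fun s => Kgreen (t':ℝ) s * g n (x n (pj s)))
      (((Kgreen_cont (t:ℝ)).mul (hvc n)).intervalIntegrable _ _)
      (((Kgreen_cont (t':ℝ)).mul (hvc n)).intervalIntegrable _ _)]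
    have h := intervalIntegral.norm_integral_le_of_norm_le_const
      (C := 2 * |(t:ℝ) - (t':ℝ)| * C)
      (f := fun s => Kgreen (t:ℝ) s * g n (x n (pj s))
        - Kgreen (t':ℝ) s * g n (x n (pj s))) (a := 0) (b := 1) ?_
    · rw [Real.norm_eq_abs] at h
      calc |∫ s in (0:ℝ)..1, (Kgreen (t:ℝ) s * g n (x n (pj s))
            - Kgreen (t':ℝ) s * g n (x n (pj s)))|
          ≤ 2 * |(t:ℝ) - (t':ℝ)| * C * |1 - 0| := h
        _ = 2 * C * |(t:ℝ) - (t':ℝ)| := by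
            rw [show |(1:ℝ) - 0| = 1 by norm_num]
            ring
    · intro s hs
      rw [Set.uIoc_of_le zero_le_one] at hs
      have hs1 : s ∈ Set.Icc (0:ℝ) 1 := ⟨hs.1.le, hs.2⟩
      show ‖Kgreen (t:ℝ) s * g n (x n (pj s)) - Kgreen (t':ℝ) s * g n (x n (pj s))‖
        ≤ 2 * |(t:ℝ) - (t':ℝ)| * C
      rw [Real.norm_eq_abs, ← sub_mul, abs_mul]
      calc |Kgreen (t:ℝ) s - Kgreen (t':ℝ) s| * |g n (x n (pj s))|
          ≤ (2 * |(t:ℝ) - (t':ℝ)|) * C :=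
            mul_le_mul (Kgreen_lip hs1) (hvbd n s) (abs_nonneg _) (by positivity)
        _ = 2 * |(t:ℝ) - (t':ℝ)| * C := by ring
  -- the Arzelà–Ascoli set
  set A : Set EE := {h : EE | (∀ p q : Set.Icc (0:ℝ) 1,
      dist (h p) (h q) ≤ 2 * C * dist p q) ∧ ∀ p, h p ∈ Set.Icc (-C) C} with hAdef
  have hAclosed : IsClosed A := by
    rw [hAdef, Set.setOf_and]
    apply IsClosed.inter
    · have e : {h : EE | ∀ p q : Set.Icc (0:ℝ) 1, dist (h p) (h q) ≤ 2 * C * dist p q}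
          = ⋂ p, ⋂ q, {h : EE | dist (h p) (h q) ≤ 2 * C * dist p q} := by
        ext h
        constructor
        · intro H
          exact Set.mem_iInter.2 fun p => Set.mem_iInter.2 fun q => H p q
        · intro H p q
          exact Set.mem_iInter.1 (Set.mem_iInter.1 H p) q
      rw [e]
      exact isClosed_iInter fun p => isClosed_iInter fun q =>
        isClosed_le (Continuous.dist (continuous_eval_const _)
          (continuous_eval_const _)) continuous_const
    · have e : {h : EE | ∀ p : Set.Icc (0:ℝ) 1, h p ∈ Set.Icc (-C) C}
          = ⋂ p, {h : EE | h p ∈ Set.Icc (-C) C} := by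
        ext h
        constructor
        · intro H
          exact Set.mem_iInter.2 fun p => H p
        · intro H p
          exact Set.mem_iInter.1 H p
      rw [e]
      exact isClosed_iInter fun p =>
        IsClosed.preimage (continuous_eval_const _) isClosed_Icc
  have hequi : Equicontinuous ((↑) : A → Set.Icc (0:ℝ) 1 → ℝ) := by
    intro p
    rw [Metric.equicontinuousAt_iff]
    intro ε hε
    refine ⟨ε / (2 * C + 1), by positivity, fun q hq i => ?_⟩
    have h1 : dist ((i : EE) p) ((i : EE) q) ≤ 2 * C * dist p q := i.2.1 p q
    have h2 : dist p q < ε / (2 * C + 1) := by rwa [dist_comm]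
    have h3 : 2 * C * dist p q ≤ 2 * C * (ε / (2 * C + 1)) :=
      mul_le_mul_of_nonneg_left h2.le (by positivity)
    have h4 : 2 * C * (ε / (2 * C + 1)) < ε := by
      rw [mul_div_assoc']
      rw [div_lt_iff₀ (by positivity)]
      nlinarith
    calc dist ((i : EE) p) ((i : EE) q) ≤ 2 * C * dist p q := h1
      _ ≤ 2 * C * (ε / (2 * C + 1)) := h3
      _ < ε := h4
  have hAcomp : IsCompact A :=
    BoundedContinuousFunction.arzela_ascoli₂ (Set.Icc (-C) C) isCompact_Icc A hAclosed (fun h p hh => hh.2 p) hequi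
  have hGA : ∀ n, G n ∈ A := by
    intro n
    constructor
    · intro p q
      rw [Real.dist_eq, Subtype.dist_eq, Real.dist_eq]
      exact hGlip n p q
    · intro p
      exact abs_le.1 (hGbd n p)
  obtain ⟨Glim, hGlimA, φ, hφ, hconv⟩ := hAcomp.tendsto_subseq hGA
  set xl : EE := Glim + Zc with hxl
  have hxlapp : ∀ p, xl p = Glim p + Z p := by
    intro p
    show (Glim + Zc) p = _
    rw [BoundedContinuousFunction.add_apply, hZcapp]
  have hxapp : ∀ (n : ℕ) (p : Set.Icc (0:ℝ) 1), x n p = G n p + Z p := by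
    intro n p
    show x n p = (x n - Zc) p + Z p
    rw [BoundedContinuousFunction.sub_apply, hZcapp]
    ring
  -- uniform bounds on values
  have hZbd : ∀ p : Set.Icc (0:ℝ) 1, |Z (p : ℝ)| ≤ ‖Zc‖ := by
    intro p
    have := Zc.norm_coe_le_norm p
    rwa [Real.norm_eq_abs, hZcapp] at this
  set M : ℝ := C + ‖Zc‖ with hM
  have hM0 : 0 ≤ M := by positivity
  have hxbd : ∀ (n : ℕ) (p : Set.Icc (0:ℝ) 1), |x n p| ≤ M := by
    intro n p
    rw [hxapp]
    calc |G n p + Z p| ≤ |G n p| + |Z (p:ℝ)| := abs_add_le _ _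
      _ ≤ C + ‖Zc‖ := add_le_add (hGbd n p) (hZbd p)
  have hxlbd : ∀ p : Set.Icc (0:ℝ) 1, |xl p| ≤ M := by
    intro p
    rw [hxlapp]
    have h1 : |Glim p| ≤ C := abs_le.2 (hGlimA.2 p)
    calc |Glim p + Z p| ≤ |Glim p| + |Z (p:ℝ)| := abs_add_le _ _
      _ ≤ C + ‖Zc‖ := add_le_add h1 (hZbd p)
  -- passing to the limit
  have hlim : ∀ t : Set.Icc (0:ℝ) 1,
      Glim t = ∫ s in (0:ℝ)..1, Kgreen (t:ℝ) s * f (xl (pj s)) := by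
    intro t
    set Q : ℝ := ∫ s in (0:ℝ)..1, Kgreen (t:ℝ) s * f (xl (pj s)) with hQ
    have hfc : Continuous fun s : ℝ => f (xl (pj s)) :=
      hf.comp (xl.continuous.comp pj_cont)
    have hεle : ∀ ε > (0:ℝ), |Glim t - Q| ≤ ε := by
      intro ε hε
      obtain ⟨δ, hδpos, hδ⟩ := unif_cont_on f hf M (ε/3) (by positivity)
      obtain ⟨K1, hK1⟩ := Metric.tendsto_atTop.1 hconv (min (ε/3) δ)
        (lt_min (by positivity) hδpos)
      obtain ⟨K2, hK2⟩ := Filter.eventually_atTop.1 (hgconv M (ε/3) (by positivity))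
      set k := max K1 K2 with hk
      set n := φ k with hn
      have hkK1 : K1 ≤ k := le_max_left _ _
      have hkK2 : K2 ≤ n := le_trans (le_max_right _ _) (hφ.le_apply)
      have hdist : dist (G n) Glim < min (ε/3) δ := hK1 k hkK1
      have hptwise : ∀ p : Set.Icc (0:ℝ) 1,
          |g n (x n p) - f (xl p)| ≤ ε/3 + ε/3 := by
        intro p
        have h1 : |g n (x n p) - f (x n p)| ≤ ε/3 := hK2 n hkK2 (x n p) (hxbd n p)
        have h2 : |x n p - xl p| ≤ δ := by
          have e : x n p - xl p = G n p - Glim p := by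
            rw [hxapp, hxlapp]; ring
          rw [e]
          have h3 : |G n p - Glim p| ≤ dist (G n) Glim := by
            have := BoundedContinuousFunction.dist_coe_le_dist (f := G n) (g := Glim) p
            rwa [Real.dist_eq] at this
          exact h3.trans (le_trans hdist.le (min_le_right _ _))
        have h4 : |f (x n p) - f (xl p)| ≤ ε/3 := hδ _ _ (hxbd n p) (hxlbd p) h2
        calc |g n (x n p) - f (xl p)|
            ≤ |g n (x n p) - f (x n p)| + |f (x n p) - f (xl p)| := abs_sub_le _ _ _
          _ ≤ ε/3 + ε/3 := add_le_add h1 h4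
      have hint : |G n t - Q| ≤ 2*ε/3 := by
        rw [hGapp, hQ, ← intervalIntegral.integral_sub
          (f := fun s => Kgreen (t:ℝ) s * g n (x n (pj s)))
          (g := fun s => Kgreen (t:ℝ) s * f (xl (pj s)))
          (((Kgreen_cont (t:ℝ)).mul (hvc n)).intervalIntegrable _ _)
          (((Kgreen_cont (t:ℝ)).mul hfc).intervalIntegrable _ _)]
        have h := intervalIntegral.norm_integral_le_of_norm_le_const (C := 2*ε/3)
          (f := fun s => Kgreen (t:ℝ) s * g n (x n (pj s))
            - Kgreen (t:ℝ) s * f (xl (pj s))) (a := 0) (b := 1) ?_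
        · rw [Real.norm_eq_abs] at h
          simpa using h
        · intro s hs
          rw [Set.uIoc_of_le zero_le_one] at hs
          have hs1 : s ∈ Set.Icc (0:ℝ) 1 := ⟨hs.1.le, hs.2⟩
          show ‖Kgreen (t:ℝ) s * g n (x n (pj s)) - Kgreen (t:ℝ) s * f (xl (pj s))‖ ≤ 2*ε/3
          rw [Real.norm_eq_abs, ← mul_sub, abs_mul]
          calc |Kgreen (t:ℝ) s| * |g n (x n (pj s)) - f (xl (pj s))|
              ≤ 1 * (ε/3 + ε/3) := mul_le_mul (Kgreen_bd t.2 hs1) (hptwise (pj s))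
                (abs_nonneg _) zero_le_one
            _ = 2*ε/3 := by ring
      have hfirst : |Glim t - G n t| ≤ ε/3 := by
        have h := BoundedContinuousFunction.dist_coe_le_dist (f := Glim) (g := G n) t
        rw [Real.dist_eq] at h
        refine h.trans ?_
        rw [dist_comm]
        exact le_trans hdist.le (min_le_left _ _)
      calc |Glim t - Q| ≤ |Glim t - G n t| + |G n t - Q| := abs_sub_le _ _ _
        _ ≤ ε/3 + 2*ε/3 := add_le_add hfirst hint
        _ = ε := by ring
    by_contra hne
    have habs : 0 < |Glim t - Q| := abs_pos.2 (sub_ne_zero.2 hne)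
    have := hεle (|Glim t - Q| / 2) (by positivity)
    linarith
  -- final solution
  refine ⟨fun r => xl (pj r), (xl.continuous.comp pj_cont).continuousOn, ?_, ?_, ?_⟩
  · intro t ht
    have hpj : pj t = ⟨t, ht⟩ := Set.projIcc_of_mem _ ht
    show xl (pj t) = _
    rw [hpj, hxlapp, hlim ⟨t, ht⟩, hZY t ht]
  · have h0 : (0:ℝ) ∈ Set.Icc (0:ℝ) 1 := ⟨le_refl 0, zero_le_one⟩
    have hpj : pj 0 = ⟨0, h0⟩ := Set.projIcc_of_mem _ h0
    show xl (pj 0) = 0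
    rw [hpj, hxlapp, hlim ⟨0, h0⟩]
    have hzero : (∫ s in (0:ℝ)..1, Kgreen ((⟨0, h0⟩ : Set.Icc (0:ℝ) 1):ℝ) s * f (xl (pj s)))
        = 0 := by
      have : ∀ s ∈ Set.uIcc (0:ℝ) 1,
          Kgreen ((⟨0, h0⟩ : Set.Icc (0:ℝ) 1):ℝ) s * f (xl (pj s)) = 0 := by
        intro s hs
        rw [Set.uIcc_of_le zero_le_one] at hs
        show (min 0 s - 0 * s) * f (xl (pj s)) = 0
        rw [min_eq_left hs.1]
        ring
      rw [intervalIntegral.integral_congr this]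
      simp
    rw [hzero, hZ0]
    ring
  · have h1 : (1:ℝ) ∈ Set.Icc (0:ℝ) 1 := ⟨zero_le_one, le_refl 1⟩
    have hpj : pj 1 = ⟨1, h1⟩ := Set.projIcc_of_mem _ h1
    show xl (pj 1) = 0
    rw [hpj, hxlapp, hlim ⟨1, h1⟩]
    have hzero : (∫ s in (0:ℝ)..1, Kgreen ((⟨1, h1⟩ : Set.Icc (0:ℝ) 1):ℝ) s * f (xl (pj s)))
        = 0 := by
      have : ∀ s ∈ Set.uIcc (0:ℝ) 1,
          Kgreen ((⟨1, h1⟩ : Set.Icc (0:ℝ) 1):ℝ) s * f (xl (pj s)) = 0 := by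
        intro s hs
        rw [Set.uIcc_of_le zero_le_one] at hs
        show (min 1 s - 1 * s) * f (xl (pj s)) = 0
        rw [min_eq_right hs.2]
        ring
      rw [intervalIntegral.integral_congr this]
      simp
    rw [hzero, hZ1]
    ring
end
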